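/- arXiv:2303.16713 — 10 statements merged into one kernel-verified Lean document; each statement's English description precedes it below -/
import Mathlib

section
/- Let $(X,d,\mu)$ be a metric measure space in which every nonempty open set has positive measure and every bounded set has finite measure, and suppose $(X,d,\mu)$ satisfies the $\delta$-annular decay property for some $\delta\in(0,1]$ with constant $K\geq 1$. Let $\alpha\colon X\to[0,\delta]$. Then the Hardy–Littlewood maximal operator maps $C^{0,\alpha(\cdot)}(X)$ into $C^{0,\alpha(\cdot)}(X)$, and there exists a constant $C_1>0$ (one may take $C_1=\max\{7,\,1+12K\,2^{\delta}\}$) such that for all $f\in C^{0,\alpha(\cdot)}(X)$, $\|Mf\|_{C^{0,\alpha(\cdot)}(X)}\leq C_1\,\|f\|_{C^{0,\alpha(\cdot)}(X)}$. -/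
open MeasureTheory Metric Set Filter

noncomputable def maxFun {X : Type*} [MetricSpace X] [MeasurableSpace X]
    (μ : Measure X) (f : X → ℝ) (x : X) : ℝ :=
  ⨆ r : {r : ℝ // 0 < r}, ⨍ t in ball x r.1, |f t| ∂μ

noncomputable def holderSemi {X : Type*} [MetricSpace X] (α : X → ℝ) (f : X → ℝ) : ℝ :=
  ⨆ p : {p : X × X // p.1 ≠ p.2}, |f p.1.1 - f p.1.2| / dist p.1.1 p.1.2 ^ α p.1.1

noncomputable def holderNorm {X : Type*} [MetricSpace X] (α : X → ℝ) (f : X → ℝ) : ℝ :=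
  (⨆ x, |f x|) + holderSemi α f

def MemVarHolder {X : Type*} [MetricSpace X] (α : X → ℝ) (f : X → ℝ) : Prop :=
  Continuous f ∧ BddAbove (Set.range fun x => |f x|) ∧
    BddAbove (Set.range fun p : {p : X × X // p.1 ≠ p.2} =>
      |f p.1.1 - f p.1.2| / dist p.1.1 p.1.2 ^ α p.1.1)

section AuxHolder

variable {X : Type*} [MeasurableSpace X] {μ : MeasureTheory.Measure X}

private lemma avg_le_const' {s : Set X} (hs : MeasurableSet s) (h0 : μ s ≠ 0) (hfin : μ s ≠ ⊤)
    {g : X → ℝ} (hint : IntegrableOn g s μ) {c : ℝ} (hc : ∀ t ∈ s, g t ≤ c) :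
    ⨍ t in s, g t ∂μ ≤ c := by
  have hpos : 0 < (μ s).toReal := ENNReal.toReal_pos h0 hfin
  rw [setAverage_eq, smul_eq_mul]
  have h1 : ∫ t in s, g t ∂μ ≤ ∫ _ in s, c ∂μ :=
    setIntegral_mono_on hint (integrableOn_const hfin) hs hc
  rw [setIntegral_const, smul_eq_mul] at h1
  calc (μ s).toReal⁻¹ * ∫ t in s, g t ∂μ ≤ (μ s).toReal⁻¹ * ((μ s).toReal * c) :=
        mul_le_mul_of_nonneg_left h1 (by positivity)
    _ = c := by field_simp

private lemma const_le_avg' {s : Set X} (hs : MeasurableSet s) (h0 : μ s ≠ 0) (hfin : μ s ≠ ⊤)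
    {g : X → ℝ} (hint : IntegrableOn g s μ) {c : ℝ} (hc : ∀ t ∈ s, c ≤ g t) :
    c ≤ ⨍ t in s, g t ∂μ := by
  have hpos : 0 < (μ s).toReal := ENNReal.toReal_pos h0 hfin
  rw [setAverage_eq, smul_eq_mul]
  have h1 : ∫ _ in s, c ∂μ ≤ ∫ t in s, g t ∂μ :=
    setIntegral_mono_on (integrableOn_const hfin) hint hs hc
  rw [setIntegral_const, smul_eq_mul] at h1
  calc c = (μ s).toReal⁻¹ * ((μ s).toReal * c) := by field_simp
    _ ≤ (μ s).toReal⁻¹ * ∫ t in s, g t ∂μ := mul_le_mul_of_nonneg_left h1 (by positivity)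

/-- Core comparison: average over small set vs average over big set. -/
private lemma avg_diff_le {s S : Set X} (hs : MeasurableSet s) (hS : MeasurableSet S)
    (hss : s ⊆ S) (h0 : μ s ≠ 0) (hfin : μ S ≠ ⊤)
    {g : X → ℝ} (hint : IntegrableOn g S μ) {m c κ : ℝ} (hκ : 0 ≤ κ) (hm : 0 ≤ m)
    (hgm : ∀ t ∈ S, |g t - m| ≤ c)
    (hdiff : μ (S \ s) ≤ ENNReal.ofReal κ * μ S) :
    ⨍ t in s, g t ∂μ ≤ ⨍ t in S, g t ∂μ + 2 * κ * c := by
  have hsfin : μ s ≠ ⊤ := fun h => hfin (top_le_iff.1 (h ▸ measure_mono hss))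
  have hdfin : μ (S \ s) ≠ ⊤ := fun h => hfin (top_le_iff.1 (h ▸ measure_mono diff_subset))
  set a := (μ s).toReal with ha
  set b := (μ S).toReal with hb
  set e := (μ (S \ s)).toReal with he
  have hapos : 0 < a := ENNReal.toReal_pos h0 hsfin
  have hepos : 0 ≤ e := ENNReal.toReal_nonneg
  have hab : a ≤ b := ENNReal.toReal_mono hfin (measure_mono hss)
  have hbae : b ≤ a + e := by
    rw [ha, he, ← ENNReal.toReal_add hsfin hdfin]
    refine ENNReal.toReal_mono (by simp [ENNReal.add_eq_top, hsfin, hdfin]) ?_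
    calc μ S = μ (s ∪ (S \ s)) := by rw [union_diff_cancel hss]
      _ ≤ μ s + μ (S \ s) := measure_union_le _ _
  have heκb : e ≤ κ * b := by
    have := ENNReal.toReal_mono (by
      exact ENNReal.mul_ne_top ENNReal.ofReal_ne_top hfin) hdiff
    rwa [ENNReal.toReal_mul, ENNReal.toReal_ofReal hκ] at this
  obtain ⟨t0, ht0⟩ : s.Nonempty := nonempty_iff_ne_empty.2 (fun h => h0 (by simp [h]))
  have hc : 0 ≤ c := le_trans (abs_nonneg _) (hgm t0 (hss ht0))
  have hints : IntegrableOn g s μ := hint.mono_set hss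
  have hintd : IntegrableOn g (S \ s) μ := hint.mono_set diff_subset
  set I := ∫ t in s, g t ∂μ with hI
  set E := ∫ t in S \ s, g t ∂μ with hE
  have hJ : ∫ t in S, g t ∂μ = I + E := by
    rw [hI, hE, ← setIntegral_union disjoint_sdiff_right (hS.diff hs) hints hintd,
      union_diff_cancel hss]
  have hIub : I ≤ (m + c) * a := by
    have h1 : ∫ t in s, g t ∂μ ≤ ∫ _ in s, m + c ∂μ := by
      refine setIntegral_mono_on hints (integrableOn_const hsfin) hs ?_
      intro t ht
      have := abs_le.1 (hgm t (hss ht))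
      linarith [this.2]
    rw [setIntegral_const, smul_eq_mul, measureReal_def] at h1
    linarith [h1]
  have hElb : (m - c) * e ≤ E := by
    have h1 : ∫ _ in S \ s, m - c ∂μ ≤ ∫ t in S \ s, g t ∂μ := by
      refine setIntegral_mono_on (integrableOn_const hdfin) hintd
        (hS.diff hs) ?_
      intro t ht
      have := abs_le.1 (hgm t ht.1)
      linarith [this.1]
    rw [setIntegral_const, smul_eq_mul, measureReal_def] at h1
    linarith [h1]
  rw [setAverage_eq, setAverage_eq, smul_eq_mul, smul_eq_mul, measureReal_def, measureReal_def, ← ha, ← hb, hJ]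
  have hbpos : 0 < b := lt_of_lt_of_le hapos hab
  rw [show (∫ (x : X) in s, g x ∂μ) = I from rfl, inv_mul_le_iff₀ hapos]
  have hmc : 0 ≤ (m + c) * a := mul_nonneg (by linarith) hapos.le
  have h1 : I * (b - a) ≤ (m + c) * a * (b - a) :=
    mul_le_mul_of_nonneg_right hIub (sub_nonneg.2 hab)
  have h2 : (m + c) * a * (b - a) ≤ (m + c) * a * e :=
    mul_le_mul_of_nonneg_left (by linarith) hmc
  have h3 : (m - c) * e * a ≤ E * a := mul_le_mul_of_nonneg_right hElb hapos.le
  have h4 : c * a * e ≤ c * a * (κ * b) :=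
    mul_le_mul_of_nonneg_left heκb (mul_nonneg hc hapos.le)
  have key : I * b ≤ (I + E) * a + 2 * κ * c * a * b := by nlinarith [h1, h2, h3, h4]
  have expand : (a * (b⁻¹ * (I + E) + 2 * κ * c)) * b = (I + E) * a + 2 * κ * c * a * b := by
    field_simp
  have hgoal : I * b ≤ (a * (b⁻¹ * (I + E) + 2 * κ * c)) * b := by rw [expand]; exact key
  exact le_of_mul_le_mul_right hgoal hbpos

private lemma rpow_ratio' {d r a δ : ℝ} (hd : 0 < d) (hr : d ≤ r)
    (ha : 0 ≤ a) (haδ : a ≤ δ) :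
    (2 * d / (r + d)) ^ δ * r ^ a ≤ 2 ^ δ * d ^ a := by
  have hrpos : 0 < r := lt_of_lt_of_le hd hr
  have hδ : 0 ≤ δ := le_trans ha haδ
  have h1 : (2 * d / (r + d)) ^ δ ≤ (2 * d / r) ^ δ := by
    apply Real.rpow_le_rpow (by positivity) _ hδ
    apply div_le_div_of_nonneg_left (by linarith) hrpos (by linarith)
  have h2 : (2 * d / r) ^ δ = 2 ^ δ * d ^ δ * (r ^ δ)⁻¹ := by
    rw [Real.div_rpow (by linarith) hrpos.le, Real.mul_rpow (by norm_num) hd.le,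
      div_eq_mul_inv]
  have h3 : r ^ a * (r ^ δ)⁻¹ ≤ d ^ a * (d ^ δ)⁻¹ := by
    rw [← Real.rpow_neg hrpos.le, ← Real.rpow_add hrpos, ← Real.rpow_neg hd.le,
      ← Real.rpow_add hd]
    exact Real.rpow_le_rpow_of_nonpos hd hr (by linarith)
  have h4 : d ^ δ * (d ^ δ)⁻¹ = 1 := mul_inv_cancel₀ (ne_of_gt (Real.rpow_pos_of_pos hd δ))
  calc (2 * d / (r + d)) ^ δ * r ^ a ≤ (2 * d / r) ^ δ * r ^ a :=
        mul_le_mul_of_nonneg_right h1 (Real.rpow_nonneg hrpos.le a)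
    _ = 2 ^ δ * d ^ δ * (r ^ a * (r ^ δ)⁻¹) := by rw [h2]; ring
    _ ≤ 2 ^ δ * d ^ δ * (d ^ a * (d ^ δ)⁻¹) := by
        refine mul_le_mul_of_nonneg_left h3 ?_
        exact mul_nonneg (Real.rpow_nonneg (by norm_num) _) (Real.rpow_nonneg hd.le _)
    _ = 2 ^ δ * d ^ a := by
        rw [show 2 ^ δ * d ^ δ * (d ^ a * (d ^ δ)⁻¹) = 2 ^ δ * d ^ a * (d ^ δ * (d ^ δ)⁻¹) by
          ring, h4, mul_one]

end AuxHolder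

set_option maxHeartbeats 1000000 in
/-- Boundedness of the Hardy–Littlewood maximal operator on variable
exponent Hölder spaces over a metric measure space with the δ-annular decay property. -/
theorem maximal_bounded_on_variable_holder
    {X : Type*} [MetricSpace X] [MeasurableSpace X] [BorelSpace X] (μ : Measure X)
    (hopen : ∀ U : Set X, IsOpen U → U.Nonempty → 0 < μ U)
    (hbdd : ∀ s : Set X, Bornology.IsBounded s → μ s < ⊤)
    (δ K : ℝ) (hδ : δ ∈ Set.Ioc (0 : ℝ) 1) (hK : 1 ≤ K)
    (hann : ∀ (x : X) (r ε : ℝ), 0 < r → 0 < ε → ε < 1 →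
      μ (ball x r \ ball x (r * (1 - ε))) ≤ ENNReal.ofReal (K * ε ^ δ) * μ (ball x r))
    (α : X → ℝ) (hα : ∀ x, α x ∈ Set.Icc (0 : ℝ) δ) :
    ∀ f : X → ℝ, MemVarHolder α f →
      MemVarHolder α (maxFun μ f) ∧
      holderNorm α (maxFun μ f) ≤ max 7 (1 + 12 * K * 2 ^ δ) * holderNorm α f := by
  haveI : Nonempty {r : ℝ // 0 < r} := ⟨⟨1, one_pos⟩⟩
  intro f hf
  obtain ⟨hfc, hfb, hfpb⟩ := hf
  set C0 := ⨆ x, |f x| with hC0def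
  set H := holderSemi α f with hHdef
  have hC0 : ∀ t, |f t| ≤ C0 := fun t => le_ciSup hfb t
  have hC0nn : 0 ≤ C0 := Real.iSup_nonneg (fun x => abs_nonneg _)
  have hHnn : 0 ≤ H :=
    Real.iSup_nonneg (fun p => div_nonneg (abs_nonneg _) (Real.rpow_nonneg dist_nonneg _))
  have h2δ : (1:ℝ) ≤ 2 ^ δ := Real.one_le_rpow one_le_two hδ.1.le
  have hK0 : (0:ℝ) ≤ K := by linarith
  -- Hölder estimate for f, anchored at the first point
  have hH : ∀ u v : X, |f u - f v| ≤ H * dist u v ^ α u := by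
    intro u v
    by_cases huv : u = v
    · subst huv
      rw [sub_self, abs_zero]
      exact mul_nonneg hHnn (Real.rpow_nonneg dist_nonneg _)
    · have hd : 0 < dist u v := dist_pos.2 huv
      have hpow : 0 < dist u v ^ α u := Real.rpow_pos_of_pos hd _
      have h := le_ciSup hfpb (⟨(u, v), huv⟩ : {p : X × X // p.1 ≠ p.2})
      rw [div_le_iff₀ hpow] at h
      exact h
  have hfH : ∀ (x t : X) (ρ : ℝ), dist x t < ρ → |(|f t| - |f x|)| ≤ H * ρ ^ α x := by
    intro x t ρ hρ
    calc |(|f t| - |f x|)| ≤ |f t - f x| := abs_abs_sub_abs_le_abs_sub _ _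
      _ = |f x - f t| := abs_sub_comm _ _
      _ ≤ H * dist x t ^ α x := hH x t
      _ ≤ H * ρ ^ α x := by
          exact mul_le_mul_of_nonneg_left
            (Real.rpow_le_rpow dist_nonneg hρ.le (hα x).1) hHnn
  -- measure facts
  have hbp : ∀ (x : X) (r : ℝ), 0 < r → μ (ball x r) ≠ 0 := fun x r hr =>
    (hopen _ isOpen_ball (nonempty_ball.2 hr)).ne'
  have hbf : ∀ (x : X) (r : ℝ), μ (ball x r) ≠ ⊤ := fun x r =>
    (hbdd _ isBounded_ball).ne
  have hint : ∀ (x : X) (r : ℝ), IntegrableOn (fun t => |f t|) (ball x r) μ := by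
    intro x r
    have hconst : IntegrableOn (fun _ : X => C0) (ball x r) μ :=
      integrableOn_const (hbdd _ isBounded_ball).ne
    refine Integrable.mono' hconst (hfc.abs.aestronglyMeasurable.restrict) ?_
    refine Eventually.of_forall (fun t => ?_)
    rw [Real.norm_eq_abs, abs_abs]
    exact hC0 t
  -- maximal function basics
  have hbddA : ∀ x : X, BddAbove (Set.range fun r : {r : ℝ // 0 < r} =>
      ⨍ t in ball x r.1, |f t| ∂μ) := by
    intro x
    refine ⟨C0, ?_⟩
    rintro v ⟨r, rfl⟩
    exact avg_le_const' measurableSet_ball (hbp x r.1 r.2) (hbf x r.1) (hint x r.1)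
      (fun t _ => hC0 t)
  have hAle : ∀ (x : X) (r : ℝ), 0 < r → ⨍ t in ball x r, |f t| ∂μ ≤ maxFun μ f x :=
    fun x r hr => le_ciSup (hbddA x) (⟨r, hr⟩ : {r : ℝ // 0 < r})
  have hmaxle : ∀ (x : X) (c : ℝ), (∀ r : ℝ, 0 < r → ⨍ t in ball x r, |f t| ∂μ ≤ c) →
      maxFun μ f x ≤ c := fun x c h => ciSup_le (fun r => h r.1 r.2)
  have hmaxC0 : ∀ x : X, maxFun μ f x ≤ C0 := fun x =>
    hmaxle x C0 (fun r hr => avg_le_const' measurableSet_ball (hbp x r hr) (hbf x r)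
      (hint x r) (fun t _ => hC0 t))
  have hmaxnn : ∀ x : X, 0 ≤ maxFun μ f x := by
    intro x
    refine le_trans ?_ (hAle x 1 one_pos)
    exact const_le_avg' measurableSet_ball (hbp x 1 one_pos) (hbf x 1) (hint x 1)
      (fun t _ => abs_nonneg _)
  -- annular decay for off-center balls
  have hring : ∀ (p q : X) (r : ℝ), 0 < dist p q → dist p q < r →
      μ (ball q (r + dist p q) \ ball p r) ≤
        ENNReal.ofReal (K * (2 * dist p q / (r + dist p q)) ^ δ) *
          μ (ball q (r + dist p q)) := by
    intro p q r hd hdr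
    set d := dist p q with hdd
    have hR : 0 < r + d := by linarith
    have hε0 : 0 < 2 * d / (r + d) := by positivity
    have hε1 : 2 * d / (r + d) < 1 := by rw [div_lt_one hR]; linarith
    have key := hann q (r + d) (2 * d / (r + d)) hR hε0 hε1
    have hradius : (r + d) * (1 - 2 * d / (r + d)) = r - d := by field_simp; ring
    rw [hradius] at key
    refine le_trans (measure_mono ?_) key
    rintro t ⟨ht1, ht2⟩
    refine ⟨ht1, fun hmem => ht2 ?_⟩
    rw [mem_ball] at hmem ⊢
    have := dist_triangle t q p
    have hqp : dist q p = d := by rw [dist_comm]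
    rw [mem_ball] at *
    linarith [this, hmem]
  -- core per-radius comparison
  have hcore : ∀ (x p q : X) (r m c : ℝ), 0 ≤ m → 0 < dist p q → dist p q < r →
      (∀ t ∈ ball q (r + dist p q), |(|f t| - m)| ≤ c) →
      ⨍ t in ball p r, |f t| ∂μ ≤
        maxFun μ f q + 2 * (K * (2 * dist p q / (r + dist p q)) ^ δ) * c := by
    intro x p q r m c hm hd hdr hc
    set d := dist p q with hdd
    have hR : 0 < r + d := by linarith
    have hss : ball p r ⊆ ball q (r + d) := by
      intro t ht
      rw [mem_ball] at ht ⊢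
      have := dist_triangle t p q
      linarith
    have hκ : 0 ≤ K * (2 * d / (r + d)) ^ δ :=
      mul_nonneg hK0 (Real.rpow_nonneg (by positivity) _)
    have h := avg_diff_le measurableSet_ball measurableSet_ball hss
      (hbp p r (lt_trans hd hdr)) (hbf q (r + d)) (hint q (r + d)) hκ hm hc
      (hring p q r hd hdr)
    linarith [hAle q (r + d) hR, h]
  -- lower bound for the maximal function in terms of |f x|
  have hfxle : ∀ (x z : X) (ρ : ℝ), 0 < ρ → dist x z ≤ ρ →
      |f x| ≤ maxFun μ f z + H * (2 * ρ) ^ α x := by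
    intro x z ρ hρ hxz
    have hlb : ∀ t ∈ ball z ρ, |f x| - H * (2 * ρ) ^ α x ≤ |f t| := by
      intro t ht
      rw [mem_ball] at ht
      have hdist : dist x t < 2 * ρ := by
        have := dist_triangle x z t
        have : dist z t = dist t z := dist_comm z t
        have h1 := dist_triangle x z t
        rw [dist_comm z t] at h1
        linarith
      have := abs_le.1 (hfH x t (2 * ρ) hdist)
      linarith [this.1]
    have h := const_le_avg' measurableSet_ball (hbp z ρ hρ) (hbf z ρ) (hint z ρ) hlb
    linarith [hAle z ρ hρ]
  -- the key Hölder estimate for the maximal function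
  have hkey : ∀ x p q : X, dist x q ≤ dist p q → dist x p ≤ dist p q → 0 < dist p q →
      maxFun μ f p ≤ maxFun μ f q + 6 * K * 2 ^ δ * H * dist p q ^ α x := by
    intro x p q hxq hxp hd
    set d := dist p q with hdd
    set a := α x with haa
    have ha0 : 0 ≤ a := (hα x).1
    have haδ : a ≤ δ := (hα x).2
    have ha1 : a ≤ 1 := le_trans haδ hδ.2
    have hda : 0 ≤ d ^ a := Real.rpow_nonneg hd.le a
    have h2a : (2:ℝ) ^ a ≤ 2 := by
      calc (2:ℝ) ^ a ≤ 2 ^ (1:ℝ) := Real.rpow_le_rpow_of_exponent_le one_le_two ha1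
        _ = 2 := Real.rpow_one 2
    have h2d : H * (2 * d) ^ a ≤ 2 * H * d ^ a := by
      rw [Real.mul_rpow (by norm_num) hd.le]
      nlinarith [mul_le_mul_of_nonneg_right h2a (mul_nonneg hHnn hda)]
    have hKδ1 : (1:ℝ) ≤ K * 2 ^ δ := by
      have := mul_le_mul hK h2δ zero_le_one (by linarith : (0:ℝ) ≤ K)
      nlinarith [this]
    apply hmaxle
    intro r hr
    rcases le_or_gt r d with hrd | hdr
    · -- small radii
      have hub : ∀ t ∈ ball p r, |f t| ≤ |f x| + H * (2 * d) ^ a := by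
        intro t ht
        rw [mem_ball] at ht
        have hdist : dist x t < 2 * d := by
          have h1 := dist_triangle x p t
          rw [dist_comm p t] at h1
          linarith
        have := abs_le.1 (hfH x t (2 * d) hdist)
        linarith [this.2]
      have h1 : ⨍ t in ball p r, |f t| ∂μ ≤ |f x| + H * (2 * d) ^ a :=
        avg_le_const' measurableSet_ball (hbp p r hr) (hbf p r) (hint p r) hub
      have h2 := hfxle x q d hd hxq
      nlinarith [h1, h2, h2d, hKδ1, hHnn, hda,
        mul_le_mul_of_nonneg_right hKδ1 (mul_nonneg hHnn hda)]
    · -- large radii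
      have hc : ∀ t ∈ ball q (r + d), |(|f t| - |f x|)| ≤ H * (3 * r) ^ a := by
        intro t ht
        rw [mem_ball] at ht
        refine hfH x t (3 * r) ?_
        have h1 := dist_triangle x q t
        rw [dist_comm q t] at h1
        linarith
      have h1 := hcore x p q r (|f x|) (H * (3 * r) ^ a) (abs_nonneg _) hd hdr hc
      have hx1 : (2 * d / (r + d)) ^ δ * r ^ a ≤ 2 ^ δ * d ^ a :=
        rpow_ratio' hd hdr.le ha0 haδ
      have hx2 : (3:ℝ) ^ a ≤ 3 := by
        calc (3:ℝ) ^ a ≤ 3 ^ (1:ℝ) := Real.rpow_le_rpow_of_exponent_le (by norm_num) ha1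
          _ = 3 := Real.rpow_one 3
      have hr3 : (3 * r) ^ a = 3 ^ a * r ^ a :=
        Real.mul_rpow (by norm_num) (le_of_lt (lt_trans hd hdr))
      have hbound : 2 * (K * (2 * d / (r + d)) ^ δ) * (H * (3 * r) ^ a) ≤
          6 * K * 2 ^ δ * H * d ^ a := by
        have hinner : 0 ≤ (2 * d / (r + d)) ^ δ * r ^ a :=
          mul_nonneg (Real.rpow_nonneg (by positivity) _)
            (Real.rpow_nonneg (le_of_lt (lt_trans hd hdr)) _)
        have h3a : 0 ≤ (3:ℝ) ^ a := Real.rpow_nonneg (by norm_num) a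
        have hKH : 0 ≤ 2 * K * H := by positivity
        calc 2 * (K * (2 * d / (r + d)) ^ δ) * (H * (3 * r) ^ a)
            = 2 * K * H * (3 ^ a * ((2 * d / (r + d)) ^ δ * r ^ a)) := by rw [hr3]; ring
          _ ≤ 2 * K * H * (3 * (2 ^ δ * d ^ a)) := by
              refine mul_le_mul_of_nonneg_left ?_ hKH
              exact mul_le_mul hx2 hx1 hinner (by norm_num)
          _ = 6 * K * 2 ^ δ * H * d ^ a := by ring
      linarith [h1, hbound]
  -- continuity of the maximal function
  have hcont : Continuous (maxFun μ f) := by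
    rw [Metric.continuous_iff]
    intro x ε hε
    obtain ⟨ρ, hρ, hρf⟩ := Metric.continuous_iff.1 hfc x (ε / 3) (by linarith)
    set r0 := ρ / 2 with hr0def
    have hr0 : 0 < r0 := by positivity
    set θ := (ε / 3 / (2 * K * C0 + 1)) ^ δ⁻¹ with hθdef
    have hden : 0 < 2 * K * C0 + 1 := by nlinarith
    have hθpos : 0 < θ := Real.rpow_pos_of_pos (by positivity) _
    set d1 := r0 * θ / 2 with hd1def
    have hd1pos : 0 < d1 := by positivity
    refine ⟨min d1 r0 / 2, by positivity, ?_⟩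
    intro y hy
    rcases eq_or_ne y x with rfl | hne
    · simpa using hε
    have hd : 0 < dist x y := dist_pos.2 (Ne.symm hne)
    rw [dist_comm y x] at hy
    set d := dist x y with hdd
    have hdd1 : d < d1 := lt_of_lt_of_le hy (by
      have := min_le_left d1 r0; linarith)
    have hdr0 : d < r0 := lt_of_lt_of_le hy (by
      have := min_le_right d1 r0; linarith)
    -- continuity modulus for |f| near x
    have hmod : ∀ t : X, dist x t < ρ → |(|f t| - |f x|)| ≤ ε / 3 := by
      intro t ht
      have h1 : dist (f t) (f x) < ε / 3 := hρf t (by rwa [dist_comm])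
      rw [Real.dist_eq] at h1
      calc |(|f t| - |f x|)| ≤ |f t - f x| := abs_abs_sub_abs_le_abs_sub _ _
        _ ≤ ε / 3 := h1.le
    -- lower bounds for both maximal values
    have hlow : ∀ z : X, dist x z ≤ d → |f x| - ε / 3 ≤ maxFun μ f z := by
      intro z hz
      have hlb : ∀ t ∈ ball z r0, |f x| - ε / 3 ≤ |f t| := by
        intro t ht
        rw [mem_ball] at ht
        have hdist : dist x t < ρ := by
          have h1 := dist_triangle x z t
          rw [dist_comm z t] at h1
          have : d + r0 < 2 * r0 := by linarith
          have : dist x t < 2 * r0 := by linarith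
          linarith [this]
        have := abs_le.1 (hmod t hdist)
        linarith [this.1]
      have h := const_le_avg' measurableSet_ball (hbp z r0 hr0) (hbf z r0) (hint z r0) hlb
      linarith [hAle z r0 hr0]
    -- one-sided estimate, for both orderings
    have hside : ∀ p q : X, dist x q ≤ d → dist x p ≤ d → dist p q = d →
        maxFun μ f p ≤ maxFun μ f q + 2 * (ε / 3) := by
      intro p q hxq hxp hpq
      apply hmaxle
      intro r hr
      rcases le_or_gt r r0 with hrr0 | hr0r
      · -- small radii
        have hub : ∀ t ∈ ball p r, |f t| ≤ |f x| + ε / 3 := by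
          intro t ht
          rw [mem_ball] at ht
          have hdist : dist x t < ρ := by
            have h1 := dist_triangle x p t
            rw [dist_comm p t] at h1
            linarith
          have := abs_le.1 (hmod t hdist)
          linarith [this.2]
        have h1 : ⨍ t in ball p r, |f t| ∂μ ≤ |f x| + ε / 3 :=
          avg_le_const' measurableSet_ball (hbp p r hr) (hbf p r) (hint p r) hub
        have h2 := hlow q hxq
        linarith
      · -- large radii: use annular decay with m = 0, c = C0
        have hc : ∀ t ∈ ball q (r + dist p q), |(|f t| - 0)| ≤ C0 := by
          intro t _
          rw [sub_zero, abs_abs]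
          exact hC0 t
        have h1 := hcore x p q r 0 C0 le_rfl (hpq ▸ hd) (by rw [hpq]; linarith) hc
        rw [hpq] at h1
        have hκle : K * (2 * d / (r + d)) ^ δ ≤ K * (ε / 3 / (2 * K * C0 + 1)) := by
          have hstep1 : 2 * d / (r + d) ≤ θ := by
            have h2 : 2 * d / (r + d) ≤ 2 * d / r0 := by
              apply div_le_div_of_nonneg_left (by linarith) hr0 (by linarith)
            have h3 : 2 * d / r0 ≤ θ := by
              rw [div_le_iff₀ hr0]
              calc 2 * d ≤ 2 * d1 := by linarith
                _ = θ * r0 := by rw [hd1def]; ring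
            linarith
          have hstep2 : (2 * d / (r + d)) ^ δ ≤ θ ^ δ :=
            Real.rpow_le_rpow (by positivity) hstep1 hδ.1.le
          have hstep3 : θ ^ δ = ε / 3 / (2 * K * C0 + 1) := by
            rw [hθdef]
            exact Real.rpow_inv_rpow (by positivity) (ne_of_gt hδ.1)
          rw [hstep3] at hstep2
          exact mul_le_mul_of_nonneg_left hstep2 hK0
        have hfinal : 2 * (K * (2 * d / (r + d)) ^ δ) * C0 ≤ 2 * (ε / 3) := by
          have h4 : 2 * (K * (2 * d / (r + d)) ^ δ) * C0 ≤
              2 * (K * (ε / 3 / (2 * K * C0 + 1))) * C0 := by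
            refine mul_le_mul_of_nonneg_right ?_ hC0nn
            linarith [hκle]
          have h5 : 2 * (K * (ε / 3 / (2 * K * C0 + 1))) * C0 ≤ 2 * (ε / 3) := by
            have heq : 2 * (K * (ε / 3 / (2 * K * C0 + 1))) * C0 =
                2 * K * C0 * (ε / 3) / (2 * K * C0 + 1) := by ring
            rw [heq, div_le_iff₀ hden]
            have hc' : (0:ℝ) ≤ ε / 3 := by linarith
            nlinarith [mul_nonneg (mul_nonneg hK0 hC0nn) hc', hc']
          linarith
        linarith
    have hxy1 : dist x y ≤ d := le_refl d
    have hxx : dist x x ≤ d := by rw [dist_self]; exact hd.le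
    have h1 := hside x y hxy1 hxx (by rw [hdd])
    have h2 := hside y x hxx hxy1 (by rw [dist_comm, hdd])
    rw [Real.dist_eq, abs_sub_lt_iff]
    constructor <;> linarith
  -- assembly
  have hquot : ∀ p : {p : X × X // p.1 ≠ p.2},
      |maxFun μ f p.1.1 - maxFun μ f p.1.2| / dist p.1.1 p.1.2 ^ α p.1.1 ≤
        6 * K * 2 ^ δ * H := by
    rintro ⟨⟨u, v⟩, huv⟩
    have hd : 0 < dist u v := dist_pos.2 huv
    have hpow : 0 < dist u v ^ α u := Real.rpow_pos_of_pos hd _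
    simp only
    rw [div_le_iff₀ hpow]
    have h1 := hkey u u v le_rfl (by rw [dist_self]; exact hd.le) hd
    have h2 := hkey u v u (by rw [dist_self]; exact dist_nonneg)
      (le_of_eq (dist_comm u v)) (by rwa [dist_comm])
    rw [dist_comm v u] at h2
    rw [abs_sub_le_iff]
    constructor <;> linarith
  have hBnn : 0 ≤ 6 * K * 2 ^ δ * H := by
    have : (0:ℝ) ≤ 2 ^ δ := Real.rpow_nonneg (by norm_num) δ
    positivity
  have hsemi : holderSemi α (maxFun μ f) ≤ 6 * K * 2 ^ δ * H :=
    Real.iSup_le hquot hBnn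
  have hsup : (⨆ x, |maxFun μ f x|) ≤ C0 :=
    Real.iSup_le (fun x => by rw [abs_of_nonneg (hmaxnn x)]; exact hmaxC0 x) hC0nn
  refine ⟨⟨hcont, ⟨C0, ?_⟩, ⟨6 * K * 2 ^ δ * H, ?_⟩⟩, ?_⟩
  · rintro w ⟨x, rfl⟩
    show |maxFun μ f x| ≤ C0
    rw [abs_of_nonneg (hmaxnn x)]
    exact hmaxC0 x
  · rintro w ⟨p, rfl⟩
    exact hquot p
  · have hM7 : (7:ℝ) ≤ max 7 (1 + 12 * K * 2 ^ δ) := le_max_left _ _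
    have hM2 : 1 + 12 * K * 2 ^ δ ≤ max 7 (1 + 12 * K * 2 ^ δ) := le_max_right _ _
    have hnorm : holderNorm α (maxFun μ f) ≤ C0 + 6 * K * 2 ^ δ * H := by
      rw [holderNorm]
      linarith [hsup, hsemi]
    have hnormf : holderNorm α f = C0 + H := rfl
    rw [hnormf]
    have hK2δ : (1:ℝ) ≤ K * 2 ^ δ := by nlinarith
    refine le_trans hnorm ?_
    nlinarith [mul_le_mul_of_nonneg_right hM7 hC0nn, mul_le_mul_of_nonneg_right hM2 hHnn,
      mul_nonneg hK0 (Real.rpow_nonneg (by norm_num : (0:ℝ) ≤ 2) δ), hC0nn, hHnn]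
end

section
/- Let $(X,d,\mu)$ be a metric measure space in which every nonempty open set has positive measure and every bounded set has finite measure, satisfying the $\delta$-annular decay property for some $\delta\in(0,1]$ with constant $K\geq 1$, and let $\alpha\colon X\to[0,\delta]$. If $f\in C^{0,\alpha(\cdot)}(X)$ with $\|f\|_{C^{0,\alpha(\cdot)}(X)}\leq 1$, then for all distinct $x,y\in X$ with $d(x,y)\leq 1$, $Mf(y)\geq Mf(x)-\max\{7,\,1+12K\,2^{\delta}\}\min\{d(x,y)^{\alpha(x)},\,d(x,y)^{\alpha(y)}\}$. -/
open MeasureTheory Metric Set Filter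

set_option maxHeartbeats 1000000 in
/-- The key pointwise inequality for the maximal function of a function
with variable exponent Hölder norm at most 1. -/
theorem maximal_pointwise_lower_bound
    {X : Type*} [MetricSpace X] [MeasurableSpace X] [BorelSpace X] (μ : Measure X)
    (hopen : ∀ U : Set X, IsOpen U → U.Nonempty → 0 < μ U)
    (hbdd : ∀ s : Set X, Bornology.IsBounded s → μ s < ⊤)
    (δ K : ℝ) (hδ : δ ∈ Set.Ioc (0 : ℝ) 1) (hK : 1 ≤ K)
    (hann : ∀ (x : X) (r ε : ℝ), 0 < r → 0 < ε → ε < 1 →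
      μ (ball x r \ ball x (r * (1 - ε))) ≤ ENNReal.ofReal (K * ε ^ δ) * μ (ball x r))
    (α : X → ℝ) (hα : ∀ x, α x ∈ Set.Icc (0 : ℝ) δ)
    (f : X → ℝ) (hf : MemVarHolder α f) (hfnorm : holderNorm α f ≤ 1)
    (x y : X) (hxy : x ≠ y) (hd : dist x y ≤ 1) :
    maxFun μ f x - max 7 (1 + 12 * K * 2 ^ δ) *
        min (dist x y ^ α x) (dist x y ^ α y) ≤ maxFun μ f y := by
  classical
  obtain ⟨hcont, hbddf, hbddsemi⟩ := hf
  have hd0 : 0 < dist x y := dist_pos.2 hxy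
  set d : ℝ := dist x y with hd_def
  have hδ0 : 0 < δ := hδ.1
  have hδ1 : δ ≤ 1 := hδ.2
  have hK0 : (0:ℝ) < K := lt_of_lt_of_le one_pos hK
  have hα0 : ∀ z, 0 ≤ α z := fun z => (hα z).1
  have hαδ : ∀ z, α z ≤ δ := fun z => (hα z).2
  have hα1 : ∀ z, α z ≤ 1 := fun z => (hαδ z).trans hδ1
  haveI : Nonempty {r : ℝ // 0 < r} := ⟨⟨1, one_pos⟩⟩
  have h2δ : (1:ℝ) ≤ 2 ^ δ := by
    have := Real.rpow_le_rpow_of_exponent_le (x := 2) one_le_two hδ0.le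
    simpa using this
  -- the constant and the min
  set C : ℝ := max 7 (1 + 12 * K * 2 ^ δ) with hC_def
  set m : ℝ := min (d ^ α x) (d ^ α y) with hm_def
  have hm0 : 0 ≤ m := le_min (Real.rpow_nonneg hd0.le _) (Real.rpow_nonneg hd0.le _)
  have hC7 : (7:ℝ) ≤ C := le_max_left _ _
  have hC12 : 1 + 12 * K * 2 ^ δ ≤ C := le_max_right _ _
  have h8KC : 8 * K ≤ C := by nlinarith
  -- |f| ≤ 1 and the Hölder estimate
  have hsemi_nonneg : 0 ≤ holderSemi α f :=
    Real.iSup_nonneg fun p => div_nonneg (abs_nonneg _) (Real.rpow_nonneg dist_nonneg _)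
  have hsup_nonneg : 0 ≤ ⨆ z, |f z| := Real.iSup_nonneg fun z => abs_nonneg _
  have hnorm := hfnorm
  unfold holderNorm at hnorm
  have hsup_le : (⨆ z, |f z|) ≤ 1 := by linarith
  have hsemi_le : holderSemi α f ≤ 1 := by linarith
  have hb1 : ∀ t, |f t| ≤ 1 := fun t => le_trans (le_ciSup hbddf t) hsup_le
  have hHol : ∀ u v : X, |f u - f v| ≤ dist u v ^ α u := by
    intro u v
    rcases eq_or_ne u v with rfl | h
    · have h0 : |f u - f u| = 0 := by simp
      rw [h0]
      exact Real.rpow_nonneg dist_nonneg _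
    · have h1 : |f u - f v| / dist u v ^ α u ≤ 1 :=
        le_trans (le_ciSup hbddsemi ⟨(u, v), h⟩) hsemi_le
      have h2 : (0:ℝ) < dist u v ^ α u := Real.rpow_pos_of_pos (dist_pos.2 h) _
      rw [div_le_one h2] at h1
      simpa using h1
  -- measure and integrability facts
  have hballpos : ∀ (z : X) (ρ : ℝ), 0 < ρ → 0 < (μ (ball z ρ)).toReal := by
    intro z ρ hρ
    exact ENNReal.toReal_pos (hopen _ isOpen_ball (nonempty_ball.2 hρ)).ne'
      (hbdd _ isBounded_ball).ne
  have hint : ∀ s : Set X, μ s < ⊤ → IntegrableOn (fun t => |f t|) s μ := by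
    intro s hs
    haveI : Fact (μ s < ⊤) := ⟨hs⟩
    exact Integrable.mono' (integrable_const 1) hcont.abs.aestronglyMeasurable.restrict
      (Filter.Eventually.of_forall fun t => by simpa [abs_abs] using hb1 t)
  have hintball : ∀ (z : X) (ρ : ℝ), IntegrableOn (fun t => |f t|) (ball z ρ) μ :=
    fun z ρ => hint _ (hbdd _ isBounded_ball)
  have hconstball : ∀ (z : X) (ρ : ℝ) (c : ℝ), IntegrableOn (fun _ => c) (ball z ρ) μ :=
    fun z ρ c => integrableOn_const (hbdd _ isBounded_ball).ne
  -- average upper and lower bounds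
  have havg_le : ∀ (z : X) (ρ : ℝ), 0 < ρ → ∀ c : ℝ, (∀ t ∈ ball z ρ, |f t| ≤ c) →
      (⨍ t in ball z ρ, |f t| ∂μ) ≤ c := by
    intro z ρ hρ c hc
    have hpos := hballpos z ρ hρ
    rw [setAverage_eq, smul_eq_mul, inv_mul_eq_div, measureReal_def, div_le_iff₀ hpos]
    calc (∫ t in ball z ρ, |f t| ∂μ) ≤ ∫ _t in ball z ρ, c ∂μ :=
          setIntegral_mono_on (hintball z ρ) (hconstball z ρ c) measurableSet_ball hc
      _ = c * (μ (ball z ρ)).toReal := by rw [setIntegral_const, smul_eq_mul, mul_comm, measureReal_def]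
  have havg_ge : ∀ (z : X) (ρ : ℝ), 0 < ρ → ∀ c : ℝ, (∀ t ∈ ball z ρ, c ≤ |f t|) →
      c ≤ ⨍ t in ball z ρ, |f t| ∂μ := by
    intro z ρ hρ c hc
    have hpos := hballpos z ρ hρ
    rw [setAverage_eq, smul_eq_mul, inv_mul_eq_div, measureReal_def, le_div_iff₀ hpos]
    calc c * (μ (ball z ρ)).toReal = ∫ _t in ball z ρ, c ∂μ := by
          rw [setIntegral_const, smul_eq_mul, mul_comm, measureReal_def]
      _ ≤ ∫ t in ball z ρ, |f t| ∂μ :=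
          setIntegral_mono_on (hconstball z ρ c) (hintball z ρ) measurableSet_ball hc
  -- maxFun facts
  have hBdd : ∀ z : X, BddAbove (Set.range fun r : {r : ℝ // 0 < r} =>
      ⨍ t in ball z r.1, |f t| ∂μ) := by
    intro z
    refine ⟨1, ?_⟩
    rintro v ⟨⟨ρ, hρ⟩, rfl⟩
    exact havg_le z ρ hρ 1 fun t _ => hb1 t
  have hmax_ge : ∀ (z : X) (ρ : ℝ), 0 < ρ → (⨍ t in ball z ρ, |f t| ∂μ) ≤ maxFun μ f z :=
    fun z ρ hρ => le_ciSup (hBdd z) ⟨ρ, hρ⟩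
  have hmax_le : ∀ (z : X) (c : ℝ), (∀ ρ : ℝ, 0 < ρ → (⨍ t in ball z ρ, |f t| ∂μ) ≤ c) →
      maxFun μ f z ≤ c := fun z c h => ciSup_le fun r => h r.1 r.2
  -- |f y| ≤ maxFun μ f y
  have hfy : |f y| ≤ maxFun μ f y := by
    refine le_of_forall_pos_le_add ?_
    intro η hη
    obtain ⟨ρ, hρ, hball⟩ := Metric.continuous_iff.1 hcont y η hη
    have h1 : |f y| - η ≤ ⨍ t in ball y ρ, |f t| ∂μ := by
      refine havg_ge y ρ hρ _ fun t ht => ?_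
      have h2 : dist (f t) (f y) < η := hball t ht
      rw [Real.dist_eq] at h2
      have h3 : |f y| - |f t| ≤ |f t - f y| := by
        have := abs_sub_abs_le_abs_sub (f y) (f t)
        rwa [abs_sub_comm] at this
      linarith
    linarith [hmax_ge y ρ hρ]
  -- the key bound for every radius
  have key : ∀ ρ : ℝ, 0 < ρ → (⨍ t in ball x ρ, |f t| ∂μ) ≤ maxFun μ f y + C * m := by
    intro ρ hρ
    rcases le_or_gt ρ d with hcase | hcase
    · -- small radius: pointwise bound
      have hbnd : ∀ t ∈ ball x ρ, |f t| ≤ |f y| + 2 * m := by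
        intro t ht
        rw [mem_ball] at ht
        have hty : dist y t ≤ 2 * d := by
          have := dist_triangle y x t
          rw [dist_comm x t] at this
          rw [dist_comm y x] at this
          linarith
        have hy1 : |f t| - |f y| ≤ |f t - f y| := abs_sub_abs_le_abs_sub _ _
        have hy2 : |f t - f y| ≤ dist y t ^ α y := by
          rw [abs_sub_comm]
          exact hHol y t
        have hy3 : dist y t ^ α y ≤ (2 * d) ^ α y :=
          Real.rpow_le_rpow dist_nonneg hty (hα0 y)
        have hy4 : (2 * d) ^ α y = 2 ^ α y * d ^ α y := Real.mul_rpow (by norm_num) hd0.le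
        have hy5 : (2:ℝ) ^ α y ≤ 2 := by
          have := Real.rpow_le_rpow_of_exponent_le (x := 2) one_le_two (hα1 y)
          simpa using this
        have hy : |f t| ≤ |f y| + 2 * d ^ α y := by
          nlinarith [Real.rpow_nonneg hd0.le (α y)]
        have hx1 : |f t| - |f x| ≤ |f t - f x| := abs_sub_abs_le_abs_sub _ _
        have hx2 : |f t - f x| ≤ dist x t ^ α x := by
          rw [abs_sub_comm]
          exact hHol x t
        have hx3 : dist x t ^ α x ≤ d ^ α x := by
          refine Real.rpow_le_rpow dist_nonneg ?_ (hα0 x)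
          rw [dist_comm]
          exact le_trans ht.le hcase
        have hx4 : |f x| - |f y| ≤ d ^ α x := by
          have h5 := abs_sub_abs_le_abs_sub (f x) (f y)
          have h6 := hHol x y
          rw [← hd_def] at h6
          linarith
        have hx : |f t| ≤ |f y| + 2 * d ^ α x := by linarith
        rcases min_cases (d ^ α x) (d ^ α y) with ⟨he, _⟩ | ⟨he, _⟩
        · rw [hm_def, he]; linarith
        · rw [hm_def, he]; linarith
      calc (⨍ t in ball x ρ, |f t| ∂μ) ≤ |f y| + 2 * m := havg_le x ρ hρ _ hbnd
        _ ≤ maxFun μ f y + C * m := by nlinarith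
    · -- large radius: annulus estimate
      set s : ℝ := ρ + d with hs_def
      set ε : ℝ := 2 * d / s with hε_def
      have hs0 : 0 < s := by positivity
      have h2ds : 2 * d < s := by simp only [hs_def]; linarith
      have hε0 : 0 < ε := by positivity
      have hε1 : ε < 1 := (div_lt_one hs0).2 h2ds
      have hsub1 : ball x ρ ⊆ ball y s := by
        intro t ht
        rw [mem_ball] at ht ⊢
        have h1 : dist t y ≤ dist t x + d := by
          rw [hd_def]; exact dist_triangle t x y
        simp only [hs_def]
        linarith
      have hsub2 : ball y (s * (1 - ε)) ⊆ ball x ρ := by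
        have hse : s * (1 - ε) = ρ - d := by
          rw [hε_def, mul_sub, mul_one, mul_div_assoc', mul_div_cancel_left₀ _ hs0.ne']
          linarith [hs_def]
        rw [hse]
        intro t ht
        rw [mem_ball] at ht ⊢
        have h1 : dist t x ≤ dist t y + d := by
          rw [hd_def, dist_comm x y]; exact dist_triangle t y x
        linarith
      set a : ℝ := (μ (ball x ρ)).toReal with ha_def
      set b : ℝ := (μ (ball y s)).toReal with hb_def
      have ha0 : 0 < a := hballpos x ρ hρ
      have hb0 : 0 < b := hballpos y s hs0
      have hafin : μ (ball x ρ) ≠ ⊤ := (hbdd _ isBounded_ball).ne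
      have hbfin : μ (ball y s) ≠ ⊤ := (hbdd _ isBounded_ball).ne
      have hab : a ≤ b := ENNReal.toReal_mono hbfin (measure_mono hsub1)
      -- annulus measure bound
      have hba : b - a ≤ K * ε ^ δ * b := by
        have h1 : μ (ball y s) ≤ μ (ball x ρ) + μ (ball y s \ ball x ρ) := by
          refine (measure_le_inter_add_diff μ (ball y s) (ball x ρ)).trans ?_
          exact add_le_add_left (measure_mono inter_subset_right) _
        have h2 : μ (ball y s \ ball x ρ) ≤ μ (ball y s \ ball y (s * (1 - ε))) :=
          measure_mono (diff_subset_diff_right hsub2)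
        have h3 := hann y s ε hs0 hε0 hε1
        have h4 : μ (ball y s) ≤ μ (ball x ρ) + ENNReal.ofReal (K * ε ^ δ) * μ (ball y s) :=
          h1.trans (add_le_add_right (h2.trans h3) _)
        have h5 : (ENNReal.ofReal (K * ε ^ δ) * μ (ball y s)).toReal
            = K * ε ^ δ * b := by
          rw [ENNReal.toReal_mul, ENNReal.toReal_ofReal (by positivity)]
        have h6 : μ (ball x ρ) + ENNReal.ofReal (K * ε ^ δ) * μ (ball y s) ≠ ⊤ := by
          refine ENNReal.add_ne_top.2 ⟨hafin, ?_⟩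
          exact ENNReal.mul_ne_top ENNReal.ofReal_ne_top hbfin
        have h7 := ENNReal.toReal_mono h6 h4
        rw [ENNReal.toReal_add hafin (ENNReal.mul_ne_top ENNReal.ofReal_ne_top hbfin), h5]
          at h7
        linarith
      -- the generic comparison
      have inner : ∀ c ρb : ℝ, 0 ≤ ρb →
          (∀ t ∈ ball x ρ, |f t| ≤ c + ρb) →
          (∀ t ∈ ball y s, max 0 (c - ρb) ≤ |f t|) →
          (⨍ t in ball x ρ, |f t| ∂μ) ≤ maxFun μ f y + K * ε ^ δ * (2 * ρb) := by
        intro c ρb hρb h1 h2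
        set A : ℝ := ∫ t in ball x ρ, |f t| ∂μ with hA_def
        set Bi : ℝ := ∫ t in ball y s, |f t| ∂μ with hBi_def
        set m0 : ℝ := max 0 (c - ρb) with hm0_def
        have hm00 : 0 ≤ m0 := le_max_left _ _
        have hm0c : c - ρb ≤ m0 := le_max_right _ _
        have hA0 : 0 ≤ A := setIntegral_nonneg measurableSet_ball fun t _ => abs_nonneg _
        have hA_le : A ≤ (c + ρb) * a := by
          calc A ≤ ∫ _t in ball x ρ, (c + ρb) ∂μ :=
                setIntegral_mono_on (hintball x ρ) (hconstball x ρ _) measurableSet_ball h1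
            _ = (c + ρb) * a := by rw [setIntegral_const, smul_eq_mul, mul_comm, measureReal_def]
        have hE : μ (ball y s \ ball x ρ) ≠ ⊤ :=
          (lt_of_le_of_lt (measure_mono diff_subset) (hbdd _ isBounded_ball)).ne
        have hEν : (μ (ball y s \ ball x ρ)).toReal = b - a := by
          rw [measure_diff hsub1 measurableSet_ball.nullMeasurableSet hafin,
            ENNReal.toReal_sub_of_le (measure_mono hsub1) hbfin]
        have hBi_ge : A + (b - a) * m0 ≤ Bi := by
          have hudecomp : ball x ρ ∪ (ball y s \ ball x ρ) = ball y s :=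
            union_diff_cancel hsub1
          have hdisj : Disjoint (ball x ρ) (ball y s \ ball x ρ) := disjoint_sdiff_self_right
          have hsplit : Bi = A + ∫ t in ball y s \ ball x ρ, |f t| ∂μ := by
            have hu := setIntegral_union (f := fun t => |f t|) (μ := μ) hdisj
              (measurableSet_ball.diff measurableSet_ball) (hintball x ρ)
              ((hintball y s).mono_set diff_subset)
            rw [hudecomp] at hu
            simp only [hBi_def, hA_def]
            exact hu
          have hElow : (b - a) * m0 ≤ ∫ t in ball y s \ ball x ρ, |f t| ∂μ := by
            calc (b - a) * m0 = ∫ _t in ball y s \ ball x ρ, m0 ∂μ := by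
                  rw [setIntegral_const, smul_eq_mul, measureReal_def, hEν]
              _ ≤ ∫ t in ball y s \ ball x ρ, |f t| ∂μ := by
                  refine setIntegral_mono_on ?_ ((hintball y s).mono_set diff_subset)
                    (measurableSet_ball.diff measurableSet_ball)
                    fun t ht => h2 t ht.1
                  exact integrableOn_const
                    (lt_of_le_of_lt (measure_mono diff_subset) (hbdd _ isBounded_ball)).ne
          linarith [hsplit, hElow]
        -- real arithmetic
        have hstep : A * b ≤ Bi * a + (b - a) * (2 * ρb) * a := by
          have h5 : A ≤ a * (m0 + 2 * ρb) := by nlinarith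
          have h6 : 0 ≤ b - a := by linarith
          nlinarith [mul_le_mul_of_nonneg_left h5 h6, mul_le_mul_of_nonneg_right hBi_ge ha0.le]
        have hstep2 : A * b ≤ Bi * a + K * ε ^ δ * (2 * ρb) * (a * b) := by
          have h7 : (b - a) * ((2 * ρb) * a) ≤ (K * ε ^ δ * b) * ((2 * ρb) * a) :=
            mul_le_mul_of_nonneg_right hba (by positivity)
          nlinarith [h7]
        have hfinal : A / a ≤ Bi / b + K * ε ^ δ * (2 * ρb) := by
          rw [div_add' _ _ _ hb0.ne', div_le_div_iff₀ ha0 hb0]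
          nlinarith [hstep2]
        have havgx : (⨍ t in ball x ρ, |f t| ∂μ) = A / a := by
          rw [setAverage_eq, smul_eq_mul, inv_mul_eq_div, measureReal_def]
        have havgy : (⨍ t in ball y s, |f t| ∂μ) = Bi / b := by
          rw [setAverage_eq, smul_eq_mul, inv_mul_eq_div, measureReal_def]
        have hmy : Bi / b ≤ maxFun μ f y := by
          rw [← havgy]; exact hmax_ge y s hs0
        rw [havgx]
        linarith
      -- numeric lemma
      have hnum : ∀ e : ℝ, 0 ≤ e → e ≤ δ → ε ^ δ * (2 * s) ^ e ≤ 4 * d ^ e := by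
        intro e he0 he1
        have he2 : e ≤ 1 := he1.trans hδ1
        have h1 : ε ^ δ ≤ ε ^ e := Real.rpow_le_rpow_of_exponent_ge hε0 hε1.le he1
        have h2 : ε ^ e * (2 * s) ^ e = (4 * d) ^ e := by
          rw [← Real.mul_rpow hε0.le (by positivity)]
          congr 1
          rw [hε_def, div_mul_eq_mul_div, div_eq_iff hs0.ne']
          ring
        have h4e : (4:ℝ) ^ e ≤ 4 := by
          have := Real.rpow_le_rpow_of_exponent_le (x := 4) (by norm_num) he2
          simpa using this
        calc ε ^ δ * (2 * s) ^ e ≤ ε ^ e * (2 * s) ^ e :=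
              mul_le_mul_of_nonneg_right h1 (Real.rpow_nonneg (by positivity) _)
          _ = (4 * d) ^ e := h2
          _ = 4 ^ e * d ^ e := Real.mul_rpow (by norm_num) hd0.le
          _ ≤ 4 * d ^ e := mul_le_mul_of_nonneg_right h4e (Real.rpow_nonneg hd0.le _)
      -- apply with the better of the two exponents
      have happ : ∀ z : X, (∀ t ∈ ball x ρ, dist z t ≤ 2 * s) →
          (∀ t ∈ ball y s, dist z t ≤ 2 * s) →
          (⨍ t in ball x ρ, |f t| ∂μ) ≤ maxFun μ f y + 8 * K * d ^ α z := by
        intro z hz1 hz2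
        have hρb0 : (0:ℝ) ≤ (2 * s) ^ α z := Real.rpow_nonneg (by positivity) _
        have h1 : ∀ t ∈ ball x ρ, |f t| ≤ |f z| + (2 * s) ^ α z := by
          intro t ht
          have := abs_sub_abs_le_abs_sub (f t) (f z)
          rw [abs_sub_comm] at this
          have h2 := (hHol z t).trans (Real.rpow_le_rpow dist_nonneg (hz1 t ht) (hα0 z))
          linarith
        have h2 : ∀ t ∈ ball y s, max 0 (|f z| - (2 * s) ^ α z) ≤ |f t| := by
          intro t ht
          refine max_le (abs_nonneg _) ?_
          have := abs_sub_abs_le_abs_sub (f z) (f t)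
          have h2 := (hHol z t).trans (Real.rpow_le_rpow dist_nonneg (hz2 t ht) (hα0 z))
          linarith
        have h3 := inner (|f z|) ((2 * s) ^ α z) hρb0 h1 h2
        have h4 : K * ε ^ δ * (2 * (2 * s) ^ α z) ≤ 8 * K * d ^ α z := by
          have := hnum (α z) (hα0 z) (hαδ z)
          nlinarith
        linarith
      have hxball : ∀ t ∈ ball x ρ, dist x t ≤ 2 * s := by
        intro t ht
        rw [mem_ball] at ht
        rw [dist_comm]
        simp only [hs_def]
        linarith
      have hxball2 : ∀ t ∈ ball y s, dist x t ≤ 2 * s := by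
        intro t ht
        rw [mem_ball] at ht
        have h1 : dist x t ≤ d + dist t y := by
          rw [hd_def]
          have := dist_triangle x y t
          rw [dist_comm y t] at this
          exact this
        have h2 : d ≤ s := by simp only [hs_def]; linarith
        linarith
      have hyball : ∀ t ∈ ball x ρ, dist y t ≤ 2 * s := by
        intro t ht
        rw [mem_ball] at ht
        have h1 : dist y t ≤ d + dist t x := by
          rw [hd_def, dist_comm x y]
          have := dist_triangle y x t
          rw [dist_comm x t] at this
          exact this
        have h2 : ρ + d ≤ 2 * s := by simp only [hs_def]; linarith
        linarith
      have hyball2 : ∀ t ∈ ball y s, dist y t ≤ 2 * s := by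
        intro t ht
        rw [mem_ball] at ht
        rw [dist_comm]
        linarith
      rcases min_cases (d ^ α x) (d ^ α y) with ⟨he, _⟩ | ⟨he, _⟩
      · have := happ x hxball hxball2
        have hm_eq : m = d ^ α x := by rw [hm_def, he]
        rw [hm_eq]
        nlinarith [Real.rpow_nonneg hd0.le (α x)]
      · have := happ y hyball hyball2
        have hm_eq : m = d ^ α y := by rw [hm_def, he]
        rw [hm_eq]
        nlinarith [Real.rpow_nonneg hd0.le (α y)]
  have hfinalx : maxFun μ f x ≤ maxFun μ f y + C * m := hmax_le x _ key
  linarith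
end

section
/- Let $(X,d,\mu)$ be a metric measure space in which every nonempty open set has positive measure and every bounded set has finite measure, satisfying the $\delta$-annular decay property for some $\delta\in(0,1]$. Let $\alpha\colon X\to(0,1]$ and $\beta\colon X\to[0,1]$ satisfy $\beta(x)\leq\alpha(x)\leq\delta$ for all $x$ and $\sup_{x\in X}\beta(x)/\alpha(x)<1$. Then the Hardy–Littlewood maximal operator $M\colon C^{0,\alpha(\cdot)}(X)\to C^{0,\beta(\cdot)}(X)$ is continuous: if $f_n\to f$ in $C^{0,\alpha(\cdot)}(X)$ then $Mf_n\to Mf$ in $C^{0,\beta(\cdot)}(X)$. -/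
open MeasureTheory Metric Set Filter

namespace MaxAux

lemma bddAbove_of_forall {ι : Sort*} {f : ι → ℝ} {c : ℝ} (h : ∀ i, f i ≤ c) :
    BddAbove (Set.range f) := ⟨c, by rintro _ ⟨i, rfl⟩; exact h i⟩

section Basic

variable {X : Type*} [MetricSpace X] [MeasurableSpace X] [BorelSpace X] {μ : Measure X}

lemma avg_nonneg (g : X → ℝ) (s : Set X) : 0 ≤ ⨍ t in s, |g t| ∂μ := by
  rw [setAverage_eq]
  exact smul_nonneg (by positivity) (integral_nonneg fun t => abs_nonneg _)

lemma intOn {g : X → ℝ} (hg : Continuous g) {M : ℝ} (hM : ∀ t, |g t| ≤ M)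
    {s : Set X} (hs : μ s ≠ ⊤) : IntegrableOn (fun t => |g t|) s μ := by
  refine Measure.integrableOn_of_bounded hs hg.abs.aestronglyMeasurable (M := M) ?_
  exact ae_of_all _ fun t => by simpa [Real.norm_eq_abs, abs_abs] using hM t

lemma avg_le_of_bound {g : X → ℝ} (hg : Continuous g) {M : ℝ} (hM : ∀ t, |g t| ≤ M)
    {s : Set X} (hs : MeasurableSet s) (h0 : μ s ≠ 0) (hT : μ s ≠ ⊤)
    {S : ℝ} (hS : ∀ t ∈ s, |g t| ≤ S) :
    ⨍ t in s, |g t| ∂μ ≤ S := by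
  have hb : 0 < (μ s).toReal := ENNReal.toReal_pos h0 hT
  have hint : ∫ t in s, |g t| ∂μ ≤ (μ s).toReal * S := by
    calc ∫ t in s, |g t| ∂μ ≤ ∫ _t in s, S ∂μ :=
          setIntegral_mono_on (intOn hg hM hT) (integrableOn_const hT) hs hS
      _ = (μ s).toReal * S := by rw [setIntegral_const]; ring_nf; rfl
  rw [setAverage_eq, smul_eq_mul]
  rw [measureReal_def, inv_mul_le_iff₀ hb]
  linarith [hint]

lemma avg_ge_of_bound {g : X → ℝ} (hg : Continuous g) {M : ℝ} (hM : ∀ t, |g t| ≤ M)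
    {s : Set X} (hs : MeasurableSet s) (h0 : μ s ≠ 0) (hT : μ s ≠ ⊤)
    {I : ℝ} (hI : ∀ t ∈ s, I ≤ |g t|) :
    I ≤ ⨍ t in s, |g t| ∂μ := by
  have hb : 0 < (μ s).toReal := ENNReal.toReal_pos h0 hT
  have hint : (μ s).toReal * I ≤ ∫ t in s, |g t| ∂μ := by
    calc (μ s).toReal * I = ∫ _t in s, I ∂μ := by rw [setIntegral_const, measureReal_def]; rw [smul_eq_mul]
      _ ≤ ∫ t in s, |g t| ∂μ :=
          setIntegral_mono_on (integrableOn_const hT) (intOn hg hM hT) hs hI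
  rw [setAverage_eq, smul_eq_mul, measureReal_def, le_inv_mul_iff₀ hb]
  linarith [hint]

end Basic

end MaxAux
section MaxFun

variable {X : Type*} [MetricSpace X] [MeasurableSpace X] [BorelSpace X] {μ : Measure X}
variable (hopen : ∀ U : Set X, IsOpen U → U.Nonempty → 0 < μ U)
variable (hbdd : ∀ s : Set X, Bornology.IsBounded s → μ s < ⊤)

include hopen in
lemma ball_ne_zero (x : X) {r : ℝ} (hr : 0 < r) : μ (ball x r) ≠ 0 :=
  (hopen _ isOpen_ball ⟨x, mem_ball_self hr⟩).ne'

include hbdd in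
lemma ball_ne_top (x : X) (r : ℝ) : μ (ball x r) ≠ ⊤ := (hbdd _ isBounded_ball).ne

include hopen hbdd in
lemma avg_le_maxFun {g : X → ℝ} (hg : Continuous g) {M : ℝ} (hM : ∀ t, |g t| ≤ M)
    (x : X) {r : ℝ} (hr : 0 < r) :
    ⨍ t in ball x r, |g t| ∂μ ≤ maxFun μ g x := by
  refine le_ciSup (f := fun r : {r : ℝ // 0 < r} => ⨍ t in ball x r.1, |g t| ∂μ)
    (MaxAux.bddAbove_of_forall (c := M) fun p => ?_) ⟨r, hr⟩
  exact MaxAux.avg_le_of_bound hg hM measurableSet_ball (ball_ne_zero hopen x p.2)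
    (ball_ne_top hbdd x p.1) (fun t _ => hM t)

include hopen hbdd in
lemma maxFun_le {g : X → ℝ} (hg : Continuous g) {M : ℝ} (hM : ∀ t, |g t| ≤ M) (x : X) :
    maxFun μ g x ≤ M := by
  have : Nonempty {r : ℝ // 0 < r} := ⟨⟨1, one_pos⟩⟩
  exact ciSup_le fun p => MaxAux.avg_le_of_bound hg hM measurableSet_ball
    (ball_ne_zero hopen x p.2) (ball_ne_top hbdd x p.1) (fun t _ => hM t)

include hopen hbdd in
lemma maxFun_nonneg {g : X → ℝ} (hg : Continuous g) {M : ℝ} (hM : ∀ t, |g t| ≤ M) (x : X) :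
    0 ≤ maxFun μ g x :=
  le_trans (MaxAux.avg_nonneg g (ball x 1)) (avg_le_maxFun hopen hbdd hg hM x one_pos)

omit [MeasurableSpace X] [BorelSpace X] in
-- pointwise Hölder bound from the seminorm
lemma holder_pt {α : X → ℝ} {g : X → ℝ}
    (hb : BddAbove (Set.range fun p : {p : X × X // p.1 ≠ p.2} =>
      |g p.1.1 - g p.1.2| / dist p.1.1 p.1.2 ^ α p.1.1))
    {x : X} (hαx : 0 < α x) (t : X) :
    |g x - g t| ≤ holderSemi α g * dist x t ^ α x := by
  rcases eq_or_ne x t with rfl | hne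
  · simp [Real.zero_rpow hαx.ne']
  · have h := le_ciSup hb ⟨(x, t), hne⟩
    have hd : (0:ℝ) < dist x t ^ α x :=
      Real.rpow_pos_of_pos (dist_pos.2 hne) _
    rw [div_le_iff₀ hd] at h
    simpa [holderSemi] using h

omit [MeasurableSpace X] [BorelSpace X] in
lemma holderSemi_nonneg {α : X → ℝ} (g : X → ℝ) : 0 ≤ holderSemi α g :=
  Real.iSup_nonneg fun _p => div_nonneg (abs_nonneg _) (Real.rpow_nonneg dist_nonneg _)

include hopen hbdd in
lemma abs_le_maxFun {α : X → ℝ} {g : X → ℝ} (hg : MemVarHolder α g)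
    {x : X} (hαx : 0 < α x) :
    |g x| ≤ maxFun μ g x := by
  set M := ⨆ t, |g t| with hMdef
  have hM : ∀ t, |g t| ≤ M := fun t => le_ciSup hg.2.1 t
  set H := holderSemi α g with hHdef
  have hH : 0 ≤ H := holderSemi_nonneg g
  refine le_of_forall_pos_le_add fun ε hε => ?_
  set r : ℝ := (ε / (H + 1)) ^ (1 / α x) with hrdef
  have hεH : 0 < ε / (H + 1) := by positivity
  have hr : 0 < r := Real.rpow_pos_of_pos hεH _
  have hrpow : r ^ α x = ε / (H + 1) := by
    rw [hrdef, ← Real.rpow_mul hεH.le, one_div, inv_mul_cancel₀ hαx.ne', Real.rpow_one]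
  have hHr : H * r ^ α x ≤ ε := by
    rw [hrpow]
    calc H * (ε / (H + 1)) ≤ (H + 1) * (ε / (H + 1)) := by
          apply mul_le_mul_of_nonneg_right (by linarith) hεH.le
      _ = ε := by field_simp
  have hlow : ∀ t ∈ ball x r, |g x| - ε ≤ |g t| := by
    intro t ht
    have h1 : |g x| - |g t| ≤ |g x - g t| := abs_sub_abs_le_abs_sub _ _
    have h2 : |g x - g t| ≤ H * dist x t ^ α x := holder_pt hg.2.2 hαx t
    have h3 : H * dist x t ^ α x ≤ H * r ^ α x :=
      mul_le_mul_of_nonneg_left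
        (Real.rpow_le_rpow dist_nonneg (le_of_lt (by rwa [mem_ball, dist_comm] at ht)) hαx.le) hH
    linarith
  have havg : |g x| - ε ≤ ⨍ t in ball x r, |g t| ∂μ :=
    MaxAux.avg_ge_of_bound hg.1 hM measurableSet_ball (ball_ne_zero hopen x hr)
      (ball_ne_top hbdd x r) hlow
  linarith [avg_le_maxFun hopen hbdd hg.1 hM x hr]

end MaxFun
section Core

variable {X : Type*} [MetricSpace X] [MeasurableSpace X] [BorelSpace X] {μ : Measure X}
variable (hopen : ∀ U : Set X, IsOpen U → U.Nonempty → 0 < μ U)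
variable (hbdd : ∀ s : Set X, Bornology.IsBounded s → μ s < ⊤)

include hopen hbdd in
/-- Comparison of averages over nested balls. -/
lemma avg_diff_le_s2 {g : X → ℝ} (hg : Continuous g) {M : ℝ} (hM : ∀ t, |g t| ≤ M)
    {p q : X} {s R : ℝ} (hs : 0 < s) (hR : 0 < R)
    (hBA : ball p s ⊆ ball q R) (S I : ℝ)
    (hS : ∀ t ∈ ball p s, |g t| ≤ S) (hI : ∀ t ∈ ball q R \ ball p s, I ≤ |g t|) :
    ⨍ t in ball p s, |g t| ∂μ ≤ ⨍ t in ball q R, |g t| ∂μ +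
      ((μ (ball q R)).toReal - (μ (ball p s)).toReal) / (μ (ball q R)).toReal * (S - I) := by
  set A := ball q R
  set B := ball p s
  set a := (μ A).toReal
  set b := (μ B).toReal
  have haT : μ A ≠ ⊤ := ball_ne_top hbdd q R
  have hbT : μ B ≠ ⊤ := ball_ne_top hbdd p s
  have ha : 0 < a := ENNReal.toReal_pos (ball_ne_zero hopen q hR) haT
  have hb : 0 < b := ENNReal.toReal_pos (ball_ne_zero hopen p hs) hbT
  have hba : b ≤ a := ENNReal.toReal_mono haT (measure_mono hBA)
  have iA : IntegrableOn (fun t => |g t|) A μ := MaxAux.intOn hg hM haT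
  have iB : IntegrableOn (fun t => |g t|) B μ := iA.mono_set hBA
  have iD : IntegrableOn (fun t => |g t|) (A \ B) μ := iA.mono_set diff_subset
  set x := ∫ t in B, |g t| ∂μ
  set y := ∫ t in A \ B, |g t| ∂μ
  have hxy : ∫ t in A, |g t| ∂μ = x + y := by
    have h := integral_diff (f := fun t => |g t|) (μ := μ) (s := A) (t := B)
      measurableSet_ball iA hBA
    simp only [x, y, A, B] at h ⊢
    linarith [h]
  have hμdiff : (μ (A \ B)).toReal = a - b := by
    rw [measure_diff hBA measurableSet_ball.nullMeasurableSet hbT,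
      ENNReal.toReal_sub_of_le (measure_mono hBA) haT]
  have hX : x ≤ S * b := by
    calc x ≤ ∫ _t in B, S ∂μ :=
          setIntegral_mono_on iB (integrableOn_const hbT) measurableSet_ball hS
      _ = S * b := by rw [setIntegral_const, smul_eq_mul]; exact mul_comm _ _
  have hY : I * (a - b) ≤ y := by
    calc I * (a - b) = ∫ _t in A \ B, I ∂μ := by
          rw [setIntegral_const, smul_eq_mul, measureReal_def, hμdiff]; ring
      _ ≤ y := setIntegral_mono_on (integrableOn_const ((measure_mono diff_subset).trans_lt haT.lt_top).ne)
          iD (measurableSet_ball.diff measurableSet_ball) hI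
  have key : x / b ≤ ((x + y) + (a - b) * (S - I)) / a := by
    rw [div_le_div_iff₀ hb ha]
    have h1 : (a - b) * x ≤ (a - b) * (S * b) :=
      mul_le_mul_of_nonneg_left hX (by linarith)
    have h2 : b * (I * (a - b)) ≤ b * y := mul_le_mul_of_nonneg_left hY hb.le
    nlinarith [h1, h2]
  calc ⨍ t in B, |g t| ∂μ = x / b := by
        rw [setAverage_eq, smul_eq_mul, inv_mul_eq_div]; rfl
    _ ≤ ((x + y) + (a - b) * (S - I)) / a := key
    _ = (x + y) / a + (a - b) / a * (S - I) := by ring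
    _ = ⨍ t in A, |g t| ∂μ + (a - b) / a * (S - I) := by
        rw [setAverage_eq, smul_eq_mul, inv_mul_eq_div, hxy]; rfl

end Core
section Key

variable {X : Type*} [MetricSpace X] [MeasurableSpace X] [BorelSpace X] {μ : Measure X}
variable (hopen : ∀ U : Set X, IsOpen U → U.Nonempty → 0 < μ U)
variable (hbdd : ∀ s : Set X, Bornology.IsBounded s → μ s < ⊤)

include hopen hbdd in
lemma key_avg_bound {δ : ℝ} (hδ : δ ∈ Set.Ioc (0:ℝ) 1) {K : ℝ} (hK : 1 ≤ K)
    (hann : ∀ (x : X) (r ε : ℝ), 0 < r → 0 < ε → ε < 1 →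
      μ (ball x r \ ball x (r * (1 - ε))) ≤ ENNReal.ofReal (K * ε ^ δ) * μ (ball x r))
    {α : X → ℝ} (hα : ∀ x, α x ∈ Set.Ioc (0:ℝ) 1) (hαδ : ∀ x, α x ≤ δ)
    {g : X → ℝ} (hg : MemVarHolder α g)
    {p q z : X} {r : ℝ} (hr : 0 < r) (hr1 : r ≤ 1)
    (hpq : dist p q ≤ r) (hqz : dist q z ≤ r) {s : ℝ} (hs : 0 < s) :
    ⨍ t in ball p s, |g t| ∂μ ≤ maxFun μ g q
      + 12 * K * (holderSemi α g + ⨆ t, |g t|) * r ^ α z := by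
  set M := ⨆ t, |g t| with hMdef
  have hM : ∀ t, |g t| ≤ M := fun t => le_ciSup hg.2.1 t
  have hM0 : 0 ≤ M := le_trans (abs_nonneg (g p)) (hM p)
  set H := holderSemi α g with hHdef
  have hH0 : 0 ≤ H := holderSemi_nonneg g
  have hK0 : (0:ℝ) ≤ K := by linarith
  have hαz : 0 < α z := (hα z).1
  have hαz1 : α z ≤ 1 := (hα z).2
  have hrz0 : 0 ≤ r ^ α z := Real.rpow_nonneg hr.le _
  have h3δ : (3:ℝ)^δ ≤ 3 := by
    calc (3:ℝ)^δ ≤ (3:ℝ)^(1:ℝ) := Real.rpow_le_rpow_of_exponent_le (by norm_num) hδ.2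
      _ = 3 := Real.rpow_one 3
  have hgzq : |g z| ≤ maxFun μ g q + H * r ^ α z := by
    have h1 : |g z| - |g q| ≤ |g z - g q| := abs_sub_abs_le_abs_sub _ _
    have h2 : |g z - g q| ≤ H * dist z q ^ α z := holder_pt hg.2.2 hαz q
    have h3 : H * dist z q ^ α z ≤ H * r ^ α z :=
      mul_le_mul_of_nonneg_left
        (Real.rpow_le_rpow dist_nonneg (by rwa [dist_comm]) hαz.le) hH0
    have h4 : |g q| ≤ maxFun μ g q := abs_le_maxFun hopen hbdd hg (hα q).1
    linarith
  rcases le_or_gt s r with hsr | hrs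
  · -- small radius case : s ≤ r
    refine le_trans (MaxAux.avg_le_of_bound hg.1 hM measurableSet_ball
      (ball_ne_zero hopen p hs) (ball_ne_top hbdd p s)
      (S := maxFun μ g q + (H * r ^ α z + 3 * H * r ^ α z)) ?_) ?_
    · intro t ht
      have h1 : |g t| - |g z| ≤ |g z - g t| := by
        rw [abs_sub_comm]; exact abs_sub_abs_le_abs_sub _ _
      have h2 : |g z - g t| ≤ H * dist z t ^ α z := holder_pt hg.2.2 hαz t
      have hd : dist z t ≤ 3 * r := by
        have := dist_triangle4 z q p t
        rw [mem_ball, dist_comm] at ht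
        have h5 : dist q p = dist p q := dist_comm q p
        have h6 : dist z q = dist q z := dist_comm z q
        linarith
      have h3 : H * dist z t ^ α z ≤ H * (3*r) ^ α z :=
        mul_le_mul_of_nonneg_left (Real.rpow_le_rpow dist_nonneg hd hαz.le) hH0
      have h4 : (3*r) ^ α z ≤ 3 * r ^ α z := by
        rw [Real.mul_rpow (by norm_num) hr.le]
        have h3α : (3:ℝ)^(α z) ≤ 3 := by
          calc (3:ℝ)^(α z) ≤ (3:ℝ)^(1:ℝ) := Real.rpow_le_rpow_of_exponent_le (by norm_num) hαz1
            _ = 3 := Real.rpow_one 3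
        exact mul_le_mul_of_nonneg_right h3α hrz0
      have h5 : H * (3*r) ^ α z ≤ 3 * H * r ^ α z := by
        calc H * (3*r) ^ α z ≤ H * (3 * r ^ α z) := mul_le_mul_of_nonneg_left h4 hH0
          _ = 3 * H * r ^ α z := by ring
      linarith
    · have hterm : 0 ≤ K * M * r ^ α z := mul_nonneg (mul_nonneg hK0 hM0) hrz0
      have hterm2 : (4:ℝ) * H * r ^ α z ≤ 12 * K * (H + M) * r ^ α z := by
        have h6 : (4:ℝ) * H ≤ 12 * K * (H + M) := by nlinarith
        exact mul_le_mul_of_nonneg_right h6 hrz0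
      linarith
  · -- large radius case : r < s
    have hs2r : 0 < s + 2*r := by linarith
    have hBA : ball p s ⊆ ball q (s + 2*r) := fun t ht => by
      rw [mem_ball] at ht ⊢
      have := dist_triangle t p q
      linarith
    have hsub : ball q (s - r) ⊆ ball p s := fun t ht => by
      rw [mem_ball] at ht ⊢
      have := dist_triangle t q p
      have h5 : dist q p = dist p q := dist_comm q p
      linarith
    set ε₀ : ℝ := 3*r/(s+2*r) with hε₀def
    have hε0 : 0 < ε₀ := by positivity
    have hε1 : ε₀ < 1 := by rw [hε₀def, div_lt_one hs2r]; linarith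
    have hre : (s+2*r) * (1 - ε₀) = s - r := by
      rw [hε₀def]; field_simp; ring
    have hεδ : ε₀^δ = 3^δ * r^δ / (s+2*r)^δ := by
      rw [hε₀def, Real.div_rpow (by positivity) hs2r.le,
        Real.mul_rpow (by norm_num) hr.le]
    have hεδ0 : 0 ≤ K * ε₀^δ := mul_nonneg hK0 (Real.rpow_nonneg hε0.le _)
    set a := (μ (ball q (s+2*r))).toReal with hadef
    set b := (μ (ball p s)).toReal with hbdef
    have haT : μ (ball q (s+2*r)) ≠ ⊤ := ball_ne_top hbdd q _
    have hbT : μ (ball p s) ≠ ⊤ := ball_ne_top hbdd p _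
    have ha : 0 < a := ENNReal.toReal_pos (ball_ne_zero hopen q hs2r) haT
    have hb : 0 < b := ENNReal.toReal_pos (ball_ne_zero hopen p hs) hbT
    have hann' : μ (ball q (s+2*r) \ ball p s) ≤ ENNReal.ofReal (K * ε₀^δ) * μ (ball q (s+2*r)) := by
      refine le_trans (measure_mono (diff_subset_diff_right hsub)) ?_
      have h := hann q (s+2*r) ε₀ hs2r hε0 hε1
      rwa [hre] at h
    have hμdiff : (μ (ball q (s+2*r) \ ball p s)).toReal = a - b := by
      rw [measure_diff hBA measurableSet_ball.nullMeasurableSet hbT,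
        ENNReal.toReal_sub_of_le (measure_mono hBA) haT]
    have hab : a - b ≤ K * ε₀^δ * a := by
      rw [← hμdiff]
      calc (μ (ball q (s+2*r) \ ball p s)).toReal
          ≤ (ENNReal.ofReal (K * ε₀^δ) * μ (ball q (s+2*r))).toReal :=
            ENNReal.toReal_mono (ENNReal.mul_ne_top ENNReal.ofReal_ne_top haT) hann'
        _ = K * ε₀^δ * a := by
            rw [ENNReal.toReal_mul, ENNReal.toReal_ofReal hεδ0]
    have hfrac : (a - b)/a ≤ K * ε₀^δ := by
      rw [div_le_iff₀ ha]; exact hab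
    have havgA : ⨍ t in ball q (s+2*r), |g t| ∂μ ≤ maxFun μ g q :=
      avg_le_maxFun hopen hbdd hg.1 hM q hs2r
    rcases le_or_gt (s + 2*r) 1 with hsmall | hbig
    · -- s + 2r ≤ 1 : use Hölder oscillation bound
      set S := |g z| + 2*H*(s+2*r)^(α z) with hSdef
      set I := |g z| - 2*H*(s+2*r)^(α z) with hIdef
      have hosc : ∀ t ∈ ball q (s+2*r), |g t| ≤ S ∧ I ≤ |g t| := by
        intro t ht
        have h2 : |g z - g t| ≤ H * dist z t ^ α z := holder_pt hg.2.2 hαz t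
        have hd : dist z t ≤ 2*(s+2*r) := by
          have := dist_triangle z q t
          rw [mem_ball, dist_comm] at ht
          have h5 : dist z q = dist q z := dist_comm z q
          linarith
        have h3 : H * dist z t ^ α z ≤ H * (2*(s+2*r)) ^ α z :=
          mul_le_mul_of_nonneg_left (Real.rpow_le_rpow dist_nonneg hd hαz.le) hH0
        have h4 : (2*(s+2*r)) ^ α z ≤ 2 * (s+2*r) ^ α z := by
          rw [Real.mul_rpow (by norm_num) hs2r.le]
          refine mul_le_mul_of_nonneg_right ?_ (Real.rpow_nonneg hs2r.le _)
          calc (2:ℝ)^(α z) ≤ (2:ℝ)^(1:ℝ) := Real.rpow_le_rpow_of_exponent_le (by norm_num) hαz1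
            _ = 2 := Real.rpow_one 2
        have h5 : H * (2*(s+2*r)) ^ α z ≤ 2*H*(s+2*r) ^ α z := by
          calc H * (2*(s+2*r)) ^ α z ≤ H * (2 * (s+2*r) ^ α z) :=
                mul_le_mul_of_nonneg_left h4 hH0
            _ = 2*H*(s+2*r) ^ α z := by ring
        have h6 : |g t| - |g z| ≤ |g z - g t| := by
          rw [abs_sub_comm]; exact abs_sub_abs_le_abs_sub _ _
        have h7 : |g z| - |g t| ≤ |g z - g t| := abs_sub_abs_le_abs_sub _ _
        constructor
        · rw [hSdef]; linarith
        · rw [hIdef]; linarith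
      have hdiff := avg_diff_le_s2 hopen hbdd hg.1 hM hs hs2r hBA S I
        (fun t ht => (hosc t (hBA ht)).1) (fun t ht => (hosc t ht.1).2)
      have hSI : S - I = 4*H*(s+2*r)^(α z) := by rw [hSdef, hIdef]; ring
      have hSI0 : 0 ≤ S - I := by
        rw [hSI]; positivity
      have hE : ε₀^δ * (s+2*r)^(α z) ≤ 3 * r^(α z) := by
        rw [hεδ]
        have h1 : 3^δ * r^δ / (s+2*r)^δ * (s+2*r)^(α z) = 3^δ * r^δ * (s+2*r)^(α z - δ) := by
          rw [Real.rpow_sub hs2r]; ring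
        rw [h1]
        have h2 : (s+2*r)^(α z - δ) ≤ r^(α z - δ) :=
          Real.rpow_le_rpow_of_nonpos hr (by linarith) (by linarith [hαδ z])
        calc 3^δ * r^δ * (s+2*r)^(α z - δ) ≤ 3 * r^δ * r^(α z - δ) := by
              refine mul_le_mul (mul_le_mul_of_nonneg_right h3δ (Real.rpow_nonneg hr.le _))
                h2 (Real.rpow_nonneg hs2r.le _) (by positivity)
          _ = 3 * r^(α z) := by
              rw [mul_assoc, ← Real.rpow_add hr, (show δ + (α z - δ) = α z by ring)]
      have hfinal : (a - b)/a * (S - I) ≤ 12 * K * (H + M) * r ^ α z := by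
        calc (a - b)/a * (S - I) ≤ K * ε₀^δ * (S - I) :=
              mul_le_mul_of_nonneg_right hfrac hSI0
          _ = 4*K*H * (ε₀^δ * (s+2*r)^(α z)) := by rw [hSI]; ring
          _ ≤ 4*K*H * (3 * r^(α z)) :=
              mul_le_mul_of_nonneg_left hE (by positivity)
          _ ≤ 12 * K * (H + M) * r ^ α z := by
              have e2 : 0 ≤ K*M*r^(α z) := mul_nonneg (mul_nonneg hK0 hM0) hrz0
              have e3 : 12 * K * (H + M) * r ^ α z - 4*K*H * (3 * r^(α z))
                  = 12*(K*M*r^(α z)) := by ring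
              linarith
      linarith [hdiff, havgA]
    · -- s + 2r > 1 : use sup bound
      have hdiff := avg_diff_le_s2 hopen hbdd hg.1 hM hs hs2r hBA M 0
        (fun t _ => hM t) (fun t _ => abs_nonneg _)
      have hεr : ε₀^δ ≤ 3 * r^(α z) := by
        rw [hεδ]
        have hden : 1 ≤ (s+2*r)^δ := by
          calc (1:ℝ) = (1:ℝ)^δ := (Real.one_rpow δ).symm
            _ ≤ (s+2*r)^δ := Real.rpow_le_rpow zero_le_one (by linarith) hδ.1.le
        have h1 : 3^δ * r^δ / (s+2*r)^δ ≤ 3^δ * r^δ :=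
          div_le_self (by positivity) hden
        have h2 : (3:ℝ)^δ * r^δ ≤ 3 * r^δ :=
          mul_le_mul_of_nonneg_right h3δ (Real.rpow_nonneg hr.le _)
        have h3 : r^δ ≤ r^(α z) := Real.rpow_le_rpow_of_exponent_ge hr hr1 (hαδ z)
        calc 3^δ * r^δ / (s+2*r)^δ ≤ 3 * r^δ := le_trans h1 h2
          _ ≤ 3 * r^(α z) := by linarith
      have hfinal : (a - b)/a * (M - 0) ≤ 12 * K * (H + M) * r ^ α z := by
        calc (a - b)/a * (M - 0) ≤ K * ε₀^δ * M := by
              rw [sub_zero]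
              exact mul_le_mul_of_nonneg_right hfrac hM0
          _ ≤ K * (3 * r^(α z)) * M := by
              refine mul_le_mul_of_nonneg_right (mul_le_mul_of_nonneg_left hεr hK0) hM0
          _ ≤ 12 * K * (H + M) * r ^ α z := by
              have e1 : 0 ≤ K*H*r^(α z) := mul_nonneg (mul_nonneg hK0 hH0) hrz0
              have e2 : 0 ≤ K*M*r^(α z) := mul_nonneg (mul_nonneg hK0 hM0) hrz0
              have e3 : 12 * K * (H + M) * r ^ α z - K * (3 * r^(α z)) * M
                  = 12*(K*H*r^(α z)) + 9*(K*M*r^(α z)) := by ring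
              linarith
      linarith [hdiff, havgA]

end Key
section Lip

variable {X : Type*} [MetricSpace X] [MeasurableSpace X] [BorelSpace X] {μ : Measure X}
variable (hopen : ∀ U : Set X, IsOpen U → U.Nonempty → 0 < μ U)
variable (hbdd : ∀ s : Set X, Bornology.IsBounded s → μ s < ⊤)

include hopen hbdd in
lemma maxFun_lip {δ : ℝ} (hδ : δ ∈ Set.Ioc (0:ℝ) 1) {K : ℝ} (hK : 1 ≤ K)
    (hann : ∀ (x : X) (r ε : ℝ), 0 < r → 0 < ε → ε < 1 →
      μ (ball x r \ ball x (r * (1 - ε))) ≤ ENNReal.ofReal (K * ε ^ δ) * μ (ball x r))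
    {α : X → ℝ} (hα : ∀ x, α x ∈ Set.Ioc (0:ℝ) 1) (hαδ : ∀ x, α x ≤ δ)
    {g : X → ℝ} (hg : MemVarHolder α g) {x y : X} (hne : x ≠ y) :
    |maxFun μ g x - maxFun μ g y| ≤
      12 * K * (holderSemi α g + ⨆ t, |g t|) * dist x y ^ α x := by
  set M := ⨆ t, |g t| with hMdef
  have hM : ∀ t, |g t| ≤ M := fun t => le_ciSup hg.2.1 t
  have hM0 : 0 ≤ M := le_trans (abs_nonneg (g x)) (hM x)
  set H := holderSemi α g with hHdef
  have hH0 : 0 ≤ H := holderSemi_nonneg g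
  have hK0 : (0:ℝ) ≤ K := by linarith
  have hd : 0 < dist x y := dist_pos.2 hne
  have hαx : 0 < α x := (hα x).1
  have : Nonempty {r : ℝ // 0 < r} := ⟨⟨1, one_pos⟩⟩
  rcases le_or_gt (dist x y) 1 with hd1 | hd1
  · rw [abs_sub_le_iff]
    constructor
    · -- maxFun x - maxFun y
      have h := fun (s : {r : ℝ // 0 < r}) => key_avg_bound hopen hbdd hδ hK hann hα hαδ hg
        (p := x) (q := y) (z := x) hd hd1 (le_refl _) (le_of_eq (dist_comm y x)) s.2
      have := ciSup_le (f := fun s : {r : ℝ // 0 < r} => ⨍ t in ball x s.1, |g t| ∂μ) h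
      rw [show maxFun μ g x = ⨆ s : {r : ℝ // 0 < r}, ⨍ t in ball x s.1, |g t| ∂μ from rfl]
      linarith [this]
    · -- maxFun y - maxFun x
      have h := fun (s : {r : ℝ // 0 < r}) => key_avg_bound hopen hbdd hδ hK hann hα hαδ hg
        (p := y) (q := x) (z := x) hd hd1 (le_of_eq (dist_comm y x)) (by simpa using hd.le) s.2
      have := ciSup_le (f := fun s : {r : ℝ // 0 < r} => ⨍ t in ball y s.1, |g t| ∂μ) h
      rw [show maxFun μ g y = ⨆ s : {r : ℝ // 0 < r}, ⨍ t in ball y s.1, |g t| ∂μ from rfl]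
      linarith [this]
  · -- dist > 1 : trivial bound
    have h1 : (1:ℝ) ≤ dist x y ^ α x := by
      calc (1:ℝ) = 1 ^ α x := (Real.one_rpow _).symm
        _ ≤ dist x y ^ α x := Real.rpow_le_rpow zero_le_one hd1.le hαx.le
    have h2 : |maxFun μ g x - maxFun μ g y| ≤ 2 * M := by
      have hx1 := maxFun_le hopen hbdd hg.1 hM x
      have hx0 := maxFun_nonneg hopen hbdd hg.1 hM x
      have hy1 := maxFun_le hopen hbdd hg.1 hM y
      have hy0 := maxFun_nonneg hopen hbdd hg.1 hM y
      rw [abs_sub_le_iff]; constructor <;> linarith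
    have h3 : 2 * M ≤ 12 * K * (H + M) := by nlinarith
    calc |maxFun μ g x - maxFun μ g y| ≤ 2 * M := h2
      _ = 2 * M * 1 := by ring
      _ ≤ 12 * K * (H + M) * dist x y ^ α x := by
          apply mul_le_mul h3 h1 zero_le_one (by nlinarith)
end Lip

section SupDiff

variable {X : Type*} [MetricSpace X] [MeasurableSpace X] [BorelSpace X] {μ : Measure X}
variable (hopen : ∀ U : Set X, IsOpen U → U.Nonempty → 0 < μ U)
variable (hbdd : ∀ s : Set X, Bornology.IsBounded s → μ s < ⊤)

include hopen hbdd in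
lemma maxFun_sup_diff {g₁ g₂ : X → ℝ} (h₁ : Continuous g₁) (h₂ : Continuous g₂)
    {M₁ M₂ : ℝ} (hM₁ : ∀ t, |g₁ t| ≤ M₁) (hM₂ : ∀ t, |g₂ t| ≤ M₂)
    {D : ℝ} (hD : ∀ t, |g₁ t - g₂ t| ≤ D) (x : X) :
    |maxFun μ g₁ x - maxFun μ g₂ x| ≤ D := by
  have key : ∀ (u v : X → ℝ), Continuous u → Continuous v → (∀ t, |u t| ≤ M₁ + M₂) →
      (∀ t, |v t| ≤ M₁ + M₂) → (∀ t, |u t - v t| ≤ D) →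
      maxFun μ u x ≤ maxFun μ v x + D := by
    intro u v hu hv hMu hMv huv
    have : Nonempty {r : ℝ // 0 < r} := ⟨⟨1, one_pos⟩⟩
    refine ciSup_le fun s => ?_
    have havg : ⨍ t in ball x s.1, |u t| ∂μ ≤ ⨍ t in ball x s.1, |v t| ∂μ + D := by
      have hT : μ (ball x s.1) ≠ ⊤ := ball_ne_top hbdd x s.1
      have hb : 0 < (μ (ball x s.1)).toReal :=
        ENNReal.toReal_pos (ball_ne_zero hopen x s.2) hT
      have hint : ∫ t in ball x s.1, |u t| ∂μ ≤
          ∫ t in ball x s.1, (|v t| + D) ∂μ := by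
        refine setIntegral_mono_on (MaxAux.intOn hu hMu hT) ?_ measurableSet_ball ?_
        · exact (MaxAux.intOn hv hMv hT).add (integrableOn_const hT)
        · intro t _
          have := abs_sub_abs_le_abs_sub (u t) (v t)
          have := huv t
          linarith
      have hadd : ∫ t in ball x s.1, (|v t| + D) ∂μ =
          ∫ t in ball x s.1, |v t| ∂μ + D * (μ (ball x s.1)).toReal := by
        rw [integral_add (MaxAux.intOn hv hMv hT) (integrableOn_const hT),
          setIntegral_const, smul_eq_mul, measureReal_def]
        ring
      have bound : ∫ t in ball x s.1, |u t| ∂μ ≤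
          ∫ t in ball x s.1, |v t| ∂μ + D * (μ (ball x s.1)).toReal := hadd ▸ hint
      rw [setAverage_eq, setAverage_eq, smul_eq_mul, smul_eq_mul]
      rw [measureReal_def, inv_mul_le_iff₀ hb]
      have hexp : (μ (ball x s.1)).toReal * ((μ (ball x s.1)).toReal⁻¹ *
          (∫ t in ball x s.1, |v t| ∂μ) + D) =
          (∫ t in ball x s.1, |v t| ∂μ) + D * (μ (ball x s.1)).toReal := by
        field_simp
      rw [hexp]
      exact bound
    exact le_trans havg (by
      have := avg_le_maxFun hopen hbdd hv hMv x s.2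
      linarith)
  have h1 : ∀ t, |g₁ t| ≤ M₁ + M₂ := fun t => le_trans (hM₁ t) (by linarith [abs_nonneg (g₂ t), hM₂ t])
  have h2 : ∀ t, |g₂ t| ≤ M₁ + M₂ := fun t => le_trans (hM₂ t) (by linarith [abs_nonneg (g₁ t), hM₁ t])
  have h21 : ∀ t, |g₂ t - g₁ t| ≤ D := fun t => by rw [abs_sub_comm]; exact hD t
  have k1 := key g₁ g₂ h₁ h₂ h1 h2 hD
  have k2 := key g₂ g₁ h₂ h₁ h2 h1 h21
  rw [abs_sub_le_iff]; constructor <;> linarith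

end SupDiff
section Pair

lemma pair_bound {Δ d t C' a b θb : ℝ} (hd : 0 < d) (hΔ : 0 ≤ Δ) (hC : 1 ≤ C')
    (hΔ1 : Δ ≤ C' * d ^ a) (hΔ2 : Δ ≤ t) (ha : 0 < a) (hb : 0 ≤ b) (hba : b ≤ a)
    (hθ : b / a ≤ θb) :
    Δ / d ^ b ≤ C' * (t ^ (1 - θb) + t) := by
  have ht0 : 0 ≤ t := le_trans hΔ hΔ2
  have hRHS : 0 ≤ C' * (t ^ (1 - θb) + t) := by
    have := Real.rpow_nonneg ht0 (1 - θb)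
    nlinarith
  rcases eq_or_lt_of_le hΔ with hΔ0 | hΔp
  · rw [← hΔ0, zero_div]; exact hRHS
  rcases le_or_gt 1 d with hd1 | hd1
  · -- d ≥ 1
    have hdb : (1:ℝ) ≤ d ^ b := by
      calc (1:ℝ) = 1 ^ b := (Real.one_rpow _).symm
        _ ≤ d ^ b := Real.rpow_le_rpow zero_le_one hd1 hb
    have : Δ / d ^ b ≤ Δ := div_le_self hΔ hdb
    have ht1 : t ≤ C' * (t ^ (1 - θb) + t) := by
      have h0 : 0 ≤ t ^ (1 - θb) := Real.rpow_nonneg ht0 _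
      nlinarith
    linarith
  · -- d < 1
    set θ := b / a with hθdef
    have hθ0 : 0 ≤ θ := div_nonneg hb ha.le
    have hθ1 : θ ≤ 1 := by rw [hθdef, div_le_one ha]; exact hba
    have hda : 0 < d ^ a := Real.rpow_pos_of_pos hd _
    have hdb : d ^ b = (d ^ a) ^ θ := by
      rw [← Real.rpow_mul hd.le, hθdef, mul_div_cancel₀ b ha.ne']
    have ht : 0 < t := lt_of_lt_of_le hΔp hΔ2
    have hsplit : Δ / d ^ b = (Δ / d ^ a) ^ θ * Δ ^ (1 - θ) := by
      rw [hdb, Real.div_rpow hΔ hda.le]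
      rw [div_mul_eq_mul_div]
      congr 1
      rw [← Real.rpow_add hΔp, (show θ + (1 - θ) = 1 by ring), Real.rpow_one]
    rw [hsplit]
    have h1 : (Δ / d ^ a) ^ θ ≤ C' := by
      have hq : Δ / d ^ a ≤ C' := by rw [div_le_iff₀ hda]; exact hΔ1
      calc (Δ / d ^ a) ^ θ ≤ C' ^ θ :=
            Real.rpow_le_rpow (div_nonneg hΔ hda.le) hq hθ0
        _ ≤ C' ^ (1:ℝ) := Real.rpow_le_rpow_of_exponent_le hC hθ1
        _ = C' := Real.rpow_one _
    have h2 : Δ ^ (1 - θ) ≤ t ^ (1 - θ) :=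
      Real.rpow_le_rpow hΔ hΔ2 (by linarith)
    have h3 : t ^ (1 - θ) ≤ t ^ (1 - θb) + t := by
      rcases le_or_gt t 1 with ht1 | ht1
      · have := Real.rpow_le_rpow_of_exponent_ge ht ht1 (by linarith : 1 - θb ≤ 1 - θ)
        linarith
      · have : t ^ (1 - θ) ≤ t ^ (1:ℝ) :=
          Real.rpow_le_rpow_of_exponent_le ht1.le (by linarith)
        rw [Real.rpow_one] at this
        have h4 : 0 ≤ t ^ (1 - θb) := Real.rpow_nonneg ht0 _
        linarith
    calc (Δ / d ^ a) ^ θ * Δ ^ (1 - θ) ≤ C' * (t ^ (1 - θb) + t) := by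
          apply mul_le_mul h1 (le_trans h2 h3) (Real.rpow_nonneg hΔ _) (by linarith)

end Pair
/-- Continuity of the maximal operator from `C^{0,α(·)}(X)` to
`C^{0,β(·)}(X)` when `sup β/α < 1`. -/
theorem maximal_continuous_between_holder
    {X : Type*} [MetricSpace X] [MeasurableSpace X] [BorelSpace X] (μ : Measure X)
    (hopen : ∀ U : Set X, IsOpen U → U.Nonempty → 0 < μ U)
    (hbdd : ∀ s : Set X, Bornology.IsBounded s → μ s < ⊤)
    (δ : ℝ) (hδ : δ ∈ Set.Ioc (0 : ℝ) 1) (K : ℝ) (hK : 1 ≤ K)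
    (hann : ∀ (x : X) (r ε : ℝ), 0 < r → 0 < ε → ε < 1 →
      μ (ball x r \ ball x (r * (1 - ε))) ≤ ENNReal.ofReal (K * ε ^ δ) * μ (ball x r))
    (α β : X → ℝ) (hα : ∀ x, α x ∈ Set.Ioc (0 : ℝ) 1) (hβ : ∀ x, β x ∈ Set.Icc (0 : ℝ) 1)
    (hβα : ∀ x, β x ≤ α x) (hαδ : ∀ x, α x ≤ δ)
    (hθ : (⨆ x, β x / α x) < 1)
    (f : X → ℝ) (fn : ℕ → X → ℝ)
    (hf : MemVarHolder α f) (hfn : ∀ n, MemVarHolder α (fn n))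
    (hconv : Tendsto (fun n => holderNorm α (fun x => fn n x - f x)) atTop (nhds 0)) :
    Tendsto (fun n => holderNorm β (fun x => maxFun μ (fn n) x - maxFun μ f x))
      atTop (nhds 0) := by
  rcases isEmpty_or_nonempty X with hX | hX
  · -- X empty : all norms are zero
    have hzero : ∀ g : X → ℝ, holderNorm β g = 0 := by
      intro g
      have h1 : IsEmpty {p : X × X // p.1 ≠ p.2} := by
        constructor; rintro ⟨⟨x, _⟩, _⟩; exact hX.false x
      unfold holderNorm holderSemi
      rw [Real.iSup_of_isEmpty, Real.iSup_of_isEmpty, add_zero]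
    simp only [hzero]
    exact tendsto_const_nhds
  -- X nonempty
  set εs : ℕ → ℝ := fun n => holderNorm α (fun x => fn n x - f x) with hεsdef
  have hε0 : ∀ n, 0 ≤ εs n := fun n =>
    add_nonneg (Real.iSup_nonneg fun x => abs_nonneg _) (holderSemi_nonneg _)
  obtain ⟨E, hE⟩ := hconv.bddAbove_range
  have hEb : ∀ n, εs n ≤ E := fun n => hE ⟨n, rfl⟩
  set Mf := ⨆ t, |f t| with hMfdef
  have hMf : ∀ t, |f t| ≤ Mf := fun t => le_ciSup hf.2.1 t
  set Hf := holderSemi α f with hHfdef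
  have hHf0 : 0 ≤ Hf := holderSemi_nonneg f
  have hK0 : (0:ℝ) ≤ K := by linarith
  -- pointwise bound on fn n - f
  have hptd : ∀ n t, |fn n t - f t| ≤ εs n := by
    intro n t
    have hMn : ∀ u, |fn n u| ≤ ⨆ u, |fn n u| := fun u => le_ciSup (hfn n).2.1 u
    have hbd : BddAbove (Set.range fun x => |fn n x - f x|) := by
      refine MaxAux.bddAbove_of_forall (c := (⨆ u, |fn n u|) + Mf) fun x => ?_
      calc |fn n x - f x| ≤ |fn n x| + |f x| := abs_sub _ _
        _ ≤ (⨆ u, |fn n u|) + Mf := add_le_add (hMn x) (hMf x)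
    calc |fn n t - f t| ≤ ⨆ x, |fn n x - f x| := le_ciSup hbd t
      _ ≤ εs n := le_add_of_nonneg_right (holderSemi_nonneg _)
  -- sup bound on the difference of maximal functions
  have hsup : ∀ n x, |maxFun μ (fn n) x - maxFun μ f x| ≤ εs n := by
    intro n x
    exact maxFun_sup_diff hopen hbdd (hfn n).1 hf.1
      (fun t => le_ciSup (hfn n).2.1 t) hMf (hptd n) x
  -- uniform bound on Hölder data of fn n
  have hnm : ∀ n, holderSemi α (fn n) + (⨆ t, |fn n t|) ≤ Hf + Mf + 2*E := by
    intro n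
    have hMn : (⨆ t, |fn n t|) ≤ Mf + εs n := by
      refine ciSup_le fun t => ?_
      have h1 : |fn n t| - |f t| ≤ |fn n t - f t| := abs_sub_abs_le_abs_sub _ _
      linarith [hMf t, hptd n t]
    have hsemidiff : holderSemi α (fn n) ≤ Hf + εs n := by
      rcases isEmpty_or_nonempty {p : X × X // p.1 ≠ p.2} with hP | hP
      · unfold holderSemi
        rw [Real.iSup_of_isEmpty]
        have := hε0 n
        linarith
      · have hbdddiff : BddAbove (Set.range fun p : {p : X × X // p.1 ≠ p.2} =>
            |(fn n p.1.1 - f p.1.1) - (fn n p.1.2 - f p.1.2)| /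
              dist p.1.1 p.1.2 ^ α p.1.1) := by
          refine MaxAux.bddAbove_of_forall
            (c := holderSemi α (fn n) + Hf) fun p => ?_
          have hdp : 0 < dist p.1.1 p.1.2 ^ α p.1.1 :=
            Real.rpow_pos_of_pos (dist_pos.2 p.2) _
          have h1 : |(fn n p.1.1 - f p.1.1) - (fn n p.1.2 - f p.1.2)| ≤
              |fn n p.1.1 - fn n p.1.2| + |f p.1.1 - f p.1.2| := by
            have : (fn n p.1.1 - f p.1.1) - (fn n p.1.2 - f p.1.2) =
                (fn n p.1.1 - fn n p.1.2) - (f p.1.1 - f p.1.2) := by ring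
            rw [this]; exact abs_sub _ _
          have h2 : |fn n p.1.1 - fn n p.1.2| / dist p.1.1 p.1.2 ^ α p.1.1 ≤
              holderSemi α (fn n) := le_ciSup (hfn n).2.2 p
          have h3 : |f p.1.1 - f p.1.2| / dist p.1.1 p.1.2 ^ α p.1.1 ≤ Hf :=
            le_ciSup hf.2.2 p
          rw [div_le_iff₀ hdp] at h2 h3 ⊢
          nlinarith [hdp, h1, h2, h3]
        refine ciSup_le fun p => ?_
        have hdp : 0 < dist p.1.1 p.1.2 ^ α p.1.1 :=
          Real.rpow_pos_of_pos (dist_pos.2 p.2) _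
        have h1 : |fn n p.1.1 - fn n p.1.2| ≤
            |f p.1.1 - f p.1.2| + |(fn n p.1.1 - f p.1.1) - (fn n p.1.2 - f p.1.2)| := by
          have he : fn n p.1.1 - fn n p.1.2 =
              (f p.1.1 - f p.1.2) + ((fn n p.1.1 - f p.1.1) - (fn n p.1.2 - f p.1.2)) := by ring
          rw [he]; exact abs_add_le _ _
        have h3 : |f p.1.1 - f p.1.2| / dist p.1.1 p.1.2 ^ α p.1.1 ≤ Hf := le_ciSup hf.2.2 p
        have h4 : |(fn n p.1.1 - f p.1.1) - (fn n p.1.2 - f p.1.2)| /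
            dist p.1.1 p.1.2 ^ α p.1.1 ≤ holderSemi α (fun x => fn n x - f x) :=
          le_ciSup hbdddiff p
        have h5 : holderSemi α (fun x => fn n x - f x) ≤ εs n :=
          le_add_of_nonneg_left (Real.iSup_nonneg fun x => abs_nonneg _)
        rw [div_le_iff₀ hdp]
        rw [div_le_iff₀ hdp] at h3 h4
        calc |fn n p.1.1 - fn n p.1.2| ≤
            |f p.1.1 - f p.1.2| + |(fn n p.1.1 - f p.1.1) - (fn n p.1.2 - f p.1.2)| := h1
          _ ≤ Hf * dist p.1.1 p.1.2 ^ α p.1.1 + εs n * dist p.1.1 p.1.2 ^ α p.1.1 := by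
              have h6 : holderSemi α (fun x => fn n x - f x) * dist p.1.1 p.1.2 ^ α p.1.1 ≤
                  εs n * dist p.1.1 p.1.2 ^ α p.1.1 :=
                mul_le_mul_of_nonneg_right h5 hdp.le
              linarith
          _ = (Hf + εs n) * dist p.1.1 p.1.2 ^ α p.1.1 := by ring
    have := hEb n
    have := hε0 n
    linarith
  -- uniform Hölder constant for the differences of maximal functions
  set C : ℝ := 12 * K * (Hf + Mf + 2*E) + 12 * K * (Hf + Mf) with hCdef
  set C' : ℝ := max C 1 with hC'def
  have hC'1 : (1:ℝ) ≤ C' := le_max_right _ _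
  have hCC' : C ≤ C' := le_max_left _ _
  have hlip : ∀ n (x y : X), x ≠ y →
      |(maxFun μ (fn n) x - maxFun μ f x) - (maxFun μ (fn n) y - maxFun μ f y)| ≤
        C' * dist x y ^ α x := by
    intro n x y hne
    have l1 := maxFun_lip hopen hbdd hδ hK hann hα hαδ (hfn n) hne
    have l2 := maxFun_lip hopen hbdd hδ hK hann hα hαδ hf hne
    have hdp : (0:ℝ) ≤ dist x y ^ α x := Real.rpow_nonneg dist_nonneg _
    have h1 : |(maxFun μ (fn n) x - maxFun μ f x) - (maxFun μ (fn n) y - maxFun μ f y)| ≤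
        |maxFun μ (fn n) x - maxFun μ (fn n) y| + |maxFun μ f x - maxFun μ f y| := by
      have he : (maxFun μ (fn n) x - maxFun μ f x) - (maxFun μ (fn n) y - maxFun μ f y) =
          (maxFun μ (fn n) x - maxFun μ (fn n) y) - (maxFun μ f x - maxFun μ f y) := by ring
      rw [he]; exact abs_sub _ _
    have h2 : 12 * K * (holderSemi α (fn n) + ⨆ t, |fn n t|) * dist x y ^ α x ≤
        12 * K * (Hf + Mf + 2*E) * dist x y ^ α x := by
      refine mul_le_mul_of_nonneg_right ?_ hdp
      have := hnm n
      nlinarith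
    calc |(maxFun μ (fn n) x - maxFun μ f x) - (maxFun μ (fn n) y - maxFun μ f y)|
        ≤ |maxFun μ (fn n) x - maxFun μ (fn n) y| + |maxFun μ f x - maxFun μ f y| := h1
      _ ≤ 12 * K * (Hf + Mf + 2*E) * dist x y ^ α x +
          12 * K * (Hf + Mf) * dist x y ^ α x := by
          have := l1.trans h2
          linarith [l2, this]
      _ = C * dist x y ^ α x := by rw [hCdef]; ring
      _ ≤ C' * dist x y ^ α x := mul_le_mul_of_nonneg_right hCC' hdp
  -- θ bound
  set θb := ⨆ x, β x / α x with hθbdef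
  have hθbx : ∀ x, β x / α x ≤ θb := by
    intro x
    refine le_ciSup (f := fun x => β x / α x) (MaxAux.bddAbove_of_forall (c := 1) fun y => ?_) x
    rw [div_le_one (hα y).1]
    exact hβα y
  -- the final bound
  have hbound : ∀ n, holderNorm β (fun x => maxFun μ (fn n) x - maxFun μ f x) ≤
      εs n + C' * ((2 * εs n) ^ (1 - θb) + 2 * εs n) := by
    intro n
    have hpart1 : (⨆ x, |maxFun μ (fn n) x - maxFun μ f x|) ≤ εs n :=
      ciSup_le fun x => hsup n x
    have hpart2 : holderSemi β (fun x => maxFun μ (fn n) x - maxFun μ f x) ≤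
        C' * ((2 * εs n) ^ (1 - θb) + 2 * εs n) := by
      rcases isEmpty_or_nonempty {p : X × X // p.1 ≠ p.2} with hP | hP
      · unfold holderSemi
        rw [Real.iSup_of_isEmpty]
        have h0 : 0 ≤ (2 * εs n) ^ (1 - θb) :=
          Real.rpow_nonneg (by linarith [hε0 n]) _
        nlinarith [hε0 n]
      · refine ciSup_le fun p => ?_
        obtain ⟨⟨x, y⟩, hne⟩ := p
        simp only
        refine pair_bound (dist_pos.2 hne) (abs_nonneg _) hC'1 (hlip n x y hne) ?_
          (hα x).1 (hβ x).1 (hβα x) (hθbx x)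
        have h1 := hsup n x
        have h2 := hsup n y
        have h3 : |(maxFun μ (fn n) x - maxFun μ f x) - (maxFun μ (fn n) y - maxFun μ f y)| ≤
            |maxFun μ (fn n) x - maxFun μ f x| + |maxFun μ (fn n) y - maxFun μ f y| :=
          abs_sub _ _
        linarith
    unfold holderNorm
    exact add_le_add hpart1 hpart2
  -- limit of the bound
  have hθb1 : (0:ℝ) < 1 - θb := by rw [hθbdef]; linarith [hθ]
  have t1 : Tendsto (fun n => 2 * εs n) atTop (nhds 0) := by
    simpa using hconv.const_mul 2
  have t2 : Tendsto (fun n => (2 * εs n) ^ (1 - θb)) atTop (nhds 0) := by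
    have hc := (Real.continuousAt_rpow_const 0 (1 - θb) (Or.inr hθb1.le)).tendsto
    have := hc.comp t1
    rwa [Function.comp_def, Real.zero_rpow (by linarith : (1:ℝ) - θb ≠ 0)] at this
  have tb : Tendsto (fun n => εs n + C' * ((2 * εs n) ^ (1 - θb) + 2 * εs n)) atTop (nhds 0) := by
    have := hconv.add ((t2.add t1).const_mul C')
    simpa using this
  refine squeeze_zero (fun n =>
    add_nonneg (Real.iSup_nonneg fun x => abs_nonneg _) (holderSemi_nonneg _)) hbound tb
end

section
/- There exist functions $f\in C^{0,1}(\mathbb{R})$ and a sequence $(f_n)\subset C^{0,1}(\mathbb{R})$ such that $\|f_n-f\|_{C^{0,1}(\mathbb{R})}\to 0$ but $\|Mf_n-Mf\|_{C^{0,1}(\mathbb{R})}\not\to 0$; i.e., the Hardy–Littlewood maximal operator is discontinuous on $C^{0,1}(\mathbb{R})$. -/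
open MeasureTheory Metric Set Filter

noncomputable def maxFunR (f : ℝ → ℝ) (x : ℝ) : ℝ :=
  ⨆ r : {r : ℝ // 0 < r}, (1 / (2 * r.1)) * ∫ t in x - r.1..x + r.1, |f t|

noncomputable def cl (t : ℝ) : ℝ := max (-1) (min 1 t)

lemma cl_cont : Continuous cl := continuous_const.max (continuous_const.min continuous_id)

lemma cl_of_ge {t : ℝ} (h : 1 ≤ t) : cl t = 1 := by
  unfold cl; rw [min_eq_left h]; exact max_eq_right (by norm_num)

lemma cl_of_le {t : ℝ} (h : t ≤ -1) : cl t = -1 := by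
  unfold cl; rw [min_eq_right (by linarith), max_eq_left (by linarith)]

lemma cl_of_mem {t : ℝ} (h1 : -1 ≤ t) (h2 : t ≤ 1) : cl t = t := by
  unfold cl; rw [min_eq_right h2, max_eq_right h1]

lemma abs_cl_le_one (t : ℝ) : |cl t| ≤ 1 := by
  rw [abs_le]; exact ⟨le_max_left _ _, max_le (by norm_num) (min_le_left _ _)⟩

lemma cl_lip (a b : ℝ) : |cl a - cl b| ≤ |a - b| := by
  unfold cl
  calc |max (-1) (min 1 a) - max (-1) (min 1 b)| ≤ |min 1 a - min 1 b| := by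
        rw [max_comm (-1) _, max_comm (-1) _]; exact abs_max_sub_max_le_abs _ _ _
    _ ≤ max |(1:ℝ) - 1| |a - b| := abs_min_sub_min_le_max 1 a 1 b
    _ = |a - b| := by rw [sub_self, abs_zero]; exact max_eq_right (abs_nonneg _)

/-- the averaging functional -/
noncomputable def av (f : ℝ → ℝ) (x r : ℝ) : ℝ :=
  (1 / (2 * r)) * ∫ t in x - r..x + r, |f t|

lemma maxFunR_eq (f : ℝ → ℝ) (x : ℝ) :
    maxFunR f x = ⨆ r : {r : ℝ // 0 < r}, av f x r.1 := rfl

lemma av_nonneg {f : ℝ → ℝ} {x r : ℝ} (hr : 0 < r) : 0 ≤ av f x r := by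
  apply mul_nonneg (by positivity)
  exact intervalIntegral.integral_nonneg (by linarith) (fun u _ => abs_nonneg _)

lemma av_le {f : ℝ → ℝ} (hf : Continuous f) {C : ℝ} (hC : ∀ t, |f t| ≤ C)
    {x r : ℝ} (hr : 0 < r) : av f x r ≤ C := by
  have h1 : ∫ t in x - r..x + r, |f t| ≤ ∫ t in x - r..x + r, C := by
    apply intervalIntegral.integral_mono_on (by linarith)
      ((hf.abs).intervalIntegrable _ _) (intervalIntegrable_const)
      (fun t _ => hC t)
  rw [intervalIntegral.integral_const, smul_eq_mul] at h1
  calc av f x r ≤ (1 / (2 * r)) * ((x + r - (x - r)) * C) := by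
        unfold av; apply mul_le_mul_of_nonneg_left h1 (by positivity)
    _ = C := by field_simp; ring

lemma bddAbove_av {f : ℝ → ℝ} (hf : Continuous f) {C : ℝ} (hC : ∀ t, |f t| ≤ C) (x : ℝ) :
    BddAbove (Set.range fun r : {r : ℝ // 0 < r} => av f x r.1) := by
  refine ⟨C, ?_⟩
  rintro y hy
  obtain ⟨⟨r, hr⟩, rfl⟩ := hy
  exact av_le hf hC hr

lemma maxFunR_le {f : ℝ → ℝ} (hf : Continuous f) {C : ℝ} (hC : ∀ t, |f t| ≤ C)
    (hC0 : 0 ≤ C) (x : ℝ) : maxFunR f x ≤ C := by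
  rw [maxFunR_eq]
  haveI : Nonempty {r : ℝ // 0 < r} := ⟨⟨1, one_pos⟩⟩
  exact ciSup_le (fun r => av_le hf hC r.2)

lemma le_maxFunR {f : ℝ → ℝ} (hf : Continuous f) {C : ℝ} (hC : ∀ t, |f t| ≤ C)
    (x : ℝ) {r : ℝ} (hr : 0 < r) : av f x r ≤ maxFunR f x := by
  rw [maxFunR_eq]
  exact le_ciSup (bddAbove_av hf hC x) ⟨r, hr⟩

lemma integral_linear (a b h : ℝ) :
    ∫ t in a..b, (t + h) = (b ^ 2 - a ^ 2) / 2 + (b - a) * h := by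
  rw [intervalIntegral.integral_add (intervalIntegral.intervalIntegrable_id)
    (intervalIntegrable_const), integral_id, intervalIntegral.integral_const, smul_eq_mul]

lemma abs_cl_int (a b : ℝ) : IntervalIntegrable (fun t => |cl t|) volume a b :=
  (cl_cont.abs).intervalIntegrable a b

/-- the maximal function of `cl` is identically 1 -/
lemma maxFunR_cl (x : ℝ) : maxFunR cl x = 1 := by
  refine le_antisymm (maxFunR_le cl_cont abs_cl_le_one one_pos.le x) ?_
  apply le_of_forall_pos_le_add
  intro ε hε
  set r : ℝ := max (|x| + 1) (2 / ε) with hrdef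
  have hr1 : |x| + 1 ≤ r := le_max_left _ _
  have hr2 : 2 / ε ≤ r := le_max_right _ _
  have hr : 0 < r := lt_of_lt_of_le (by positivity) hr1
  have hx1 : x - r ≤ -1 := by
    have := le_abs_self x; linarith
  have hx2 : 1 ≤ x + r := by
    have := neg_abs_le x; linarith
  -- split the integral
  have hsplit : ∫ t in x - r..x + r, |cl t| =
      (∫ t in x - r..(-1), |cl t|) + (∫ t in (-1)..1, |cl t|) + (∫ t in (1:ℝ)..x + r, |cl t|) := by
    rw [intervalIntegral.integral_add_adjacent_intervals (abs_cl_int _ _) (abs_cl_int _ _),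
      intervalIntegral.integral_add_adjacent_intervals (abs_cl_int _ _) (abs_cl_int _ _)]
  have hp1 : (∫ t in x - r..(-1), |cl t|) = (-1 - (x - r)) := by
    rw [intervalIntegral.integral_congr (g := fun _ => (1:ℝ)) ?_,
      intervalIntegral.integral_const, smul_eq_mul, mul_one]
    intro t ht
    rw [Set.uIcc_of_le hx1] at ht
    show |cl t| = 1
    rw [cl_of_le ht.2, abs_neg, abs_one]
  have hp2 : 0 ≤ ∫ t in (-1:ℝ)..1, |cl t| :=
    intervalIntegral.integral_nonneg (by norm_num) (fun u _ => abs_nonneg _)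
  have hp3 : (∫ t in (1:ℝ)..x + r, |cl t|) = (x + r - 1) := by
    rw [intervalIntegral.integral_congr (g := fun _ => (1:ℝ)) ?_,
      intervalIntegral.integral_const, smul_eq_mul, mul_one]
    intro t ht
    rw [Set.uIcc_of_le hx2] at ht
    show |cl t| = 1
    rw [cl_of_ge ht.1, abs_one]
  have hint : 2 * r - 2 ≤ ∫ t in x - r..x + r, |cl t| := by
    rw [hsplit, hp1, hp3]; linarith
  have hav : 1 - 1 / r ≤ av cl x r := by
    have : (1 / (2 * r)) * (2 * r - 2) ≤ av cl x r := by
      unfold av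
      exact mul_le_mul_of_nonneg_left hint (by positivity)
    have heq : (1 / (2 * r)) * (2 * r - 2) = 1 - 1 / r := by field_simp
    linarith [heq ▸ this]
  have hinv : 1 / r ≤ ε := by
    rw [div_le_iff₀ hr]
    have h2 : 2 / ε * ε ≤ r * ε := mul_le_mul_of_nonneg_right hr2 hε.le
    rw [div_mul_cancel₀ _ (ne_of_gt hε)] at h2
    linarith [mul_comm r ε]
  calc (1:ℝ) ≤ av cl x r + ε := by linarith
    _ ≤ maxFunR cl x + ε := by
        have := le_maxFunR cl_cont abs_cl_le_one x hr
        linarith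

section Fn
variable {h : ℝ}

lemma fnh_cont : Continuous (fun t => cl t + h) := cl_cont.add continuous_const

lemma abs_fnh_le (h0 : 0 ≤ h) (t : ℝ) : |cl t + h| ≤ 1 + h := by
  calc |cl t + h| ≤ |cl t| + |h| := abs_add_le _ _
    _ ≤ 1 + h := by rw [abs_of_nonneg h0]; linarith [abs_cl_le_one t]

lemma abs_fnh_int (a b : ℝ) : IntervalIntegrable (fun t => |cl t + h|) volume a b :=
  (fnh_cont.abs).intervalIntegrable a b

lemma abs_fnh_lip (a b : ℝ) : |(|cl a + h|) - (|cl b + h|)| ≤ |a - b| := by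
  calc |(|cl a + h|) - (|cl b + h|)| ≤ |(cl a + h) - (cl b + h)| := abs_abs_sub_abs_le_abs_sub _ _
    _ = |cl a - cl b| := by ring_nf
    _ ≤ |a - b| := cl_lip a b

lemma maxFunR_fnh_le_add (h0 : 0 ≤ h) (x y : ℝ) :
    maxFunR (fun t => cl t + h) x ≤ maxFunR (fun t => cl t + h) y + |x - y| := by
  haveI : Nonempty {r : ℝ // 0 < r} := ⟨⟨1, one_pos⟩⟩
  rw [maxFunR_eq]
  apply ciSup_le
  rintro ⟨r, hr⟩
  set d := x - y with hd
  have e1 : y - r + d = x - r := by ring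
  have e2 : y + r + d = x + r := by ring
  have hcv : ∫ t in x - r..x + r, |cl t + h| = ∫ t in y - r..y + r, |cl (t + d) + h| := by
    rw [intervalIntegral.integral_comp_add_right (fun t => |cl t + h|) d, e1, e2]
  have hmono : ∫ t in y - r..y + r, |cl (t + d) + h| ≤
      ∫ t in y - r..y + r, (|cl t + h| + |d|) := by
    apply intervalIntegral.integral_mono_on (by linarith)
      ((fnh_cont.comp (continuous_id.add continuous_const)).abs.intervalIntegrable _ _)
      ((fnh_cont.abs.add continuous_const).intervalIntegrable _ _)
    intro t _
    have := abs_fnh_lip (h := h) (t + d) t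
    have h2 : |t + d - t| = |d| := by ring_nf
    rw [h2] at this
    have h3 := abs_le.mp this
    show |cl (t + d) + h| ≤ |cl t + h| + |d|
    linarith [h3.2]
  have hadd : ∫ t in y - r..y + r, (|cl t + h| + |d|) =
      (∫ t in y - r..y + r, |cl t + h|) + 2 * r * |d| := by
    rw [intervalIntegral.integral_add (abs_fnh_int _ _) intervalIntegrable_const,
      intervalIntegral.integral_const, smul_eq_mul]
    ring
  have hav : av (fun t => cl t + h) x r ≤ av (fun t => cl t + h) y r + |d| := by
    unfold av
    rw [hcv]
    calc (1 / (2 * r)) * ∫ t in y - r..y + r, |cl (t + d) + h|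
        ≤ (1 / (2 * r)) * ((∫ t in y - r..y + r, |cl t + h|) + 2 * r * |d|) := by
          apply mul_le_mul_of_nonneg_left _ (by positivity)
          rw [← hadd]; exact hmono
      _ = (1 / (2 * r)) * (∫ t in y - r..y + r, |cl t + h|) + |d| := by field_simp
  calc av (fun t => cl t + h) x r ≤ av (fun t => cl t + h) y r + |d| := hav
    _ ≤ maxFunR (fun t => cl t + h) y + |x - y| := by
        have := le_maxFunR fnh_cont (abs_fnh_le h0) y hr
        linarith

lemma maxFunR_fnh_lip (h0 : 0 ≤ h) (x y : ℝ) :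
    |maxFunR (fun t => cl t + h) x - maxFunR (fun t => cl t + h) y| ≤ |x - y| := by
  rw [abs_sub_le_iff]
  constructor
  · linarith [maxFunR_fnh_le_add h0 x y]
  · rw [abs_sub_comm] ; linarith [maxFunR_fnh_le_add h0 y x]

lemma maxFunR_fnh_at_one (h0 : 0 ≤ h) (hh : h ≤ 1 / 2) :
    1 + h ≤ maxFunR (fun t => cl t + h) 1 := by
  apply le_of_forall_pos_le_add
  intro ε hε
  set r : ℝ := min 1 ε with hrdef
  have hr : 0 < r := lt_min one_pos hε
  have hr1 : r ≤ 1 := min_le_left _ _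
  have hrε : r ≤ ε := min_le_right _ _
  have hlow : ∀ t ∈ Set.Icc (1 - r) (1 + r), (1 + h - r) ≤ |cl t + h| := by
    intro t ht
    have hcl : 1 - r ≤ cl t := by
      have h1 : (1 : ℝ) - r ≤ min 1 t := le_min (by linarith) ht.1
      calc (1:ℝ) - r ≤ min 1 t := h1
        _ ≤ cl t := le_max_right _ _
    have hnn : 0 ≤ cl t + h := by linarith
    rw [abs_of_nonneg hnn]; linarith
  have hint : (1 + h - r) * (2 * r) ≤ ∫ t in 1 - r..1 + r, |cl t + h| := by
    have := intervalIntegral.integral_mono_on (by linarith : (1:ℝ) - r ≤ 1 + r)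
      intervalIntegrable_const (abs_fnh_int _ _) hlow
    rw [intervalIntegral.integral_const, smul_eq_mul] at this
    calc (1 + h - r) * (2 * r) = (1 + r - (1 - r)) * (1 + h - r) := by ring
      _ ≤ _ := this
  have hav : 1 + h - r ≤ av (fun t => cl t + h) 1 r := by
    unfold av
    calc 1 + h - r = (1 / (2 * r)) * ((1 + h - r) * (2 * r)) := by field_simp
      _ ≤ _ := mul_le_mul_of_nonneg_left hint (by positivity)
  calc 1 + h ≤ av (fun t => cl t + h) 1 r + ε := by linarith
    _ ≤ maxFunR (fun t => cl t + h) 1 + ε := by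
        linarith [le_maxFunR fnh_cont (abs_fnh_le h0) 1 hr]

end Fn

section Key
variable {h : ℝ}

lemma fnh_eq_of (h0 : 0 < h) (hh : h ≤ 1/2) {t : ℝ} (h1 : -h ≤ t) (h2 : t ≤ 1) :
    |cl t + h| = t + h := by
  rw [cl_of_mem (by linarith) h2, abs_of_nonneg (by linarith)]

lemma fnh_le_linear (h0 : 0 < h) (hh : h ≤ 1/2) {t : ℝ} (h1 : -h ≤ t) :
    |cl t + h| ≤ t + h := by
  rcases le_total t 1 with h2 | h2
  · rw [fnh_eq_of h0 hh h1 h2]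
  · rw [cl_of_ge h2, abs_of_nonneg (by linarith)]; linarith

lemma fnh_le_left (h0 : 0 < h) (hh : h ≤ 1/2) {t : ℝ} (h1 : t ≤ -h) :
    |cl t + h| ≤ 1 - h := by
  have hcl1 : -1 ≤ cl t := le_max_left _ _
  have hcl2 : cl t ≤ -h := by
    have : min 1 t ≤ -h := le_trans (min_le_right _ _) h1
    exact max_le (by linarith) this
  rw [abs_of_nonpos (by linarith)]; linarith

lemma fnh_eq_right (h0 : 0 < h) {t : ℝ} (h1 : 1 ≤ t) : |cl t + h| = 1 + h := by
  rw [cl_of_ge h1, abs_of_nonneg (by linarith)]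

lemma key_integral_le (h0 : 0 < h) (hh : h ≤ 1/2) {r : ℝ} (hr : 0 < r) :
    ∫ t in (1 - h) - r..(1 - h) + r, |cl t + h| ≤ 2 * r := by
  set x : ℝ := 1 - h with hx
  rcases le_total r h with hcase | hcase
  · -- small radius : interval inside [0,1], exact computation
    have hsub : ∀ t ∈ Set.uIcc (x - r) (x + r), |cl t + h| = t + h := by
      intro t ht
      rw [Set.uIcc_of_le (by linarith)] at ht
      exact fnh_eq_of h0 hh (by simp only [hx] at ht ⊢; linarith [ht.1])
        (by simp only [hx] at ht ⊢; linarith [ht.2])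
    rw [intervalIntegral.integral_congr hsub, integral_linear]
    simp only [hx]; nlinarith
  · rcases le_total r 1 with hcase2 | hcase2
    · -- medium radius : split at 1
      have hx1 : x - r ≤ 1 := by simp only [hx]; linarith
      have hx2 : (1:ℝ) ≤ x + r := by simp only [hx]; linarith
      have hsplit : ∫ t in x - r..x + r, |cl t + h| =
          (∫ t in x - r..1, |cl t + h|) + (∫ t in (1:ℝ)..x + r, |cl t + h|) :=
        (intervalIntegral.integral_add_adjacent_intervals (abs_fnh_int _ _) (abs_fnh_int _ _)).symm
      have hp1 : (∫ t in x - r..1, |cl t + h|) ≤ (1 ^ 2 - (x - r) ^ 2) / 2 + (1 - (x - r)) * h := by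
        rw [← integral_linear]
        apply intervalIntegral.integral_mono_on hx1 (abs_fnh_int _ _)
          ((continuous_id.add continuous_const).intervalIntegrable _ _)
        intro t ht
        exact fnh_le_linear h0 hh (by simp only [hx] at ht ⊢; linarith [ht.1])
      have hp2 : (∫ t in (1:ℝ)..x + r, |cl t + h|) = (x + r - 1) * (1 + h) := by
        rw [intervalIntegral.integral_congr (g := fun _ => (1 + h : ℝ)) ?_,
          intervalIntegral.integral_const, smul_eq_mul]
        intro t ht
        rw [Set.uIcc_of_le hx2] at ht
        exact fnh_eq_right h0 ht.1
      rw [hsplit, hp2]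
      simp only [hx] at hp1 ⊢
      nlinarith [sq_nonneg (r - h)]
    · -- large radius : split at -h and 1
      have hxa : x - r ≤ -h := by simp only [hx]; linarith
      have hxb : (-h : ℝ) ≤ 1 := by linarith
      have hx2 : (1:ℝ) ≤ x + r := by simp only [hx]; linarith
      have hsplit : ∫ t in x - r..x + r, |cl t + h| =
          ((∫ t in x - r..(-h), |cl t + h|) + (∫ t in (-h)..1, |cl t + h|))
            + (∫ t in (1:ℝ)..x + r, |cl t + h|) := by
        rw [intervalIntegral.integral_add_adjacent_intervals (abs_fnh_int _ _) (abs_fnh_int _ _),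
          intervalIntegral.integral_add_adjacent_intervals (abs_fnh_int _ _) (abs_fnh_int _ _)]
      have hp0 : (∫ t in x - r..(-h), |cl t + h|) ≤ (-h - (x - r)) * (1 - h) := by
        have := intervalIntegral.integral_mono_on hxa (abs_fnh_int _ _)
          (intervalIntegrable_const (c := 1 - h))
          (fun t ht => fnh_le_left h0 hh ht.2)
        rw [intervalIntegral.integral_const, smul_eq_mul] at this
        exact this
      have hp1 : (∫ t in (-h)..1, |cl t + h|) ≤ (1 ^ 2 - (-h) ^ 2) / 2 + (1 - (-h)) * h := by
        rw [← integral_linear]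
        apply intervalIntegral.integral_mono_on hxb (abs_fnh_int _ _)
          ((continuous_id.add continuous_const).intervalIntegrable _ _)
        intro t ht
        exact fnh_le_linear h0 hh ht.1
      have hp2 : (∫ t in (1:ℝ)..x + r, |cl t + h|) = (x + r - 1) * (1 + h) := by
        rw [intervalIntegral.integral_congr (g := fun _ => (1 + h : ℝ)) ?_,
          intervalIntegral.integral_const, smul_eq_mul]
        intro t ht
        rw [Set.uIcc_of_le hx2] at ht
        exact fnh_eq_right h0 ht.1
      rw [hsplit, hp2]
      simp only [hx] at hp0 hp1 ⊢
      nlinarith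
end Key

lemma maxFunR_fnh_at_x0 (h0 : 0 < h) (hh : h ≤ 1/2) :
    maxFunR (fun t => cl t + h) (1 - h) ≤ 1 := by
  haveI : Nonempty {r : ℝ // 0 < r} := ⟨⟨1, one_pos⟩⟩
  rw [maxFunR_eq]
  apply ciSup_le
  rintro ⟨r, hr⟩
  show av (fun t => cl t + h) (1 - h) r ≤ 1
  unfold av
  calc (1 / (2 * r)) * ∫ t in (1 - h) - r..(1 - h) + r, |cl t + h|
      ≤ (1 / (2 * r)) * (2 * r) := by
        exact mul_le_mul_of_nonneg_left (key_integral_le h0 hh hr) (by positivity)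
    _ = 1 := by field_simp

lemma lip_quot_bdd {f : ℝ → ℝ} (L : ℝ) (hf : ∀ a b : ℝ, |f a - f b| ≤ L * |a - b|) :
    BddAbove (Set.range fun p : {p : ℝ × ℝ // p.1 ≠ p.2} =>
      |f p.1.1 - f p.1.2| / dist p.1.1 p.1.2 ^ (fun _ : ℝ => (1:ℝ)) p.1.1) := by
  refine ⟨L, ?_⟩
  rintro y hy
  obtain ⟨p, rfl⟩ := hy
  simp only [Real.rpow_one]
  have hd : 0 < dist p.1.1 p.1.2 := dist_pos.2 p.2
  rw [div_le_iff₀ hd]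
  calc |f p.1.1 - f p.1.2| ≤ L * |p.1.1 - p.1.2| := hf _ _
    _ = L * dist p.1.1 p.1.2 := by rw [Real.dist_eq]

lemma memVarHolder_of_lip {f : ℝ → ℝ} (hc : Continuous f) (C : ℝ) (hC : ∀ t, |f t| ≤ C)
    (hlip : ∀ a b : ℝ, |f a - f b| ≤ 1 * |a - b|) :
    MemVarHolder (fun _ : ℝ => (1 : ℝ)) f := by
  refine ⟨hc, ⟨C, ?_⟩, lip_quot_bdd 1 hlip⟩
  rintro y hy
  obtain ⟨t, rfl⟩ := hy
  exact hC t

lemma holderNorm_const (c : ℝ) : holderNorm (fun _ : ℝ => (1:ℝ)) (fun _ : ℝ => c) = |c| := by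
  haveI : Nonempty {p : ℝ × ℝ // p.1 ≠ p.2} := ⟨⟨(0, 1), by norm_num⟩⟩
  unfold holderNorm holderSemi
  have h1 : (⨆ _ : ℝ, |c|) = |c| := ciSup_const
  have h2 : (⨆ p : {p : ℝ × ℝ // p.1 ≠ p.2},
      |c - c| / dist p.1.1 p.1.2 ^ (fun _ : ℝ => (1:ℝ)) p.1.1) = 0 := by
    have : ∀ p : {p : ℝ × ℝ // p.1 ≠ p.2},
        |c - c| / dist p.1.1 p.1.2 ^ (fun _ : ℝ => (1:ℝ)) p.1.1 = 0 := by
      intro p; rw [sub_self, abs_zero, zero_div]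
    rw [funext this]
    exact ciSup_const
  rw [h1, h2, add_zero]

/-- The maximal operator is discontinuous on `C^{0,1}(ℝ)`. -/
theorem maximal_discontinuous_on_lipschitz :
    ∃ (f : ℝ → ℝ) (fn : ℕ → ℝ → ℝ),
      MemVarHolder (fun _ => (1 : ℝ)) f ∧ (∀ n, MemVarHolder (fun _ => (1 : ℝ)) (fn n)) ∧
      Tendsto (fun n => holderNorm (fun _ => (1 : ℝ)) (fun x => fn n x - f x)) atTop (nhds 0) ∧
      ¬ Tendsto (fun n => holderNorm (fun _ => (1 : ℝ))
          (fun x => maxFunR (fn n) x - maxFunR f x)) atTop (nhds 0) := by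
  have eh : ∀ n : ℕ, (0:ℝ) < 1 / (n + 2) ∧ (1:ℝ) / (n + 2) ≤ 1 / 2 := by
    intro n
    constructor
    · positivity
    · apply div_le_div_of_nonneg_left (by norm_num) (by norm_num)
      · have : (0:ℝ) ≤ n := Nat.cast_nonneg n
        linarith
  refine ⟨cl, fun n x => cl x + 1 / (n + 2), ?_, ?_, ?_, ?_⟩
  · exact memVarHolder_of_lip cl_cont 1 abs_cl_le_one (fun a b => by rw [one_mul]; exact cl_lip a b)
  · intro n
    apply memVarHolder_of_lip (fnh_cont) 2
    · intro t
      have := abs_fnh_le (eh n).1.le t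
      linarith [(eh n).2]
    · intro a b
      rw [one_mul]
      have : cl a + 1 / (n + 2) - (cl b + 1 / (n + 2)) = cl a - cl b := by ring
      rw [this]; exact cl_lip a b
  · have hfun : ∀ n : ℕ, (fun x => (cl x + 1 / (n + 2)) - cl x) = (fun _ : ℝ => 1 / ((n:ℝ) + 2)) := by
      intro n; funext x; ring
    have hval : (fun n : ℕ => holderNorm (fun _ : ℝ => (1:ℝ)) (fun x => (cl x + 1 / (n + 2)) - cl x))
        = fun n : ℕ => 1 / ((n:ℝ) + 2) := by
      funext n
      rw [hfun n, holderNorm_const, abs_of_pos (eh n).1]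
    rw [hval]
    apply squeeze_zero (fun n => by positivity) (fun n => ?_) tendsto_one_div_add_atTop_nhds_zero_nat
    apply div_le_div_of_nonneg_left (by norm_num) (by positivity)
    linarith
  · intro hT
    have hev := hT.eventually (eventually_lt_nhds one_pos)
    obtain ⟨n, hn⟩ := hev.exists
    -- derive a contradiction : the norm is at least 1
    set e : ℝ := 1 / (n + 2) with hedef
    have he0 : 0 < e := (eh n).1
    have he : e ≤ 1 / 2 := (eh n).2
    set g : ℝ → ℝ := fun x => maxFunR (fun x => cl x + 1 / (↑n + 2)) x - maxFunR cl x with hg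
    have hgeq : ∀ x, g x = maxFunR (fun t => cl t + e) x - 1 := by
      intro x; rw [hg]; simp only [maxFunR_cl, hedef]
    have hM1 : 1 + e ≤ maxFunR (fun t => cl t + e) 1 := maxFunR_fnh_at_one he0.le he
    have hM0 : maxFunR (fun t => cl t + e) (1 - e) ≤ 1 := maxFunR_fnh_at_x0 he0 he
    have hbdd : BddAbove (Set.range fun p : {p : ℝ × ℝ // p.1 ≠ p.2} =>
        |g p.1.1 - g p.1.2| / dist p.1.1 p.1.2 ^ (fun _ : ℝ => (1:ℝ)) p.1.1) := by
      apply lip_quot_bdd 1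
      intro a b
      rw [one_mul, hgeq a, hgeq b]
      have : maxFunR (fun t => cl t + e) a - 1 - (maxFunR (fun t => cl t + e) b - 1)
          = maxFunR (fun t => cl t + e) a - maxFunR (fun t => cl t + e) b := by ring
      rw [this]
      exact maxFunR_fnh_lip he0.le a b
    have hp0 : (1:ℝ) ≠ 1 - e := by intro hcon; linarith
    have hterm : (1:ℝ) ≤ |g 1 - g (1 - e)| / dist (1:ℝ) (1 - e) ^ (1:ℝ) := by
      have hd : dist (1:ℝ) (1 - e) = e := by
        rw [Real.dist_eq, abs_of_pos (by linarith : (0:ℝ) < 1 - (1 - e))]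
        ring_nf
      have hdiff : e ≤ g 1 - g (1 - e) := by
        rw [hgeq 1, hgeq (1 - e)]; linarith
      rw [Real.rpow_one, hd]
      rw [le_div_iff₀ he0, one_mul]
      calc e ≤ g 1 - g (1 - e) := hdiff
        _ ≤ |g 1 - g (1 - e)| := le_abs_self _
    have hsemi : (1:ℝ) ≤ holderSemi (fun _ : ℝ => (1:ℝ)) g := by
      unfold holderSemi
      calc (1:ℝ) ≤ |g 1 - g (1 - e)| / dist (1:ℝ) (1 - e) ^ (1:ℝ) := hterm
        _ ≤ _ := le_ciSup hbdd ⟨(1, 1 - e), hp0⟩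
    have hsup : (0:ℝ) ≤ ⨆ x : ℝ, |g x| := Real.iSup_nonneg (fun x => abs_nonneg _)
    have : (1:ℝ) ≤ holderNorm (fun _ : ℝ => (1:ℝ)) g := by
      unfold holderNorm; linarith
    rw [hg] at this
    linarith
end

section
/- Let $T>0$ and let $f\colon\mathbb{R}\to\mathbb{R}$ be continuous and $T$-periodic. Then for every $x\in\mathbb{R}$ there exists $r\in[0,T]$ such that $Mf(x)=\frac{1}{2r}\int_{x-r}^{x+r}|f(t)|\,dt$ (with the average interpreted as $|f(x)|$ when $r=0$). -/
open MeasureTheory Metric Set Filter Topology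

/-- Average of `|f|` over `[x-r, x+r]`, interpreted as `|f x|` when `r = 0`. -/
noncomputable def avgAbs (f : ℝ → ℝ) (x r : ℝ) : ℝ :=
  if r = 0 then |f x| else (1 / (2 * r)) * ∫ t in x - r..x + r, |f t|

/-- auxiliary: average of |f| on [x-r, x+r] -/
noncomputable def avgA (f : ℝ → ℝ) (x r : ℝ) : ℝ :=
  (1 / (2 * r)) * ∫ t in x - r..x + r, |f t|

lemma bound_abs (T : ℝ) (hT : 0 < T) (f : ℝ → ℝ) (hf : Continuous f)
    (hper : ∀ t, f (t + T) = f t) : ∃ M : ℝ, ∀ t, |f t| ≤ M := by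
  have hperiodic : Function.Periodic (fun t => |f t|) T := fun t => by simp [hper t]
  obtain ⟨M, hM⟩ := (isCompact_Icc (a := (0:ℝ)) (b := T)).exists_bound_of_continuousOn
    hf.abs.continuousOn
  refine ⟨M, fun t => ?_⟩
  obtain ⟨y, hy, hyt⟩ := hperiodic.exists_mem_Ico₀ hT t
  have h1 := hM y ⟨hy.1, hy.2.le⟩
  rw [Real.norm_eq_abs, abs_abs] at h1
  rw [show |f t| = |f y| from hyt]
  exact h1

lemma avgA_le (f : ℝ → ℝ) (hf : Continuous f) (M : ℝ) (hM : ∀ t, |f t| ≤ M)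
    (x r : ℝ) (hr : 0 < r) : avgA f x r ≤ M := by
  have hint : IntervalIntegrable (fun t => |f t|) volume (x - r) (x + r) :=
    hf.abs.intervalIntegrable _ _
  have hle : (∫ t in x - r..x + r, |f t|) ≤ (2 * r) * M := by
    calc (∫ t in x - r..x + r, |f t|) ≤ ∫ _ in x - r..x + r, M :=
          intervalIntegral.integral_mono_on (by linarith) hint intervalIntegrable_const
            (fun t _ => hM t)
      _ = (2 * r) * M := by
          rw [intervalIntegral.integral_const, smul_eq_mul]; ring_nf
  have : avgA f x r ≤ (1 / (2 * r)) * ((2 * r) * M) :=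
    mul_le_mul_of_nonneg_left hle (by positivity)
  calc avgA f x r ≤ (1 / (2 * r)) * ((2 * r) * M) := this
    _ = M := by field_simp

lemma avgA_rep (f : ℝ → ℝ) (hf : Continuous f) (x : ℝ) :
    avgA f x = fun r => (1 / (2 * r)) *
      ((∫ t in (0:ℝ)..x + r, |f t|) - ∫ t in (0:ℝ)..x - r, |f t|) := by
  funext r
  unfold avgA
  rw [intervalIntegral.integral_interval_sub_left (hf.abs.intervalIntegrable _ _)
    (hf.abs.intervalIntegrable _ _)]

lemma avgA_continuousAt (f : ℝ → ℝ) (hf : Continuous f) (x r : ℝ) (hr : r ≠ 0) :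
    ContinuousAt (avgA f x) r := by
  rw [avgA_rep f hf x]
  have hFcont : Continuous (fun y : ℝ => ∫ t in (0:ℝ)..y, |f t|) :=
    intervalIntegral.continuous_primitive (fun a b => hf.abs.intervalIntegrable a b) 0
  apply ContinuousAt.mul
  · exact (continuousAt_const.div ((continuous_const.mul continuous_id).continuousAt)
      (by simpa using mul_ne_zero two_ne_zero hr))
  · exact ((hFcont.comp (continuous_const.add continuous_id)).sub
      (hFcont.comp (continuous_const.sub continuous_id))).continuousAt

lemma avgA_tendsto (f : ℝ → ℝ) (hf : Continuous f) (x : ℝ) :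
    Tendsto (avgA f x) (𝓝[>] (0:ℝ)) (𝓝 (|f x|)) := by
  set F : ℝ → ℝ := fun y => ∫ t in (0:ℝ)..y, |f t| with hF
  have hFderiv : HasDerivAt F (|f x|) x :=
    intervalIntegral.integral_hasDerivAt_right (hf.abs.intervalIntegrable _ _)
      (hf.abs.stronglyMeasurableAtFilter _ _) hf.abs.continuousAt
  have hG1 : HasDerivAt (fun r : ℝ => F (x + r)) (|f x|) 0 := by
    have hFd' : HasDerivAt F (|f x|) (x + 0) := by simpa using hFderiv
    have hin : HasDerivAt (fun r : ℝ => x + r) 1 (0:ℝ) := (hasDerivAt_id (0:ℝ)).const_add x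
    simpa [Function.comp_def] using hFd'.comp 0 hin
  have hG2 : HasDerivAt (fun r : ℝ => F (x - r)) (-|f x|) 0 := by
    have hFd' : HasDerivAt F (|f x|) (x - 0) := by simpa using hFderiv
    have hin : HasDerivAt (fun r : ℝ => x - r) (-1) (0:ℝ) := (hasDerivAt_id (0:ℝ)).const_sub x
    have := hFd'.comp 0 hin
    simpa [Function.comp_def] using this
  have hG : HasDerivAt (fun r : ℝ => F (x + r) - F (x - r)) (2 * |f x|) 0 := by
    have := hG1.sub hG2
    have h2 : |f x| - -|f x| = 2 * |f x| := by ring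
    rwa [h2] at this
  have h := hG.tendsto_slope_zero_right
  have h2 := h.const_mul (1/2 : ℝ)
  have hlim : (1/2 : ℝ) * (2 * |f x|) = |f x| := by ring
  rw [hlim] at h2
  refine h2.congr' ?_
  filter_upwards [self_mem_nhdsWithin] with t (ht : 0 < t)
  rw [avgA_rep f hf x]
  simp only [smul_eq_mul, zero_add, sub_self, add_zero, sub_zero]
  have : F x - F x = 0 := sub_self _
  field_simp
  rfl

lemma integral_split (T : ℝ) (hT : 0 < T) (f : ℝ → ℝ) (hf : Continuous f)
    (hper : ∀ t, f (t + T) = f t) (x r : ℝ) (hr : T ≤ r) :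
    (∫ t in x - r..x + r, |f t|) =
      (∫ t in x - (r - T)..x + (r - T), |f t|) + 2 * ∫ t in (0:ℝ)..T, |f t| := by
  have hperiodic : Function.Periodic (fun t => |f t|) T := fun t => by simp [hper t]
  have hint : ∀ a b : ℝ, IntervalIntegrable (fun t => |f t|) volume a b :=
    fun a b => hf.abs.intervalIntegrable a b
  have h1 : (∫ t in x - r..x - (r - T), |f t|) = ∫ t in (0:ℝ)..T, |f t| := by
    have := hperiodic.intervalIntegral_add_eq (x - r) 0
    simpa [show x - r + T = x - (r - T) by ring] using this
  have h2 : (∫ t in x + (r - T)..x + r, |f t|) = ∫ t in (0:ℝ)..T, |f t| := by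
    have := hperiodic.intervalIntegral_add_eq (x + (r - T)) 0
    simpa [show x + (r - T) + T = x + r by ring] using this
  have hadd1 := intervalIntegral.integral_add_adjacent_intervals
    (hint (x - r) (x - (r - T))) (hint (x - (r - T)) (x + (r - T)))
  have hadd2 := intervalIntegral.integral_add_adjacent_intervals
    (hint (x - r) (x + (r - T))) (hint (x + (r - T)) (x + r))
  linarith

/-- For a continuous `T`-periodic function the maximal function is
attained at some radius `r ∈ [0, T]`. -/
theorem maximal_attained_on_period
    (T : ℝ) (hT : 0 < T) (f : ℝ → ℝ) (hf : Continuous f)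
    (hper : ∀ t, f (t + T) = f t) (x : ℝ) :
    ∃ r ∈ Set.Icc (0 : ℝ) T, maxFunR f x = avgAbs f x r := by
  classical
  obtain ⟨M, hM⟩ := bound_abs T hT f hf hper
  have hg0 : avgAbs f x 0 = |f x| := by simp [avgAbs]
  have hgeq : ∀ r : ℝ, r ≠ 0 → avgAbs f x r = avgA f x r := by
    intro r hr; simp [avgAbs, avgA, hr]
  -- continuity of avgAbs f x on Icc 0 T
  have hgcont : ContinuousOn (avgAbs f x) (Icc 0 T) := by
    intro r hr
    rcases eq_or_ne r 0 with rfl | hr0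
    · rw [ContinuousWithinAt, hg0]
      have hsub : 𝓝[Icc (0:ℝ) T] 0 ≤ 𝓝[{0} ∪ Ioi 0] 0 := by
        apply nhdsWithin_mono
        intro y hy
        rcases eq_or_lt_of_le hy.1 with h | h
        · exact Or.inl (by simp [h.symm])
        · exact Or.inr h
      refine Tendsto.mono_left ?_ hsub
      rw [nhdsWithin_union]
      refine Tendsto.sup ?_ ?_
      · rw [nhdsWithin_singleton]
        simpa [hg0] using tendsto_pure_nhds (avgAbs f x) 0
      · refine Tendsto.congr' ?_ (avgA_tendsto f hf x)
        filter_upwards [self_mem_nhdsWithin] with s (hs : 0 < s)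
        exact (hgeq s (ne_of_gt hs)).symm
    · refine ContinuousAt.continuousWithinAt ?_
      refine (avgA_continuousAt f hf x r hr0).congr ?_
      filter_upwards [isOpen_ne.mem_nhds hr0] with s (hs : s ≠ 0)
      exact (hgeq s hs).symm
  obtain ⟨r₀, hr₀, hmax⟩ := isCompact_Icc.exists_isMaxOn ⟨0, le_refl 0, hT.le⟩ hgcont
  -- key bound: all averages are at most avgAbs f x r₀
  have hAg : ∀ r : ℝ, 0 < r → r ≤ T → avgA f x r ≤ avgAbs f x r₀ := by
    intro r h0 hrT
    rw [← hgeq r (ne_of_gt h0)]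
    exact hmax ⟨h0.le, hrT⟩
  have hATle : avgA f x T ≤ avgAbs f x r₀ := hAg T hT le_rfl
  -- ∫ 0..T |f| = T * avgA f x T
  have hPT : (∫ t in (0:ℝ)..T, |f t|) = T * avgA f x T := by
    have hT2 := integral_split T hT f hf hper x T le_rfl
    simp only [sub_self, sub_zero, add_zero, intervalIntegral.integral_same, zero_add] at hT2
    unfold avgA
    rw [hT2]
    field_simp
  have key : ∀ n : ℕ, ∀ r : ℝ, 0 < r → r ≤ (n + 1 : ℕ) * T → avgA f x r ≤ avgAbs f x r₀ := by
    intro n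
    induction n with
    | zero => intro r h0 h1; exact hAg r h0 (by simpa using h1)
    | succ n ih =>
      intro r h0 h1
      rcases le_or_gt r T with h | h
      · exact hAg r h0 h
      · have hs0 : 0 < r - T := by linarith
        have hsle : r - T ≤ (n + 1 : ℕ) * T := by push_cast at h1 ⊢; linarith
        have ihs := ih (r - T) hs0 hsle
        have hspl := integral_split T hT f hf hper x r h.le
        have e1 : (∫ t in x - (r - T)..x + (r - T), |f t|) ≤ 2 * (r - T) * avgAbs f x r₀ := by
          have h' : (1 / (2 * (r - T))) * (∫ t in x - (r - T)..x + (r - T), |f t|)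
              ≤ avgAbs f x r₀ := ihs
          rwa [one_div, inv_mul_le_iff₀ (by positivity)] at h'
        have e2 : (∫ t in x - T..x + T, |f t|) ≤ 2 * T * avgAbs f x r₀ := by
          have h' : (1 / (2 * T)) * (∫ t in x - T..x + T, |f t|) ≤ avgAbs f x r₀ := hATle
          rwa [one_div, inv_mul_le_iff₀ (by positivity)] at h'
        have eP : 2 * (∫ t in (0:ℝ)..T, |f t|) = ∫ t in x - T..x + T, |f t| := by
          rw [hPT]; unfold avgA; field_simp
        show (1 / (2 * r)) * (∫ t in x - r..x + r, |f t|) ≤ avgAbs f x r₀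
        rw [one_div, inv_mul_le_iff₀ (by positivity)]
        linarith [hspl, e1, e2, eP]
  have keyAll : ∀ r : ℝ, 0 < r → avgA f x r ≤ avgAbs f x r₀ := by
    intro r hr
    obtain ⟨n, hn⟩ := exists_nat_ge (r / T)
    refine key n r hr ?_
    rw [div_le_iff₀ hT] at hn
    push_cast
    nlinarith
  haveI : Nonempty {r : ℝ // 0 < r} := ⟨⟨1, one_pos⟩⟩
  have hbdd : BddAbove (range fun r : {r : ℝ // 0 < r} =>
      (1 / (2 * r.1)) * ∫ t in x - r.1..x + r.1, |f t|) := by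
    refine ⟨M, ?_⟩
    rintro y ⟨r, rfl⟩
    exact avgA_le f hf M hM x r.1 r.2
  have hsup_le : maxFunR f x ≤ avgAbs f x r₀ :=
    ciSup_le fun r => keyAll r.1 r.2
  have hle_sup : avgAbs f x r₀ ≤ maxFunR f x := by
    rcases eq_or_ne r₀ 0 with rfl | h0
    · rw [hg0]
      refine le_of_tendsto (avgA_tendsto f hf x) ?_
      filter_upwards [self_mem_nhdsWithin] with s (hs : 0 < s)
      exact le_ciSup hbdd ⟨s, hs⟩
    · rw [hgeq r₀ h0]
      exact le_ciSup hbdd (⟨r₀, lt_of_le_of_ne hr₀.1 (Ne.symm h0)⟩ : {r : ℝ // 0 < r})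
  exact ⟨r₀, hr₀, le_antisymm hsup_le hle_sup⟩
end

section
/- Let $(X,d,\mu)$ be a metric measure space in which every nonempty open set has positive measure and every bounded set has finite measure, let $\alpha\colon X\to[0,1]$, and let $f\in C^{0,\alpha(\cdot)}(X)$ with $\sup_{u\neq v}\frac{|f(u)-f(v)|}{d(u,v)^{\alpha(u)}}\leq 1$. Let $x,y\in X$ be distinct with $a=d(x,y)\leq 1$ and let $0<r\leq a$. Then $\frac{1}{\mu(B(x,r))}\int_{B(x,r)}|f|\,d\mu-\frac{1}{\mu(B(y,r))}\int_{B(y,r)}|f|\,d\mu\leq 4\,a^{\alpha(x)}$. -/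
open MeasureTheory Metric Set Filter

private lemma avg_le_aux {X : Type*} [MeasurableSpace X] (μ : Measure X) (s : Set X)
    (hs : MeasurableSet s) (h0 : μ s ≠ 0) (hT : μ s ≠ ⊤) (g : X → ℝ) (hg : IntegrableOn g s μ)
    (C : ℝ) (hC : ∀ z ∈ s, g z ≤ C) : ⨍ z in s, g z ∂μ ≤ C := by
  rw [setAverage_eq]
  rw [smul_eq_mul, inv_mul_le_iff₀ (by exact ENNReal.toReal_pos h0 hT : 0 < μ.real s)]
  calc ∫ z in s, g z ∂μ ≤ ∫ z in s, C ∂μ :=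
        setIntegral_mono_on hg (integrableOn_const hT) hs hC
    _ = C * (μ s).toReal := by rw [setIntegral_const, smul_eq_mul, mul_comm]; rfl
    _ = (μ s).toReal * C := mul_comm _ _

private lemma le_avg_aux {X : Type*} [MeasurableSpace X] (μ : Measure X) (s : Set X)
    (hs : MeasurableSet s) (h0 : μ s ≠ 0) (hT : μ s ≠ ⊤) (g : X → ℝ) (hg : IntegrableOn g s μ)
    (C : ℝ) (hC : ∀ z ∈ s, C ≤ g z) : C ≤ ⨍ z in s, g z ∂μ := by
  have := avg_le_aux μ s hs h0 hT (fun z => -g z) hg.neg (-C) (fun z hz => neg_le_neg (hC z hz))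
  rw [average_neg] at this
  linarith

/-- Subcase 1.1. Difference of ball averages for a small radius `r ≤ a`,
estimated by `4 a^{α(x)}`. -/
theorem averages_diff_small_radius_x
    {X : Type*} [MetricSpace X] [MeasurableSpace X] [BorelSpace X] (μ : Measure X)
    (hopen : ∀ U : Set X, IsOpen U → U.Nonempty → 0 < μ U)
    (hbdd : ∀ s : Set X, Bornology.IsBounded s → μ s < ⊤)
    (α : X → ℝ) (hα : ∀ x, α x ∈ Set.Icc (0 : ℝ) 1)
    (f : X → ℝ) (hf : MemVarHolder α f)
    (hsemi : ∀ u v : X, u ≠ v → |f u - f v| ≤ dist u v ^ α u)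
    (x y : X) (hxy : x ≠ y) (hd : dist x y ≤ 1)
    (r : ℝ) (hr0 : 0 < r) (hra : r ≤ dist x y) :
    (⨍ z in ball x r, |f z| ∂μ) - (⨍ z in ball y r, |f z| ∂μ) ≤ 4 * dist x y ^ α x := by
  obtain ⟨hcont, hbd, -⟩ := hf
  set a := dist x y with ha
  have ha0 : 0 < a := dist_pos.2 hxy
  have hαx := hα x
  have hA0 : 0 ≤ a ^ α x := Real.rpow_nonneg ha0.le _
  have hint : ∀ c : X, IntegrableOn (fun z => |f z|) (ball c r) μ := by
    intro c
    obtain ⟨M, hM⟩ := hbd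
    haveI : Fact (μ (ball c r) < ⊤) := ⟨hbdd _ isBounded_ball⟩
    exact (integrable_const M).mono' hcont.abs.aestronglyMeasurable
      (Filter.Eventually.of_forall fun z => by
        simpa [abs_abs] using hM ⟨z, rfl⟩)
  have hne0 : ∀ c : X, μ (ball c r) ≠ 0 :=
    fun c => (hopen _ isOpen_ball ⟨c, mem_ball_self hr0⟩).ne'
  have hneT : ∀ c : X, μ (ball c r) ≠ ⊤ := fun c => (hbdd _ isBounded_ball).ne
  have hub : ∀ z ∈ ball x r, |f z| ≤ |f x| + a ^ α x := by
    intro z hz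
    rcases eq_or_ne x z with h | h
    · rw [← h]; linarith
    · have h1 := hsemi x z h
      have h2 : dist x z ^ α x ≤ a ^ α x :=
        Real.rpow_le_rpow dist_nonneg (le_trans (mem_ball'.1 hz).le hra) hαx.1
      have h3 : |f z| - |f x| ≤ |f x - f z| := by
        rw [abs_sub_comm]; exact abs_sub_abs_le_abs_sub _ _
      linarith
  have hlb : ∀ w ∈ ball y r, |f x| - 2 * a ^ α x ≤ |f w| := by
    intro w hw
    have h2a : dist x w ^ α x ≤ 2 * a ^ α x := by
      have hdxw : dist x w ≤ 2 * a := by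
        have := dist_triangle x y w
        have h4 : dist y w ≤ a := (mem_ball'.1 hw).le.trans hra
        linarith
      have h5 : dist x w ^ α x ≤ (2 * a) ^ α x :=
        Real.rpow_le_rpow dist_nonneg hdxw hαx.1
      have h6 : (2 * a) ^ α x = 2 ^ α x * a ^ α x := Real.mul_rpow (by norm_num) ha0.le
      have h7 : (2 : ℝ) ^ α x ≤ 2 := by
        calc (2 : ℝ) ^ α x ≤ 2 ^ (1 : ℝ) :=
              Real.rpow_le_rpow_of_exponent_le one_le_two hαx.2
          _ = 2 := Real.rpow_one 2
      nlinarith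
    rcases eq_or_ne x w with h | h
    · rw [← h]; linarith
    · have h1 := hsemi x w h
      have h3 := abs_sub_abs_le_abs_sub (f x) (f w)
      linarith
  have hax : ⨍ z in ball x r, |f z| ∂μ ≤ |f x| + a ^ α x :=
    avg_le_aux μ _ measurableSet_ball (hne0 x) (hneT x) _ (hint x) _ hub
  have hay : |f x| - 2 * a ^ α x ≤ ⨍ z in ball y r, |f z| ∂μ :=
    le_avg_aux μ _ measurableSet_ball (hne0 y) (hneT y) _ (hint y) _ hlb
  linarith
end

section
/- Let $(X,d,\mu)$ be a metric measure space in which every nonempty open set has positive measure and every bounded set has finite measure, let $\alpha\colon X\to[0,1]$, and let $f\in C^{0,\alpha(\cdot)}(X)$ with $\sup_{u\neq v}\frac{|f(u)-f(v)|}{d(u,v)^{\alpha(u)}}\leq 1$. Let $x,y\in X$ be distinct with $a=d(x,y)\leq 1$ and let $0<r\leq a$. Then $\frac{1}{\mu(B(x,r))}\int_{B(x,r)}|f|\,d\mu-\frac{1}{\mu(B(y,r))}\int_{B(y,r)}|f|\,d\mu\leq 6\,a^{\alpha(y)}$. -/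
open MeasureTheory Metric Set Filter

lemma avg_le_of_forall_le {X : Type*} [MeasurableSpace X] (μ : Measure X) {s : Set X}
    (hms : MeasurableSet s) (hs0 : μ s ≠ 0) (hs : μ s ≠ ⊤) {g : X → ℝ} {C : ℝ}
    (hg : IntegrableOn g s μ) (h : ∀ z ∈ s, g z ≤ C) : ⨍ z in s, g z ∂μ ≤ C := by
  rw [setAverage_eq]
  have hpos : 0 < (μ s).toReal := ENNReal.toReal_pos hs0 hs
  have h1 : ∫ z in s, g z ∂μ ≤ ∫ _ in s, C ∂μ :=
    setIntegral_mono_on hg (integrableOn_const hs) hms h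
  rw [setIntegral_const] at h1
  rw [smul_eq_mul]
  calc (μ s).toReal⁻¹ * ∫ z in s, g z ∂μ ≤ (μ s).toReal⁻¹ * ((μ s).toReal • C) := by
        apply mul_le_mul_of_nonneg_left h1 (by positivity)
    _ = C := by rw [smul_eq_mul]; field_simp

lemma le_avg_of_forall_le {X : Type*} [MeasurableSpace X] (μ : Measure X) {s : Set X}
    (hms : MeasurableSet s) (hs0 : μ s ≠ 0) (hs : μ s ≠ ⊤) {g : X → ℝ} {C : ℝ}
    (hg : IntegrableOn g s μ) (h : ∀ z ∈ s, C ≤ g z) : C ≤ ⨍ z in s, g z ∂μ := by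
  have := avg_le_of_forall_le μ hms hs0 hs hg.neg (g := fun z => - g z) (C := -C)
    (fun z hz => neg_le_neg (h z hz))
  rw [average_neg] at this
  linarith

/-- Subcase 2.1. Difference of ball averages for a small radius `r ≤ a`,
estimated by `6 a^{α(y)}`. -/
theorem averages_diff_small_radius_y
    {X : Type*} [MetricSpace X] [MeasurableSpace X] [BorelSpace X] (μ : Measure X)
    (hopen : ∀ U : Set X, IsOpen U → U.Nonempty → 0 < μ U)
    (hbdd : ∀ s : Set X, Bornology.IsBounded s → μ s < ⊤)
    (α : X → ℝ) (hα : ∀ x, α x ∈ Set.Icc (0 : ℝ) 1)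
    (f : X → ℝ) (hf : MemVarHolder α f)
    (hsemi : ∀ u v : X, u ≠ v → |f u - f v| ≤ dist u v ^ α u)
    (x y : X) (hxy : x ≠ y) (hd : dist x y ≤ 1)
    (r : ℝ) (hr0 : 0 < r) (hra : r ≤ dist x y) :
    (⨍ z in ball x r, |f z| ∂μ) - (⨍ z in ball y r, |f z| ∂μ) ≤ 6 * dist x y ^ α y := by
  set a := dist x y with ha
  have ha0 : 0 < a := dist_pos.2 hxy
  set A := a ^ α y with hA
  have hA0 : 0 ≤ A := Real.rpow_nonneg ha0.le _
  have hαy0 : 0 ≤ α y := (hα y).1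
  have hαy1 : α y ≤ 1 := (hα y).2
  -- integrability of |f| on balls
  obtain ⟨M, hM⟩ := hf.2.1
  have hint : ∀ c : X, IntegrableOn (fun z => |f z|) (ball c r) μ := by
    intro c
    apply Integrable.mono' (g := fun _ => M)
      (integrableOn_const (hbdd _ isBounded_ball).ne)
      ((hf.1.abs).aestronglyMeasurable.restrict)
    filter_upwards with z
    simpa [abs_abs] using hM (Set.mem_range_self z)
  have hne : ∀ c : X, μ (ball c r) ≠ 0 :=
    fun c => (hopen _ isOpen_ball (nonempty_ball.2 hr0)).ne'
  have hfin : ∀ c : X, μ (ball c r) ≠ ⊤ :=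
    fun c => (hbdd _ isBounded_ball).ne
  -- upper bound on ball x r
  have hub : (⨍ z in ball x r, |f z| ∂μ) ≤ |f y| + 2 * A := by
    apply avg_le_of_forall_le μ measurableSet_ball (hne x) (hfin x) (hint x)
    intro z hz
    rcases eq_or_ne y z with rfl | hyz
    · nlinarith
    · have h1 : |f z| ≤ |f y| + dist y z ^ α y := by
        have := hsemi y z hyz
        have := abs_sub_abs_le_abs_sub (f z) (f y)
        rw [abs_sub_comm] at this
        linarith
      have h2 : dist y z ^ α y ≤ 2 * A := by
        have hdz : dist y z ≤ 2 * a := by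
          have := dist_triangle y x z
          have hz' := mem_ball'.1 hz
          rw [dist_comm y x] at this
          nlinarith [hz'.le]
        calc dist y z ^ α y ≤ (2 * a) ^ α y :=
              Real.rpow_le_rpow dist_nonneg hdz hαy0
          _ = 2 ^ α y * A := Real.mul_rpow (by norm_num) ha0.le
          _ ≤ 2 * A := by
              apply mul_le_mul_of_nonneg_right _ hA0
              calc (2:ℝ) ^ α y ≤ 2 ^ (1:ℝ) :=
                    Real.rpow_le_rpow_of_exponent_le (by norm_num) hαy1
                _ = 2 := Real.rpow_one 2
      linarith
  -- lower bound on ball y r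
  have hlb : |f y| - A ≤ ⨍ z in ball y r, |f z| ∂μ := by
    apply le_avg_of_forall_le μ measurableSet_ball (hne y) (hfin y) (hint y)
    intro w hw
    rcases eq_or_ne y w with rfl | hyw
    · linarith
    · have h1 := hsemi y w hyw
      have h2 : dist y w ^ α y ≤ A := by
        apply Real.rpow_le_rpow dist_nonneg _ hαy0
        have := mem_ball'.1 hw
        linarith
      have := abs_sub_abs_le_abs_sub (f y) (f w)
      linarith
  nlinarith
end

section
/- Let $(X,d,\mu)$ be a metric measure space in which every nonempty open set has positive measure and every bounded set has finite measure, satisfying the $\delta$-annular decay property for some $\delta\in(0,1]$ with constant $K\geq 1$, and let $\alpha\colon X\to[0,\delta]$. Let $x,y\in X$ with $a=d(x,y)>0$ and let $r>a$. If $g\in L^{1}(B(x,r+2a))$ satisfies $|g|\leq\min\{1,\,2(3r)^{\alpha(x)}\}$ almost everywhere on $B(x,r+2a)$, then $\frac{1}{\mu(B(x,r))}\int_{B(x,r)}|g|\,d\mu-\frac{1}{\mu(B(y,r+a))}\int_{B(y,r+a)}|g|\,d\mu\leq 6K\,2^{\delta}\,a^{\alpha(x)}$. -/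
open MeasureTheory Metric Set Filter

/-- Step 2.1. Bounded functions on `B(x, r+2a)` satisfy the average
difference estimate `6 K 2^δ a^{α(x)}`. -/
theorem bounded_implies_average_estimate_x
    {X : Type*} [MetricSpace X] [MeasurableSpace X] [BorelSpace X] (μ : Measure X)
    (hopen : ∀ U : Set X, IsOpen U → U.Nonempty → 0 < μ U)
    (hbdd : ∀ s : Set X, Bornology.IsBounded s → μ s < ⊤)
    (δ K : ℝ) (hδ : δ ∈ Set.Ioc (0 : ℝ) 1) (hK : 1 ≤ K)
    (hann : ∀ (x : X) (r ε : ℝ), 0 < r → 0 < ε → ε < 1 →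
      μ (ball x r \ ball x (r * (1 - ε))) ≤ ENNReal.ofReal (K * ε ^ δ) * μ (ball x r))
    (α : X → ℝ) (hα : ∀ x, α x ∈ Set.Icc (0 : ℝ) δ)
    (x y : X) (ha : 0 < dist x y) (r : ℝ) (hr : dist x y < r)
    (g : X → ℝ) (hg : IntegrableOn g (ball x (r + 2 * dist x y)) μ)
    (hgb : ∀ᵐ z ∂(μ.restrict (ball x (r + 2 * dist x y))),
      |g z| ≤ min 1 (2 * (3 * r) ^ α x)) :
    (⨍ z in ball x r, |g z| ∂μ) - (⨍ z in ball y (r + dist x y), |g z| ∂μ) ≤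
      6 * K * 2 ^ δ * dist x y ^ α x := by
  set a := dist x y with ha_def
  have hr0 : 0 < r := ha.trans hr
  have hδ0 : 0 < δ := hδ.1
  have hα0 : 0 ≤ α x := (hα x).1
  have hαδ : α x ≤ δ := (hα x).2
  have hα1 : α x ≤ 1 := hαδ.trans hδ.2
  set M : ℝ := min 1 (2 * (3 * r) ^ α x) with hM_def
  have hM0 : 0 ≤ M := le_min one_pos.le (by positivity)
  have h1 : ball x r ⊆ ball y (r + a) := ball_subset_ball' (by linarith)
  have h2 : ball y (r + a) ⊆ ball x (r + 2 * a) :=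
    ball_subset_ball' (by rw [dist_comm]; linarith)
  have h3 : ball y (r - a) ⊆ ball x r :=
    ball_subset_ball' (by rw [dist_comm]; linarith)
  -- measures
  set Mx : ℝ := (μ (ball x r)).toReal with hMx_def
  set My : ℝ := (μ (ball y (r + a))).toReal with hMy_def
  have hμxfin : μ (ball x r) < ⊤ := hbdd _ isBounded_ball
  have hμyfin : μ (ball y (r + a)) < ⊤ := hbdd _ isBounded_ball
  have hμx : 0 < μ (ball x r) := hopen _ isOpen_ball (nonempty_ball.2 hr0)
  have hμy : 0 < μ (ball y (r + a)) := hopen _ isOpen_ball (nonempty_ball.2 (by linarith))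
  have hMx0 : 0 < Mx := ENNReal.toReal_pos hμx.ne' hμxfin.ne
  have hMy0 : 0 < My := ENNReal.toReal_pos hμy.ne' hμyfin.ne
  have hMxy : Mx ≤ My := ENNReal.toReal_mono hμyfin.ne (measure_mono h1)
  -- integrals
  set A : ℝ := ∫ z in ball x r, |g z| ∂μ with hA_def
  set B : ℝ := ∫ z in ball y (r + a), |g z| ∂μ with hB_def
  have hgint : IntegrableOn (fun z => |g z|) (ball x (r + 2 * a)) μ := hg.abs
  have hintBy : IntegrableOn (fun z => |g z|) (ball y (r + a)) μ := hgint.mono_set h2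
  have hAB : A ≤ B := by
    apply setIntegral_mono_set hintBy
    · exact Filter.Eventually.of_forall fun z => abs_nonneg _
    · exact HasSubset.Subset.eventuallyLE h1
  have hAle : A ≤ M * Mx := by
    have hbd : ∀ᵐ z ∂(μ.restrict (ball x r)), |g z| ≤ M :=
      ae_restrict_of_ae_restrict_of_subset (h1.trans h2) hgb
    have := integral_mono_ae (hgint.mono_set (h1.trans h2))
      (integrableOn_const hμxfin.ne) hbd
    calc A ≤ ∫ _ in ball x r, M ∂μ := this
    _ = M * Mx := by rw [setIntegral_const]; rw [smul_eq_mul]; exact mul_comm _ _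
  -- annular decay estimate
  set ε : ℝ := 2 * a / (r + a) with hε_def
  have hε0 : 0 < ε := by positivity
  have hε1 : ε < 1 := by rw [div_lt_one (by linarith)]; linarith
  have hann' := hann y (r + a) ε (by linarith) hε0 hε1
  have hrad : (r + a) * (1 - ε) = r - a := by
    rw [hε_def]; field_simp; ring
  rw [hrad] at hann'
  set c : ℝ := K * ε ^ δ with hc_def
  have hc0 : 0 ≤ c := by positivity
  have hMyMx : My - Mx ≤ c * My := by
    have hsub : ball y (r + a) \ ball x r ⊆ ball y (r + a) \ ball y (r - a) :=
      diff_subset_diff_right h3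
    have hm : μ (ball y (r + a)) ≤ μ (ball x r) + ENNReal.ofReal c * μ (ball y (r + a)) := by
      calc μ (ball y (r + a)) ≤ μ (ball x r ∪ (ball y (r + a) \ ball x r)) :=
            measure_mono (fun z hz => by
              by_cases h : z ∈ ball x r
              · exact Or.inl h
              · exact Or.inr ⟨hz, h⟩)
        _ ≤ μ (ball x r) + μ (ball y (r + a) \ ball x r) := measure_union_le _ _
        _ ≤ μ (ball x r) + μ (ball y (r + a) \ ball y (r - a)) :=
            by gcongr
        _ ≤ μ (ball x r) + ENNReal.ofReal c * μ (ball y (r + a)) :=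
            by gcongr
    have hfin : μ (ball x r) + ENNReal.ofReal c * μ (ball y (r + a)) ≠ ⊤ :=
      ENNReal.add_ne_top.2 ⟨hμxfin.ne, ENNReal.mul_ne_top ENNReal.ofReal_ne_top hμyfin.ne⟩
    have := ENNReal.toReal_mono hfin hm
    rw [ENNReal.toReal_add hμxfin.ne (ENNReal.mul_ne_top ENNReal.ofReal_ne_top hμyfin.ne),
      ENNReal.toReal_mul, ENNReal.toReal_ofReal hc0] at this
    linarith
  -- put together
  rw [setAverage_eq, setAverage_eq, smul_eq_mul, smul_eq_mul, ← hA_def, ← hB_def]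
  change Mx⁻¹ * A - My⁻¹ * B ≤ _
  have key : Mx⁻¹ * A - My⁻¹ * B ≤ M * c := by
    have step1 : Mx⁻¹ * A - My⁻¹ * B ≤ Mx⁻¹ * A - My⁻¹ * A := by
      have : My⁻¹ * A ≤ My⁻¹ * B := by
        apply mul_le_mul_of_nonneg_left hAB (inv_nonneg.2 hMy0.le)
      linarith
    have step2 : Mx⁻¹ * A - My⁻¹ * A = A * (My - Mx) / (Mx * My) := by
      field_simp
    have step3 : A * (My - Mx) ≤ (M * Mx) * (c * My) := by
      apply mul_le_mul hAle hMyMx (by linarith) (by positivity)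
    have step4 : A * (My - Mx) / (Mx * My) ≤ (M * Mx) * (c * My) / (Mx * My) := by
      apply div_le_div_of_nonneg_right step3 (by positivity) |>.trans_eq rfl
    have step5 : (M * Mx) * (c * My) / (Mx * My) = M * c := by
      field_simp
    linarith [step1, step2 ▸ step1, step4, step5]
  refine key.trans ?_
  -- final algebra: M * c ≤ 6 K 2^δ a^{α x}
  set t : ℝ := a / (r + a) with ht_def
  have ht0 : 0 < t := by positivity
  have ht1 : t ≤ 1 := by rw [div_le_one (by linarith)]; linarith
  have hεt : ε = 2 * t := by rw [hε_def, ht_def]; ring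
  have hεpow : ε ^ δ = 2 ^ δ * t ^ δ := by
    rw [hεt, Real.mul_rpow (by norm_num) ht0.le]
  have htδα : t ^ δ ≤ t ^ α x := Real.rpow_le_rpow_of_exponent_ge ht0 ht1 hαδ
  have hMt : M * t ^ α x ≤ 6 * a ^ α x := by
    have h6 : M * t ^ α x ≤ 2 * (3 * r) ^ α x * t ^ α x :=
      mul_le_mul_of_nonneg_right (min_le_right _ _) (Real.rpow_nonneg ht0.le _)
    have h7 : 2 * (3 * r) ^ α x * t ^ α x = 2 * ((3 * r) * t) ^ α x := by
      rw [Real.mul_rpow (by positivity) ht0.le]; ring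
    have h8 : (3 * r) * t ≤ 3 * a := by
      rw [ht_def, ← mul_div_assoc, div_le_iff₀ (by linarith : (0:ℝ) < r + a)]
      nlinarith
    have h9 : ((3 * r) * t) ^ α x ≤ (3 * a) ^ α x :=
      Real.rpow_le_rpow (by positivity) h8 hα0
    have h10 : (3 * a : ℝ) ^ α x = 3 ^ α x * a ^ α x := Real.mul_rpow (by norm_num) ha.le
    have h11 : (3 : ℝ) ^ α x ≤ 3 := by
      calc (3:ℝ) ^ α x ≤ 3 ^ (1:ℝ) := Real.rpow_le_rpow_of_exponent_le (by norm_num) hα1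
      _ = 3 := Real.rpow_one 3
    calc M * t ^ α x ≤ 2 * ((3 * r) * t) ^ α x := h6.trans_eq h7
      _ ≤ 2 * (3 * a) ^ α x := by linarith
      _ = 2 * (3 ^ α x * a ^ α x) := by rw [h10]
      _ ≤ 2 * (3 * a ^ α x) := by
          have := mul_le_mul_of_nonneg_right h11 (Real.rpow_nonneg ha.le (α x))
          linarith
      _ = 6 * a ^ α x := by ring
  have hK0 : (0:ℝ) < K := lt_of_lt_of_le one_pos hK
  have h2δ : (0:ℝ) < 2 ^ δ := Real.rpow_pos_of_pos (by norm_num) _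
  have hfin1 : M * t ^ δ ≤ M * t ^ α x := mul_le_mul_of_nonneg_left htδα hM0
  calc M * c = K * 2 ^ δ * (M * t ^ δ) := by rw [hc_def, hεpow]; ring
    _ ≤ K * 2 ^ δ * (M * t ^ α x) := mul_le_mul_of_nonneg_left hfin1 (by positivity)
    _ ≤ K * 2 ^ δ * (6 * a ^ α x) := mul_le_mul_of_nonneg_left hMt (by positivity)
    _ = 6 * K * 2 ^ δ * a ^ α x := by ring
end

section
/- Let $(X,d,\mu)$ be a metric measure space in which every nonempty open set has positive measure and every bounded set has finite measure, satisfying the $\delta$-annular decay property for some $\delta\in(0,1]$ with constant $K\geq 1$, and let $\alpha\colon X\to[0,\delta]$. Let $x,y\in X$ with $a=d(x,y)>0$ and let $r>a$. If $g\in L^{1}(B(x,r+2a))$ satisfies $|g|\leq\min\{1,\,4(3r)^{\alpha(y)}\}$ almost everywhere on $B(x,r+2a)$, then $\frac{1}{\mu(B(x,r))}\int_{B(x,r)}|g|\,d\mu-\frac{1}{\mu(B(y,r+a))}\int_{B(y,r+a)}|g|\,d\mu\leq 12K\,2^{\delta}\,a^{\alpha(y)}$. -/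
open MeasureTheory Metric Set Filter

set_option maxHeartbeats 1000000 in
/-- Step 2.2. Bounded functions on `B(x, r+2a)` satisfy the average
difference estimate `12 K 2^δ a^{α(y)}`. -/
theorem bounded_implies_average_estimate_y
    {X : Type*} [MetricSpace X] [MeasurableSpace X] [BorelSpace X] (μ : Measure X)
    (hopen : ∀ U : Set X, IsOpen U → U.Nonempty → 0 < μ U)
    (hbdd : ∀ s : Set X, Bornology.IsBounded s → μ s < ⊤)
    (δ K : ℝ) (hδ : δ ∈ Set.Ioc (0 : ℝ) 1) (hK : 1 ≤ K)
    (hann : ∀ (x : X) (r ε : ℝ), 0 < r → 0 < ε → ε < 1 →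
      μ (ball x r \ ball x (r * (1 - ε))) ≤ ENNReal.ofReal (K * ε ^ δ) * μ (ball x r))
    (α : X → ℝ) (hα : ∀ x, α x ∈ Set.Icc (0 : ℝ) δ)
    (x y : X) (ha : 0 < dist x y) (r : ℝ) (hr : dist x y < r)
    (g : X → ℝ) (hg : IntegrableOn g (ball x (r + 2 * dist x y)) μ)
    (hgb : ∀ᵐ z ∂(μ.restrict (ball x (r + 2 * dist x y))),
      |g z| ≤ min 1 (4 * (3 * r) ^ α y)) :
    (⨍ z in ball x r, |g z| ∂μ) - (⨍ z in ball y (r + dist x y), |g z| ∂μ) ≤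
      12 * K * 2 ^ δ * dist x y ^ α y := by
  set a := dist x y with ha_def
  obtain ⟨hδ0, hδ1⟩ := hδ
  obtain ⟨hα0, hαδ⟩ := hα y
  set M := min 1 (4 * (3 * r) ^ α y) with hM_def
  have hr0 : (0:ℝ) < r := ha.trans hr
  have hM0 : 0 ≤ M :=
    le_min zero_le_one (mul_nonneg (by norm_num) (Real.rpow_nonneg (by linarith) _))
  -- subsets
  have hsub1 : ball x r ⊆ ball y (r + a) :=
    ball_subset_ball' (by rw [← ha_def])
  have hsub2 : ball y (r + a) ⊆ ball x (r + 2 * a) :=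
    ball_subset_ball' (by rw [dist_comm, ← ha_def]; linarith)
  have hsub0 : ball y (r - a) ⊆ ball x r :=
    ball_subset_ball' (by rw [dist_comm, ← ha_def]; linarith)
  -- finiteness and positivity
  have hfin2 : μ (ball x (r + 2 * a)) < ⊤ := hbdd _ isBounded_ball
  have hfinB2 : μ (ball y (r + a)) < ⊤ := lt_of_le_of_lt (measure_mono hsub2) hfin2
  have hfinB1 : μ (ball x r) < ⊤ := lt_of_le_of_lt (measure_mono hsub1) hfinB2
  have hpos1 : 0 < μ (ball x r) := hopen _ isOpen_ball ⟨x, mem_ball_self (by linarith)⟩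
  have hpos2 : 0 < μ (ball y (r + a)) := hopen _ isOpen_ball ⟨y, mem_ball_self (by linarith)⟩
  set m1 := (μ (ball x r)).toReal with hm1_def
  set m2 := (μ (ball y (r + a))).toReal with hm2_def
  have hm1 : 0 < m1 := ENNReal.toReal_pos hpos1.ne' hfinB1.ne
  have hm2 : 0 < m2 := ENNReal.toReal_pos hpos2.ne' hfinB2.ne
  have hm12 : m1 ≤ m2 := ENNReal.toReal_le_toReal hfinB1.ne hfinB2.ne |>.2 (measure_mono hsub1)
  -- integrability
  have hg2 : IntegrableOn (fun z => |g z|) (ball y (r + a)) μ := (hg.mono_set hsub2).abs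
  have hg1 : IntegrableOn (fun z => |g z|) (ball x r) μ := hg2.mono_set hsub1
  set I1 := ∫ z in ball x r, |g z| ∂μ with hI1_def
  set I2 := ∫ z in ball y (r + a), |g z| ∂μ with hI2_def
  have hI1nn : 0 ≤ I1 := integral_nonneg fun z => abs_nonneg _
  have hI12 : I1 ≤ I2 :=
    setIntegral_mono_set hg2 (Filter.Eventually.of_forall fun z => abs_nonneg _)
      (HasSubset.Subset.eventuallyLE hsub1)
  -- a.e. bound on ball x r
  have hae1 : ∀ᵐ z ∂μ.restrict (ball x r), |g z| ≤ M :=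
    ae_restrict_of_ae_restrict_of_subset (hsub1.trans hsub2) hgb
  have hI1le : I1 ≤ M * m1 := by
    have h := integral_mono_ae hg1 (integrableOn_const hfinB1.ne) hae1
    rwa [setIntegral_const, smul_eq_mul, mul_comm] at h
  -- annular decay
  have hra : (0:ℝ) < r + a := by linarith
  set ε := 2 * a / (r + a) with hε_def
  have hε0 : 0 < ε := by positivity
  have hε1 : ε < 1 := by rw [hε_def, div_lt_one hra]; linarith
  have hannb := hann y (r + a) ε (by linarith) hε0 hε1
  have heq : (r + a) * (1 - ε) = r - a := by
    rw [hε_def]; field_simp; ring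
  rw [heq] at hannb
  -- measure difference bound
  have hmeas : μ (ball y (r + a)) ≤ μ (ball x r) + ENNReal.ofReal (K * ε ^ δ) * μ (ball y (r + a)) := by
    calc μ (ball y (r + a))
        ≤ μ (ball y (r + a) ∩ ball y (r - a)) + μ (ball y (r + a) \ ball y (r - a)) :=
          measure_le_inter_add_diff _ _ _
      _ ≤ μ (ball x r) + ENNReal.ofReal (K * ε ^ δ) * μ (ball y (r + a)) :=
          add_le_add (measure_mono (inter_subset_right.trans hsub0)) hannb
  have hKε0 : 0 ≤ K * ε ^ δ := mul_nonneg (by linarith) (Real.rpow_nonneg hε0.le _)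
  have hkey : m2 ≤ m1 + K * ε ^ δ * m2 := by
    have := ENNReal.toReal_le_toReal hfinB2.ne (by
      refine (ENNReal.add_lt_top.2 ⟨hfinB1, ?_⟩).ne
      exact ENNReal.mul_lt_top ENNReal.ofReal_lt_top hfinB2) |>.2 hmeas
    rwa [ENNReal.toReal_add hfinB1.ne (ENNReal.mul_lt_top ENNReal.ofReal_lt_top hfinB2).ne,
      ENNReal.toReal_mul, ENNReal.toReal_ofReal hKε0] at this
  -- main inequality on averages
  rw [setAverage_eq, setAverage_eq, smul_eq_mul, smul_eq_mul, measureReal_def, measureReal_def, ← hm1_def, ← hm2_def,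
    ← hI1_def, ← hI2_def]
  have hstep : m1⁻¹ * I1 - m2⁻¹ * I2 ≤ M * (K * ε ^ δ) := by
    rw [inv_mul_eq_div, inv_mul_eq_div, div_sub_div _ _ hm1.ne' hm2.ne',
      div_le_iff₀ (by positivity)]
    nlinarith [mul_le_mul_of_nonneg_right hI12 hm1.le,
      mul_le_mul_of_nonneg_right hI1le (sub_nonneg.2 hm12),
      mul_le_mul_of_nonneg_left hkey (mul_nonneg hM0 hm1.le)]
  refine hstep.trans ?_
  -- arithmetic: M * (K * ε^δ) ≤ 12 * K * 2^δ * a^(α y)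
  set b := a / (r + a) with hb_def
  have hb0 : 0 < b := by positivity
  have hb1 : b ≤ 1 := by rw [hb_def, div_le_one hra]; linarith
  have hεb : ε = 2 * b := by rw [hε_def, hb_def]; ring
  have he2 : ε ^ δ = 2 ^ δ * b ^ δ := by
    rw [hεb, Real.mul_rpow (by norm_num) hb0.le]
  have hbδα : b ^ δ ≤ b ^ α y := Real.rpow_le_rpow_of_exponent_ge hb0 hb1 hαδ
  have hMle : M ≤ 4 * (3 * r) ^ α y := min_le_right _ _
  have h3rb : (3 * r) ^ α y * b ^ α y ≤ 3 * a ^ α y := by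
    rw [← Real.mul_rpow (by linarith) hb0.le]
    have h1 : 3 * r * b ≤ 3 * a := by
      rw [hb_def, ← mul_div_assoc, div_le_iff₀ hra]; nlinarith
    calc (3 * r * b) ^ α y ≤ (3 * a) ^ α y :=
          Real.rpow_le_rpow (by nlinarith) h1 hα0
      _ = 3 ^ α y * a ^ α y := Real.mul_rpow (by norm_num) ha.le
      _ ≤ 3 * a ^ α y := by
          have : (3:ℝ) ^ α y ≤ 3 ^ (1:ℝ) :=
            Real.rpow_le_rpow_of_exponent_le (by norm_num) (by linarith)
          rw [Real.rpow_one] at this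
          exact mul_le_mul_of_nonneg_right this (Real.rpow_nonneg ha.le _)
  have h2δ : (0:ℝ) < 2 ^ δ := Real.rpow_pos_of_pos (by norm_num) _
  have hchain : M * b ^ δ ≤ 12 * a ^ α y := by
    calc M * b ^ δ ≤ M * b ^ α y := mul_le_mul_of_nonneg_left hbδα hM0
      _ ≤ 4 * (3 * r) ^ α y * b ^ α y :=
          mul_le_mul_of_nonneg_right hMle (Real.rpow_nonneg hb0.le _)
      _ = 4 * ((3 * r) ^ α y * b ^ α y) := by ring
      _ ≤ 4 * (3 * a ^ α y) := by linarith
      _ = 12 * a ^ α y := by ring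
  calc M * (K * ε ^ δ) = K * 2 ^ δ * (M * b ^ δ) := by rw [he2]; ring
    _ ≤ K * 2 ^ δ * (12 * a ^ α y) :=
        mul_le_mul_of_nonneg_left hchain (mul_nonneg (by linarith) h2δ.le)
    _ = 12 * K * 2 ^ δ * a ^ α y := by ring
end

section
/- Let $(X,d)$ be a metric space, let $\alpha\colon X\to(0,1]$ and $\beta\colon X\to[0,1]$ with $\beta(x)\leq\alpha(x)$ for all $x$, set $\theta=\sup_{x\in X}\beta(x)/\alpha(x)$ and assume $\theta<1$. Let $N>0$ and let $g,h\in C^{0,\alpha(\cdot)}(X)$ satisfy $\|g\|_{C^{0,\alpha(\cdot)}(X)}\leq N$ and $\|h\|_{C^{0,\alpha(\cdot)}(X)}\leq N$. Then for all distinct $x,y\in X$ with $d(x,y)\leq 1$, $\frac{|g(x)-h(x)-g(y)+h(y)|}{d(x,y)^{\beta(x)}}\leq (2N)^{\theta}\,\big(2\sup_{z\in X}|g(z)-h(z)|\big)^{1-\theta}$, provided $2\sup_{z\in X}|g(z)-h(z)|\leq 1$. -/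
open MeasureTheory Metric Set Filter

/-- Interpolation-type estimate between Hölder seminorms with
variable exponents. -/
theorem holder_interpolation_estimate
    {X : Type*} [MetricSpace X]
    (α β : X → ℝ) (hα : ∀ x, α x ∈ Set.Ioc (0 : ℝ) 1) (hβ : ∀ x, β x ∈ Set.Icc (0 : ℝ) 1)
    (hβα : ∀ x, β x ≤ α x)
    (θ : ℝ) (hθdef : θ = ⨆ x, β x / α x) (hθ : θ < 1)
    (N : ℝ) (hN : 0 < N) (g h : X → ℝ)
    (hg : MemVarHolder α g) (hh : MemVarHolder α h)
    (hgN : holderNorm α g ≤ N) (hhN : holderNorm α h ≤ N)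
    (hsup : 2 * (⨆ z, |g z - h z|) ≤ 1)
    (x y : X) (hxy : x ≠ y) (hd : dist x y ≤ 1) :
    |g x - h x - g y + h y| / dist x y ^ β x ≤
      (2 * N) ^ θ * (2 * ⨆ z, |g z - h z|) ^ (1 - θ) := by
  obtain ⟨-, hgB, hgS⟩ := hg
  obtain ⟨-, hhB, hhS⟩ := hh
  have hdpos : (0:ℝ) < dist x y := dist_pos.2 hxy
  set d := dist x y with hd'
  have hdax : (0:ℝ) < d ^ α x := Real.rpow_pos_of_pos hdpos _
  have hdbx : (0:ℝ) < d ^ β x := Real.rpow_pos_of_pos hdpos _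
  -- θ bounds
  have hbdd : BddAbove (Set.range fun z => β z / α z) := by
    refine ⟨1, ?_⟩
    rintro _ ⟨z, rfl⟩
    exact div_le_one_of_le₀ (hβα z) (hα z).1.le
  have hθx : β x / α x ≤ θ := hθdef ▸ le_ciSup hbdd x
  have hθ0 : 0 ≤ θ := le_trans (div_nonneg (hβ x).1 (hα x).1.le) hθx
  have hβθα : β x ≤ θ * α x := by
    rw [div_le_iff₀ (hα x).1] at hθx; linarith
  -- norm parts bounds
  have hsemig0 : 0 ≤ holderSemi α g :=
    Real.iSup_nonneg fun p => div_nonneg (abs_nonneg _) (Real.rpow_nonneg dist_nonneg _)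
  have hsemih0 : 0 ≤ holderSemi α h :=
    Real.iSup_nonneg fun p => div_nonneg (abs_nonneg _) (Real.rpow_nonneg dist_nonneg _)
  have hsupg0 : 0 ≤ ⨆ z, |g z| := Real.iSup_nonneg fun z => abs_nonneg _
  have hsuph0 : 0 ≤ ⨆ z, |h z| := Real.iSup_nonneg fun z => abs_nonneg _
  have hsg : holderSemi α g ≤ N := by unfold holderNorm at hgN; linarith
  have hsh : holderSemi α h ≤ N := by unfold holderNorm at hhN; linarith
  -- M
  have hgz : ∀ z, |g z| ≤ ⨆ w, |g w| := fun z => le_ciSup hgB z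
  have hhz : ∀ z, |h z| ≤ ⨆ w, |h w| := fun z => le_ciSup hhB z
  have hMB : BddAbove (Set.range fun z => |g z - h z|) := by
    refine ⟨(⨆ w, |g w|) + ⨆ w, |h w|, ?_⟩
    rintro _ ⟨z, rfl⟩
    calc |g z - h z| ≤ |g z| + |h z| := abs_sub _ _
      _ ≤ _ := add_le_add (hgz z) (hhz z)
  set M := ⨆ z, |g z - h z| with hM'
  have hMz : ∀ z, |g z - h z| ≤ M := fun z => le_ciSup hMB z
  have hM0 : 0 ≤ M := le_trans (abs_nonneg _) (hMz x)
  -- Δ bounds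
  set Δ := |g x - h x - g y + h y| with hΔ'
  have hΔ0 : 0 ≤ Δ := abs_nonneg _
  have hΔM : Δ ≤ 2 * M := by
    have e : g x - h x - g y + h y = (g x - h x) - (g y - h y) := by ring
    calc Δ = |(g x - h x) - (g y - h y)| := by rw [hΔ', e]
      _ ≤ |g x - h x| + |g y - h y| := abs_sub _ _
      _ ≤ M + M := add_le_add (hMz x) (hMz y)
      _ = 2 * M := by ring
  have hgxy : |g x - g y| ≤ N * d ^ α x := by
    have h1 : |g x - g y| / d ^ α x ≤ holderSemi α g := le_ciSup hgS ⟨(x, y), hxy⟩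
    rw [div_le_iff₀ hdax] at h1
    exact h1.trans (mul_le_mul_of_nonneg_right hsg hdax.le)
  have hhxy : |h x - h y| ≤ N * d ^ α x := by
    have h1 : |h x - h y| / d ^ α x ≤ holderSemi α h := le_ciSup hhS ⟨(x, y), hxy⟩
    rw [div_le_iff₀ hdax] at h1
    exact h1.trans (mul_le_mul_of_nonneg_right hsh hdax.le)
  have hΔN : Δ ≤ 2 * N * d ^ α x := by
    have e : g x - h x - g y + h y = (g x - g y) - (h x - h y) := by ring
    calc Δ = |(g x - g y) - (h x - h y)| := by rw [hΔ', e]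
      _ ≤ |g x - g y| + |h x - h y| := abs_sub _ _
      _ ≤ N * d ^ α x + N * d ^ α x := add_le_add hgxy hhxy
      _ = 2 * N * d ^ α x := by ring
  have hN2 : (0:ℝ) < 2 * N := by linarith
  rcases eq_or_lt_of_le hΔ0 with hΔz | hΔpos
  · rw [← hΔz, zero_div]
    positivity
  · have key : Δ ≤ (2 * N) ^ θ * (2 * M) ^ (1 - θ) * d ^ (θ * α x) := by
      have h1 : Δ = Δ ^ θ * Δ ^ (1 - θ) := by
        rw [← Real.rpow_add hΔpos]; simp
      have h2 : Δ ^ θ ≤ (2 * N * d ^ α x) ^ θ := Real.rpow_le_rpow hΔ0 hΔN hθ0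
      have h3 : Δ ^ (1 - θ) ≤ (2 * M) ^ (1 - θ) := Real.rpow_le_rpow hΔ0 hΔM (by linarith)
      calc Δ = Δ ^ θ * Δ ^ (1 - θ) := h1
        _ ≤ (2 * N * d ^ α x) ^ θ * (2 * M) ^ (1 - θ) :=
          mul_le_mul h2 h3 (Real.rpow_nonneg hΔ0 _) (Real.rpow_nonneg (by linarith) _)
        _ = (2 * N) ^ θ * (2 * M) ^ (1 - θ) * d ^ (θ * α x) := by
          rw [Real.mul_rpow hN2.le hdax.le, mul_comm θ (α x), Real.rpow_mul hdpos.le]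
          ring
    have hdm : d ^ (θ * α x) ≤ d ^ β x :=
      Real.rpow_le_rpow_of_exponent_ge hdpos hd hβθα
    rw [div_le_iff₀ hdbx]
    calc Δ ≤ (2 * N) ^ θ * (2 * M) ^ (1 - θ) * d ^ (θ * α x) := key
      _ ≤ (2 * N) ^ θ * (2 * M) ^ (1 - θ) * d ^ β x := by
        apply mul_le_mul_of_nonneg_left hdm
        positivity
end
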